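/- arXiv:1710.09999 — 2 statements merged into one kernel-verified Lean document; each statement's English description precedes it below -/
import Mathlib

section
/- In a multiplicity-free semi-simple tensor system over a commutative ring R, fix an L-tuple λ̃ = (λ_1,…,λ_L), an element ν ∈ I, and 1 ≤ i ≤ L−2. If ν acts one-dimensionally on the left of λ_{i+2}, then for every ν' ∈ I one has, as operators on H_{λ̃}, p_i^{(ν)} p_{i+1}^{(ν')} p_i^{(ν)} = (F^{λ_iλ_{i+1}λ_{i+2}}_{φ^l_ν(λ_{i+2})})^ν_{ν'} (F̄^{λ_iλ_{i+1}λ_{i+2}}_{φ^l_ν(λ_{i+2})})^{ν'}_ν · p_i^{(ν)}. -/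
open scoped Classical

noncomputable section

/-- A multiplicity-free semi-simple tensor system over a commutative ring `R`,
with index set `I`, fusion constants `N`, and F-moves `F`, `Fbar`.
`F a b c d e f` denotes `(F^{abc}_d)^e_f` and `Fbar a b c d f e` denotes `(F̄^{abc}_d)^f_e`. -/
structure TensorSystem (R : Type*) [CommRing R] (I : Type*) where
  N : I → I → I → ℕ
  F : I → I → I → I → I → I → R
  Fbar : I → I → I → I → I → I → R
  N_le_one : ∀ a b c, N a b c ≤ 1
  N_assoc : ∀ a b c d, (∑ᶠ e, N a b e * N e c d) = ∑ᶠ e, N a e d * N b c e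
  N_finite : ∀ a b, (Function.support fun c => N a b c).Finite
  F_vanish : ∀ a b c d e f, N a b e * N b c f * N a f d * N e c d = 0 → F a b c d e f = 0
  Fbar_vanish : ∀ a b c d e f, N a b e * N b c f * N a f d * N e c d = 0 → Fbar a b c d f e = 0
  pentagon : ∀ a b c d e f g k l,
      (∑ᶠ h, F a b c g f h * F a h d e g k * F b c d k h l) = F f c d e g l * F a b l e f k
  F_Fbar : ∀ a b c d e e',
      (∑ᶠ f, F a b c d e f * Fbar a b c d f e')
        = (if e = e' then (1 : R) else 0) * (N a b e : R) * (N e c d : R)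
  Fbar_F : ∀ a b c d f f',
      (∑ᶠ e, Fbar a b c d f' e * F a b c d e f)
        = (if f = f' then (1 : R) else 0) * (N b c f : R) * (N a f d : R)

namespace TensorSystem

variable {R : Type*} [CommRing R] {I : Type*}

open Fin.NatCast in
/-- `μ = (μ₀, μ₁, …, μ_L)` is a fusion path for the tuple `λ̃ = (lam 1, …, lam L)`:
`μ₀ ∈ I0` and `N_{μ_{i-1} λ_i}^{μ_i} = 1` for `1 ≤ i ≤ L`. -/
def IsPath (TS : TensorSystem R I) (L : ℕ) (I0 : Set I) (lam : ℕ → I)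
    (μ : Fin (L + 1) → I) : Prop :=
  μ 0 ∈ I0 ∧ ∀ i : ℕ, 1 ≤ i → i ≤ L →
    TS.N (μ ((i - 1 : ℕ) : Fin (L + 1))) (lam i) (μ ((i : ℕ) : Fin (L + 1))) = 1

open Fin.NatCast in
/-- Matrix element `⟨μ'| p_i^{(ν)} |μ⟩` of the two-site projection operator. -/
def pMat (TS : TensorSystem R I) (L : ℕ) (lam : ℕ → I) (i : ℕ) (ν : I)
    (μ' μ : Fin (L + 1) → I) : R :=
  (∏ j ∈ Finset.univ.erase ((i : ℕ) : Fin (L + 1)), if μ j = μ' j then (1 : R) else 0)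
    * TS.Fbar (μ ((i - 1 : ℕ) : Fin (L + 1))) (lam i) (lam (i + 1))
        (μ ((i + 1 : ℕ) : Fin (L + 1))) ν (μ' ((i : ℕ) : Fin (L + 1)))
    * TS.F (μ ((i - 1 : ℕ) : Fin (L + 1))) (lam i) (lam (i + 1))
        (μ ((i + 1 : ℕ) : Fin (L + 1))) (μ ((i : ℕ) : Fin (L + 1))) ν

/-- Matrix elements of the composition of two operators on `H_{λ̃}`,
summing over the fusion-path basis. -/
def mulMat (TS : TensorSystem R I) (L : ℕ) (I0 : Set I) (lam : ℕ → I)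
    (A B : (Fin (L + 1) → I) → (Fin (L + 1) → I) → R)
    (μ' μ : Fin (L + 1) → I) : R :=
  ∑ᶠ μ'' ∈ {x : Fin (L + 1) → I | TS.IsPath L I0 lam x}, A μ' μ'' * B μ'' μ

/-- Two operators on `H_{λ̃}` are equal iff all their matrix elements between
fusion-path basis vectors agree. -/
def MatEqOn (TS : TensorSystem R I) (L : ℕ) (I0 : Set I) (lam : ℕ → I)
    (A B : (Fin (L + 1) → I) → (Fin (L + 1) → I) → R) : Prop :=
  ∀ μ' μ : Fin (L + 1) → I, TS.IsPath L I0 lam μ' → TS.IsPath L I0 lam μ → A μ' μ = B μ' μ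

/-- Extended fusion numbers `N_{a a₁ ⋯ aₙ}^b` along a list `[a₁, …, aₙ]`. -/
def Nseq (TS : TensorSystem R I) : I → List I → I → ℕ
  | a, [], b => if a = b then 1 else 0
  | a, c :: rest, b => ∑ᶠ x, TS.N a c x * Nseq TS x rest b

/-- `ν` acts one-dimensionally on the left of `μ`. -/
def ActsOneDimLeft (TS : TensorSystem R I) (ν μ : I) : Prop :=
  (∑ᶠ μ' : I, TS.N ν μ μ') = 1

/-- `ν` acts one-dimensionally on the right of `μ`. -/
def ActsOneDimRight (TS : TensorSystem R I) (ν μ : I) : Prop :=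
  (∑ᶠ μ' : I, TS.N μ ν μ') = 1

end TensorSystem

namespace TensorSystem

variable {R : Type*} [CommRing R] {I : Type*}


lemma F_ne (TS : TensorSystem R I) {a b c d e f : I} (h : TS.F a b c d e f ≠ 0) :
    TS.N a b e = 1 ∧ TS.N b c f = 1 ∧ TS.N a f d = 1 ∧ TS.N e c d = 1 := by
  have hp : TS.N a b e * TS.N b c f * TS.N a f d * TS.N e c d ≠ 0 :=
    fun h0 => h (TS.F_vanish a b c d e f h0)
  have h1 := TS.N_le_one a b e; have h2 := TS.N_le_one b c f
  have h3 := TS.N_le_one a f d; have h4 := TS.N_le_one e c d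
  simp only [Nat.mul_ne_zero_iff] at hp
  omega

lemma Fbar_ne (TS : TensorSystem R I) {a b c d e f : I} (h : TS.Fbar a b c d f e ≠ 0) :
    TS.N a b e = 1 ∧ TS.N b c f = 1 ∧ TS.N a f d = 1 ∧ TS.N e c d = 1 := by
  have hp : TS.N a b e * TS.N b c f * TS.N a f d * TS.N e c d ≠ 0 :=
    fun h0 => h (TS.Fbar_vanish a b c d e f h0)
  have h1 := TS.N_le_one a b e; have h2 := TS.N_le_one b c f
  have h3 := TS.N_le_one a f d; have h4 := TS.N_le_one e c d
  simp only [Nat.mul_ne_zero_iff] at hp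
  omega

lemma absorb {n : ℕ} {r : R} (h : r ≠ 0 → n = 1) : (n : R) * r = r := by
  by_cases hr : r = 0
  · simp [hr]
  · rw [h hr]; simp

lemma fsum_to (f : I → R) (S : Finset I) (h : ∀ x, f x ≠ 0 → x ∈ S) :
    ∑ᶠ x, f x = ∑ x ∈ S, f x :=
  finsum_eq_sum_of_support_subset f (fun x hx => Finset.mem_coe.mpr (h x hx))

end TensorSystem


section SwapHelpers
variable {R : Type*} [CommRing R]

lemma sum_rot3 {α β γ : Type*} (s : Finset α) (t : Finset β) (u : Finset γ)
    (f : α → β → γ → R) :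
    ∑ a ∈ s, ∑ b ∈ t, ∑ c ∈ u, f a b c = ∑ b ∈ t, ∑ c ∈ u, ∑ a ∈ s, f a b c := by
  rw [Finset.sum_comm]
  exact Finset.sum_congr rfl fun b _ => Finset.sum_comm

lemma sum_rot4 {α β γ δ : Type*} (s : Finset α) (t : Finset β) (u : Finset γ) (v : Finset δ)
    (f : α → β → γ → δ → R) :
    ∑ a ∈ s, ∑ b ∈ t, ∑ c ∈ u, ∑ d ∈ v, f a b c d
      = ∑ b ∈ t, ∑ c ∈ u, ∑ d ∈ v, ∑ a ∈ s, f a b c d := by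
  rw [Finset.sum_comm]
  exact Finset.sum_congr rfl fun b _ => sum_rot3 s u v fun a c d => f a b c d

lemma sum_rot5 {α β γ δ ε : Type*} (s : Finset α) (t : Finset β) (u : Finset γ) (v : Finset δ)
    (w : Finset ε) (f : α → β → γ → δ → ε → R) :
    ∑ a ∈ s, ∑ b ∈ t, ∑ c ∈ u, ∑ d ∈ v, ∑ e ∈ w, f a b c d e
      = ∑ b ∈ t, ∑ c ∈ u, ∑ d ∈ v, ∑ e ∈ w, ∑ a ∈ s, f a b c d e := by
  rw [Finset.sum_comm]
  exact Finset.sum_congr rfl fun b _ => sum_rot4 s u v w fun a c d e => f a b c d e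

end SwapHelpers


namespace TensorSystem

variable {R : Type*} [CommRing R] {I : Type*}

lemma fsum_toN (f : I → ℕ) (S : Finset I) (h : ∀ x, f x ≠ 0 → x ∈ S) :
    ∑ᶠ x, f x = ∑ x ∈ S, f x :=
  finsum_eq_sum_of_support_subset f (fun x hx => Finset.mem_coe.mpr (h x hx))

lemma exists_mid (TS : TensorSystem R I) {a b f c g : I}
    (hab : TS.N a b f ≠ 0) (hfc : TS.N f c g ≠ 0) :
    ∃ h', TS.N b c h' ≠ 0 ∧ TS.N a h' g ≠ 0 := by
  classical
  have h1 : (∑ᶠ x, TS.N a b x * TS.N x c g) ≠ 0 := by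
    rw [fsum_toN (fun x => TS.N a b x * TS.N x c g) (TS.N_finite a b).toFinset
      (fun x hx => by
        simp only [Nat.mul_ne_zero_iff] at hx
        exact (TS.N_finite a b).mem_toFinset.mpr hx.1)]
    intro h0
    rw [Finset.sum_eq_zero_iff] at h0
    have hmem : f ∈ (TS.N_finite a b).toFinset := (TS.N_finite a b).mem_toFinset.mpr hab
    have := h0 f hmem
    simp only [Nat.mul_eq_zero] at this
    tauto
  rw [TS.N_assoc a b c g] at h1
  by_contra hcon
  push_neg at hcon
  apply h1
  apply finsum_eq_zero_of_forall_eq_zero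
  intro x
  rcases Nat.eq_zero_or_pos (TS.N b c x) with h | h
  · simp [h]
  · have := hcon x (by omega)
    simp [this]

lemma uniq_of_one_dim (TS : TensorSystem R I) {ν z φ : I}
    (hone : (∑ᶠ μ' : I, TS.N ν z μ') = 1) (hφ : TS.N ν z φ = 1) :
    ∀ k, TS.N ν z k ≠ 0 → k = φ := by
  classical
  intro k hk
  by_contra hne
  have hS := fsum_toN (fun x => TS.N ν z x) (TS.N_finite ν z).toFinset
    (fun x hx => (TS.N_finite ν z).mem_toFinset.mpr hx)
  rw [hS] at hone
  have hsub : ({φ, k} : Finset I) ⊆ (TS.N_finite ν z).toFinset := by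
    intro x hx
    rcases Finset.mem_insert.mp hx with h | h
    · rw [h]
      exact (TS.N_finite ν z).mem_toFinset.mpr (Function.mem_support.mpr (by rw [hφ]; omega))
    · rw [Finset.mem_singleton.mp h]
      exact (TS.N_finite ν z).mem_toFinset.mpr hk
  have hle := Finset.sum_le_sum_of_subset hsub (f := fun x => TS.N ν z x)
  rw [Finset.sum_pair (by exact fun h => hne h.symm)] at hle
  rw [hone] at hle
  have : (fun x => TS.N ν z x) φ + (fun x => TS.N ν z x) k
      = TS.N ν z φ + TS.N ν z k := rfl
  rw [this, hφ] at hle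
  omega

end TensorSystem


namespace TensorSystem

variable {R : Type*} [CommRing R] {I : Type*}

/-- Pentagon with the first F-move inverted. -/
lemma pent2 (TS : TensorSystem R I) (a b c d e g h k l : I) :
    TS.F a h d e g k * TS.F b c d k h l
      = ∑ᶠ f, TS.F f c d e g l * TS.F a b l e f k * TS.Fbar a b c g h f := by
  classical
  set Sf := (TS.N_finite a b).toFinset with hSf
  set Sh := (TS.N_finite b c).toFinset with hSh
  have hmemf : ∀ x, TS.N a b x ≠ 0 → x ∈ Sf := fun x hx =>
    (TS.N_finite a b).mem_toFinset.mpr (Function.mem_support.mpr hx)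
  have hmemh : ∀ x, TS.N b c x ≠ 0 → x ∈ Sh := fun x hx =>
    (TS.N_finite b c).mem_toFinset.mpr (Function.mem_support.mpr hx)
  rw [fsum_to _ Sf (fun x hx => by
    have hFb : TS.Fbar a b c g h x ≠ 0 := fun h0 => hx (by rw [h0]; ring)
    exact hmemf x (by rw [(TS.Fbar_ne hFb).1]; omega))]
  have step1 : ∀ f0 ∈ Sf,
      TS.F f0 c d e g l * TS.F a b l e f0 k * TS.Fbar a b c g h f0
        = ∑ h' ∈ Sh, (TS.F a b c g f0 h' * TS.F a h' d e g k * TS.F b c d k h' l)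
            * TS.Fbar a b c g h f0 := by
    intro f0 _
    rw [← Finset.sum_mul]
    congr 1
    rw [← TS.pentagon a b c d e f0 g k l]
    rw [fsum_to _ Sh (fun x hx => by
      have hF : TS.F a b c g f0 x ≠ 0 := fun h0 => hx (by rw [h0]; ring)
      exact hmemh x (by rw [(TS.F_ne hF).2.1]; omega))]
  rw [Finset.sum_congr rfl step1, Finset.sum_comm]
  have step2 : ∀ h' ∈ Sh,
      (∑ f0 ∈ Sf, (TS.F a b c g f0 h' * TS.F a h' d e g k * TS.F b c d k h' l)
          * TS.Fbar a b c g h f0)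
        = (TS.F a h' d e g k * TS.F b c d k h' l)
            * ((if h' = h then (1:R) else 0) * (TS.N b c h' : R) * (TS.N a h' g : R)) := by
    intro h' _
    rw [← TS.Fbar_F a b c g h' h]
    rw [fsum_to (fun e0 => TS.Fbar a b c g h e0 * TS.F a b c g e0 h') Sf (fun x hx => by
      have hx' : TS.Fbar a b c g h x * TS.F a b c g x h' ≠ 0 := hx
      have hF : TS.F a b c g x h' ≠ 0 := fun h0 => hx' (by rw [h0]; ring)
      exact hmemf x (by rw [(TS.F_ne hF).1]; omega))]
    rw [Finset.mul_sum]
    exact Finset.sum_congr rfl fun x _ => by ring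
  rw [Finset.sum_congr rfl step2]
  rw [Finset.sum_eq_single h]
  · have A1 : (TS.N a h g : R) * TS.F a h d e g k = TS.F a h d e g k :=
      absorb (fun hne => (TS.F_ne hne).1)
    have A2 : (TS.N b c h : R) * TS.F b c d k h l = TS.F b c d k h l :=
      absorb (fun hne => (TS.F_ne hne).1)
    have : (TS.F a h d e g k * TS.F b c d k h l)
        * ((if h = h then (1:R) else 0) * (TS.N b c h : R) * (TS.N a h g : R))
        = ((TS.N a h g : R) * TS.F a h d e g k) * ((TS.N b c h : R) * TS.F b c d k h l) := by
      rw [if_pos rfl]; ring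
    rw [this, A1, A2]
  · intro b' _ hb'
    rw [if_neg hb']; ring
  · intro hh
    have : TS.N b c h = 0 := by
      by_contra h0
      exact hh (hmemh h h0)
    rw [this]; push_cast; ring

end TensorSystem


namespace TensorSystem

variable {R : Type*} [CommRing R] {I : Type*}

/-- `M̄' M = P''`: the inverse double-move pairs with the pentagon composite to a projector. -/
lemma Qlem (TS : TensorSystem R I) (a b c d e k l k' l' : I) :
    (∑ f ∈ (TS.N_finite a b).toFinset,
      ∑ g' ∈ ((TS.N_finite b c).toFinset).biUnion (fun h0 => (TS.N_finite a h0).toFinset),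
        ∑ h' ∈ (TS.N_finite b c).toFinset,
          (TS.Fbar a b l e k f * TS.Fbar f c d e l g')
            * (TS.F a b c g' f h' * TS.F a h' d e g' k' * TS.F b c d k' h' l'))
      = (if l' = l then (1:R) else 0) * ((if k' = k then (1:R) else 0)
          * ((TS.N c d l' : R) * ((TS.N b l' k' : R) * (TS.N a k' e : R)))) := by
  classical
  set Sf := (TS.N_finite a b).toFinset with hSf
  set Sh := (TS.N_finite b c).toFinset with hSh
  set Sg := Sh.biUnion (fun h0 => (TS.N_finite a h0).toFinset) with hSg
  have hmemf : ∀ x, TS.N a b x ≠ 0 → x ∈ Sf := fun x hx =>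
    (TS.N_finite a b).mem_toFinset.mpr (Function.mem_support.mpr hx)
  have hmemh : ∀ x, TS.N b c x ≠ 0 → x ∈ Sh := fun x hx =>
    (TS.N_finite b c).mem_toFinset.mpr (Function.mem_support.mpr hx)
  have step1 : ∀ f0 ∈ Sf,
      (∑ g' ∈ Sg, ∑ h' ∈ Sh,
        (TS.Fbar a b l e k f0 * TS.Fbar f0 c d e l g')
          * (TS.F a b c g' f0 h' * TS.F a h' d e g' k' * TS.F b c d k' h' l'))
        = (TS.Fbar a b l e k f0 * TS.F a b l' e f0 k')
            * ((if l' = l then (1:R) else 0) * (TS.N c d l' : R) * (TS.N f0 l' e : R)) := by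
    intro f0 hf0
    have hf0' : TS.N a b f0 ≠ 0 := by
      have := (TS.N_finite a b).mem_toFinset.mp hf0
      exact Function.mem_support.mp this
    have stepg : ∀ g' ∈ Sg,
        (∑ h' ∈ Sh,
          (TS.Fbar a b l e k f0 * TS.Fbar f0 c d e l g')
            * (TS.F a b c g' f0 h' * TS.F a h' d e g' k' * TS.F b c d k' h' l'))
          = (TS.Fbar a b l e k f0 * TS.F a b l' e f0 k')
              * (TS.Fbar f0 c d e l g' * TS.F f0 c d e g' l') := by
      intro g' _
      rw [← Finset.mul_sum]
      have hpent : (∑ h' ∈ Sh, TS.F a b c g' f0 h' * TS.F a h' d e g' k' * TS.F b c d k' h' l')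
          = TS.F f0 c d e g' l' * TS.F a b l' e f0 k' := by
        rw [← fsum_to _ Sh (fun x hx => by
          have hx' : TS.F a b c g' f0 x * TS.F a x d e g' k' * TS.F b c d k' x l' ≠ 0 := hx
          have hF : TS.F a b c g' f0 x ≠ 0 := fun h0 => hx' (by rw [h0]; ring)
          exact hmemh x (by rw [(TS.F_ne hF).2.1]; omega))]
        exact TS.pentagon a b c d e f0 g' k' l'
      rw [hpent]; ring
    rw [Finset.sum_congr rfl stepg, ← Finset.mul_sum]
    congr 1
    rw [← fsum_to (fun g' => TS.Fbar f0 c d e l g' * TS.F f0 c d e g' l') Sg (fun x hx => by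
      have hx' : TS.Fbar f0 c d e l x * TS.F f0 c d e x l' ≠ 0 := hx
      have hF : TS.F f0 c d e x l' ≠ 0 := fun h0 => hx' (by rw [h0]; ring)
      have hfc : TS.N f0 c x ≠ 0 := by rw [(TS.F_ne hF).1]; omega
      obtain ⟨h0, hh0, hah0⟩ := TS.exists_mid hf0' hfc
      exact Finset.mem_biUnion.mpr ⟨h0, hmemh h0 hh0,
        (TS.N_finite a h0).mem_toFinset.mpr (Function.mem_support.mpr hah0)⟩)]
    rw [TS.Fbar_F f0 c d e l' l]
  rw [Finset.sum_congr rfl step1]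
  by_cases hl : l' = l
  · subst hl
    simp only [eq_self_iff_true, if_true]
    have step2 : ∀ f0 ∈ Sf,
        (TS.Fbar a b l' e k f0 * TS.F a b l' e f0 k')
            * ((1:R) * (TS.N c d l' : R) * (TS.N f0 l' e : R))
          = (TS.N c d l' : R) * (TS.Fbar a b l' e k f0 * TS.F a b l' e f0 k') := by
      intro f0 hmm
      have A1 : (TS.N f0 l' e : R) * TS.Fbar a b l' e k f0 = TS.Fbar a b l' e k f0 :=
        absorb (fun hne => (TS.Fbar_ne hne).2.2.2)
      calc (TS.Fbar a b l' e k f0 * TS.F a b l' e f0 k')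
            * ((1:R) * (TS.N c d l' : R) * (TS.N f0 l' e : R))
          = (TS.N c d l' : R) * (((TS.N f0 l' e : R) * TS.Fbar a b l' e k f0)
              * TS.F a b l' e f0 k') := by ring
        _ = _ := by rw [A1]
    rw [Finset.sum_congr rfl step2, ← Finset.mul_sum]
    rw [← fsum_to (fun f0 => TS.Fbar a b l' e k f0 * TS.F a b l' e f0 k') Sf (fun x hx => by
      have hx' : TS.Fbar a b l' e k x * TS.F a b l' e x k' ≠ 0 := hx
      have hF : TS.Fbar a b l' e k x ≠ 0 := fun h0 => hx' (by rw [h0]; ring)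
      exact hmemf x (by rw [(TS.Fbar_ne hF).1]; omega))]
    rw [TS.Fbar_F a b l' e k' k]
    ring
  · rw [if_neg hl]
    rw [Finset.sum_eq_zero (fun f0 _ => by ring)]
    ring

end TensorSystem


namespace TensorSystem

variable {R : Type*} [CommRing R] {I : Type*}

/-- Inverted pentagon: expanded form of the product of two inverse F-moves. -/
lemma pent2bar (TS : TensorSystem R I) (a b c d e g h k l : I) :
    (∑ᶠ f, TS.Fbar a b l e k f * TS.Fbar f c d e l g * TS.F a b c g f h)
      = TS.Fbar b c d k l h * TS.Fbar a h d e k g := by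
  classical
  by_cases hbc : TS.N b c h = 0
  · have hR : TS.Fbar b c d k l h = 0 :=
      TS.Fbar_vanish b c d k h l (by rw [hbc]; ring)
    have hL : ∀ f, TS.Fbar a b l e k f * TS.Fbar f c d e l g * TS.F a b c g f h = 0 := by
      intro f
      have : TS.F a b c g f h = 0 := TS.F_vanish a b c g f h (by rw [hbc]; ring)
      rw [this]; ring
    rw [finsum_eq_zero_of_forall_eq_zero hL, hR]; ring
  by_cases hahg : TS.N a h g = 0
  · have hR : TS.Fbar a h d e k g = 0 :=
      TS.Fbar_vanish a h d e g k (by rw [hahg]; ring)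
    have hL : ∀ f, TS.Fbar a b l e k f * TS.Fbar f c d e l g * TS.F a b c g f h = 0 := by
      intro f
      have : TS.F a b c g f h = 0 := TS.F_vanish a b c g f h (by rw [hahg]; ring)
      rw [this]; ring
    rw [finsum_eq_zero_of_forall_eq_zero hL, hR]; ring
  have hbc1 : TS.N b c h = 1 := by have := TS.N_le_one b c h; omega
  have hahg1 : TS.N a h g = 1 := by have := TS.N_le_one a h g; omega
  set Sf := (TS.N_finite a b).toFinset with hSf
  set Sh := (TS.N_finite b c).toFinset with hSh
  set Sg := Sh.biUnion (fun h0 => (TS.N_finite a h0).toFinset) with hSg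
  set Sk := Sh.biUnion (fun h0 => (TS.N_finite h0 d).toFinset) with hSk
  set Sl := (TS.N_finite c d).toFinset with hSl
  have hmemf : ∀ x, TS.N a b x ≠ 0 → x ∈ Sf := fun x hx =>
    (TS.N_finite a b).mem_toFinset.mpr (Function.mem_support.mpr hx)
  have hmemh : ∀ x, TS.N b c x ≠ 0 → x ∈ Sh := fun x hx =>
    (TS.N_finite b c).mem_toFinset.mpr (Function.mem_support.mpr hx)
  have hhSh : h ∈ Sh := hmemh h (by omega)
  have hgSg : g ∈ Sg := Finset.mem_biUnion.mpr ⟨h, hhSh,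
    (TS.N_finite a h).mem_toFinset.mpr (Function.mem_support.mpr (by omega))⟩
  have hmemk : ∀ x, TS.N h d x ≠ 0 → x ∈ Sk := fun x hx =>
    Finset.mem_biUnion.mpr ⟨h, hhSh,
      (TS.N_finite h d).mem_toFinset.mpr (Function.mem_support.mpr hx)⟩
  -- The quintuple sum
  have wayA : (∑ k' ∈ Sk, ∑ l' ∈ Sl,
      (∑ f ∈ Sf, ∑ g' ∈ Sg, ∑ h' ∈ Sh,
        (TS.Fbar a b l e k f * TS.Fbar f c d e l g')
          * (TS.F a b c g' f h' * TS.F a h' d e g' k' * TS.F b c d k' h' l'))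
        * (TS.Fbar b c d k' l' h * TS.Fbar a h d e k' g))
      = TS.Fbar b c d k l h * TS.Fbar a h d e k g := by
    have hq : ∀ k' ∈ Sk, (∑ l' ∈ Sl,
        (∑ f ∈ Sf, ∑ g' ∈ Sg, ∑ h' ∈ Sh,
          (TS.Fbar a b l e k f * TS.Fbar f c d e l g')
            * (TS.F a b c g' f h' * TS.F a h' d e g' k' * TS.F b c d k' h' l'))
          * (TS.Fbar b c d k' l' h * TS.Fbar a h d e k' g))
        = (if k' = k then (1:R) else 0)
            * (((TS.N c d l : R) * ((TS.N b l k' : R) * (TS.N a k' e : R)))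
              * (TS.Fbar b c d k' l h * TS.Fbar a h d e k' g)) := by
      intro k' _
      have hql : ∀ l' ∈ Sl,
          (∑ f ∈ Sf, ∑ g' ∈ Sg, ∑ h' ∈ Sh,
            (TS.Fbar a b l e k f * TS.Fbar f c d e l g')
              * (TS.F a b c g' f h' * TS.F a h' d e g' k' * TS.F b c d k' h' l'))
            * (TS.Fbar b c d k' l' h * TS.Fbar a h d e k' g)
          = ((if l' = l then (1:R) else 0) * ((if k' = k then (1:R) else 0)
              * ((TS.N c d l' : R) * ((TS.N b l' k' : R) * (TS.N a k' e : R)))))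
              * (TS.Fbar b c d k' l' h * TS.Fbar a h d e k' g) := by
        intro l' _
        rw [hSf, hSg, hSh, TS.Qlem a b c d e k l k' l']
      rw [Finset.sum_congr rfl hql]
      rw [Finset.sum_eq_single l]
      · rw [if_pos rfl]; ring
      · intro l' _ hne
        rw [if_neg hne]; ring
      · intro hlS
        have h0 : TS.N c d l = 0 := by
          by_contra hne
          exact hlS ((TS.N_finite c d).mem_toFinset.mpr (Function.mem_support.mpr hne))
        rw [if_pos rfl, h0]; push_cast; ring
    rw [Finset.sum_congr rfl hq]
    rw [Finset.sum_eq_single k]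
    · rw [if_pos rfl]
      have A1 : (TS.N c d l : R) * TS.Fbar b c d k l h = TS.Fbar b c d k l h :=
        absorb (fun hne => (TS.Fbar_ne hne).2.1)
      have A2 : (TS.N b l k : R) * TS.Fbar b c d k l h = TS.Fbar b c d k l h :=
        absorb (fun hne => (TS.Fbar_ne hne).2.2.1)
      have A3 : (TS.N a k e : R) * TS.Fbar a h d e k g = TS.Fbar a h d e k g :=
        absorb (fun hne => (TS.Fbar_ne hne).2.2.1)
      calc (1:R) * (((TS.N c d l : R) * ((TS.N b l k : R) * (TS.N a k e : R)))
            * (TS.Fbar b c d k l h * TS.Fbar a h d e k g))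
          = ((TS.N c d l : R) * ((TS.N b l k : R) * TS.Fbar b c d k l h))
              * ((TS.N a k e : R) * TS.Fbar a h d e k g) := by ring
        _ = TS.Fbar b c d k l h * TS.Fbar a h d e k g := by rw [A2, A1, A3]
    · intro k' _ hne
      rw [if_neg hne]; ring
    · intro hkS
      have h0 : TS.N h d k = 0 := by
        by_contra hne
        exact hkS (hmemk k hne)
      have hR : TS.Fbar a h d e k g = 0 :=
        TS.Fbar_vanish a h d e g k (by rw [h0]; ring)
      rw [hR]; ring
  rw [← wayA]
  -- Way B: push the trailing product inside and reorder the sums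
  have push : ∀ k' ∈ Sk, ∀ l' ∈ Sl,
      (∑ f ∈ Sf, ∑ g' ∈ Sg, ∑ h' ∈ Sh,
        (TS.Fbar a b l e k f * TS.Fbar f c d e l g')
          * (TS.F a b c g' f h' * TS.F a h' d e g' k' * TS.F b c d k' h' l'))
        * (TS.Fbar b c d k' l' h * TS.Fbar a h d e k' g)
      = ∑ f ∈ Sf, ∑ g' ∈ Sg, ∑ h' ∈ Sh,
          ((TS.Fbar a b l e k f * TS.Fbar f c d e l g')
            * (TS.F a b c g' f h' * TS.F a h' d e g' k' * TS.F b c d k' h' l'))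
            * (TS.Fbar b c d k' l' h * TS.Fbar a h d e k' g) := by
    intro k' _ l' _
    rw [Finset.sum_mul]
    exact Finset.sum_congr rfl fun f _ => by
      rw [Finset.sum_mul]
      exact Finset.sum_congr rfl fun g' _ => by rw [Finset.sum_mul]
  rw [Finset.sum_congr rfl (fun k' hk' => Finset.sum_congr rfl (fun l' hl' => push k' hk' l' hl'))]
  rw [sum_rot5 Sk Sl Sf Sg Sh]
  rw [sum_rot5 Sl Sf Sg Sh Sk]
  -- now the sum is ∑ f ∑ g' ∑ h' ∑ k' ∑ l'
  have inner : ∀ f0 ∈ Sf, ∀ g' ∈ Sg, ∀ h' ∈ Sh,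
      (∑ k' ∈ Sk, ∑ l' ∈ Sl,
        ((TS.Fbar a b l e k f0 * TS.Fbar f0 c d e l g')
          * (TS.F a b c g' f0 h' * TS.F a h' d e g' k' * TS.F b c d k' h' l'))
          * (TS.Fbar b c d k' l' h * TS.Fbar a h d e k' g))
      = (if h' = h then (1:R) else 0)
          * ((TS.Fbar a b l e k f0 * TS.Fbar f0 c d e l g' * TS.F a b c g' f0 h)
            * ((if g' = g then (1:R) else 0) * (TS.N a h g' : R) * (TS.N g' d e : R))) := by
    intro f0 _ g' _ h' _
    have stepl : ∀ k' ∈ Sk,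
        (∑ l' ∈ Sl,
          ((TS.Fbar a b l e k f0 * TS.Fbar f0 c d e l g')
            * (TS.F a b c g' f0 h' * TS.F a h' d e g' k' * TS.F b c d k' h' l'))
            * (TS.Fbar b c d k' l' h * TS.Fbar a h d e k' g))
        = (((TS.Fbar a b l e k f0 * TS.Fbar f0 c d e l g')
            * (TS.F a b c g' f0 h' * TS.F a h' d e g' k')) * TS.Fbar a h d e k' g)
            * ((if h' = h then (1:R) else 0) * (TS.N b c h' : R) * (TS.N h' d k' : R)) := by
      intro k' _
      have : ∀ l' ∈ Sl,
          ((TS.Fbar a b l e k f0 * TS.Fbar f0 c d e l g')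
            * (TS.F a b c g' f0 h' * TS.F a h' d e g' k' * TS.F b c d k' h' l'))
            * (TS.Fbar b c d k' l' h * TS.Fbar a h d e k' g)
          = (((TS.Fbar a b l e k f0 * TS.Fbar f0 c d e l g')
              * (TS.F a b c g' f0 h' * TS.F a h' d e g' k')) * TS.Fbar a h d e k' g)
              * (TS.F b c d k' h' l' * TS.Fbar b c d k' l' h) := by
        intro l' _
        ring
      rw [Finset.sum_congr rfl this, ← Finset.mul_sum]
      congr 1
      rw [← fsum_to (fun l' => TS.F b c d k' h' l' * TS.Fbar b c d k' l' h) Sl (fun x hx => by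
        have hx' : TS.F b c d k' h' x * TS.Fbar b c d k' x h ≠ 0 := hx
        have hF : TS.F b c d k' h' x ≠ 0 := fun h0 => hx' (by rw [h0]; ring)
        exact (TS.N_finite c d).mem_toFinset.mpr (Function.mem_support.mpr
          (by rw [(TS.F_ne hF).2.1]; omega)))]
      rw [TS.F_Fbar b c d k' h' h]
    rw [Finset.sum_congr rfl stepl]
    by_cases hh' : h' = h
    · rw [hh']
      rw [if_pos rfl]
      have stepk : ∀ k' ∈ Sk,
          (((TS.Fbar a b l e k f0 * TS.Fbar f0 c d e l g')
            * (TS.F a b c g' f0 h * TS.F a h d e g' k')) * TS.Fbar a h d e k' g)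
            * ((1:R) * (TS.N b c h : R) * (TS.N h d k' : R))
          = (TS.Fbar a b l e k f0 * TS.Fbar f0 c d e l g' * TS.F a b c g' f0 h)
              * (TS.F a h d e g' k' * TS.Fbar a h d e k' g) := by
        intro k' _
        have A1 : (TS.N h d k' : R) * TS.F a h d e g' k' = TS.F a h d e g' k' :=
          absorb (fun hne => (TS.F_ne hne).2.1)
        calc (((TS.Fbar a b l e k f0 * TS.Fbar f0 c d e l g')
              * (TS.F a b c g' f0 h * TS.F a h d e g' k')) * TS.Fbar a h d e k' g)
              * ((1:R) * (TS.N b c h : R) * (TS.N h d k' : R))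
            = (TS.N b c h : R) * ((TS.Fbar a b l e k f0 * TS.Fbar f0 c d e l g'
                * TS.F a b c g' f0 h)
                * (((TS.N h d k' : R) * TS.F a h d e g' k') * TS.Fbar a h d e k' g)) := by
              ring
          _ = _ := by rw [A1, hbc1]; push_cast; ring
      rw [Finset.sum_congr rfl stepk, ← Finset.mul_sum]
      have hk : (∑ k' ∈ Sk, TS.F a h d e g' k' * TS.Fbar a h d e k' g)
          = (if g' = g then (1:R) else 0) * (TS.N a h g' : R) * (TS.N g' d e : R) := by
        rw [← fsum_to (fun k' => TS.F a h d e g' k' * TS.Fbar a h d e k' g) Sk (fun x hx => by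
          have hx' : TS.F a h d e g' x * TS.Fbar a h d e x g ≠ 0 := hx
          have hF : TS.F a h d e g' x ≠ 0 := fun h0 => hx' (by rw [h0]; ring)
          exact hmemk x (by rw [(TS.F_ne hF).2.1]; omega))]
        exact TS.F_Fbar a h d e g' g
      rw [hk]; ring
    · rw [if_neg hh']
      rw [Finset.sum_eq_zero (fun k' _ => by ring)]
      ring
  rw [Finset.sum_congr rfl (fun f0 hf0 => Finset.sum_congr rfl (fun g' hg' =>
    Finset.sum_congr rfl (fun h' hh' => inner f0 hf0 g' hg' h' hh')))]
  -- collapse the h' sum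
  have hstep : ∀ f0 ∈ Sf, ∀ g' ∈ Sg,
      (∑ h' ∈ Sh, (if h' = h then (1:R) else 0)
        * ((TS.Fbar a b l e k f0 * TS.Fbar f0 c d e l g' * TS.F a b c g' f0 h)
          * ((if g' = g then (1:R) else 0) * (TS.N a h g' : R) * (TS.N g' d e : R))))
      = (if g' = g then (1:R) else 0)
          * ((TS.Fbar a b l e k f0 * TS.Fbar f0 c d e l g' * TS.F a b c g' f0 h)
            * ((TS.N a h g' : R) * (TS.N g' d e : R))) := by
    intro f0 _ g' _
    rw [Finset.sum_eq_single h]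
    · rw [if_pos rfl]; ring
    · intro h' _ hne
      rw [if_neg hne]; ring
    · intro hcon
      exact absurd hhSh hcon
  rw [Finset.sum_congr rfl (fun f0 hf0 => Finset.sum_congr rfl (fun g' hg' =>
    hstep f0 hf0 g' hg'))]
  -- collapse the g' sum
  have gstep : ∀ f0 ∈ Sf,
      (∑ g' ∈ Sg, (if g' = g then (1:R) else 0)
        * ((TS.Fbar a b l e k f0 * TS.Fbar f0 c d e l g' * TS.F a b c g' f0 h)
          * ((TS.N a h g' : R) * (TS.N g' d e : R))))
      = TS.Fbar a b l e k f0 * TS.Fbar f0 c d e l g * TS.F a b c g f0 h := by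
    intro f0 _
    rw [Finset.sum_eq_single g]
    · rw [if_pos rfl]
      have A1 : (TS.N g d e : R) * TS.Fbar f0 c d e l g = TS.Fbar f0 c d e l g :=
        absorb (fun hne => (TS.Fbar_ne hne).2.2.2)
      calc (1:R) * ((TS.Fbar a b l e k f0 * TS.Fbar f0 c d e l g * TS.F a b c g f0 h)
            * ((TS.N a h g : R) * (TS.N g d e : R)))
          = (TS.N a h g : R) * (TS.Fbar a b l e k f0
              * ((TS.N g d e : R) * TS.Fbar f0 c d e l g) * TS.F a b c g f0 h) := by ring
        _ = _ := by rw [A1, hahg1]; push_cast; ring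
    · intro g' _ hne
      rw [if_neg hne]; ring
    · intro hcon
      exact absurd hgSg hcon
  rw [Finset.sum_congr rfl (fun f0 hf0 => gstep f0 hf0)]
  rw [← fsum_to (fun f0 => TS.Fbar a b l e k f0 * TS.Fbar f0 c d e l g * TS.F a b c g f0 h)
    Sf (fun x hx => by
      have hx' : TS.Fbar a b l e k x * TS.Fbar x c d e l g * TS.F a b c g x h ≠ 0 := hx
      have hF : TS.Fbar a b l e k x ≠ 0 := fun h0 => hx' (by rw [h0]; ring)
      exact hmemf x (by rw [(TS.Fbar_ne hF).1]; omega))]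

end TensorSystem


namespace TensorSystem

variable {R : Type*} [CommRing R] {I : Type*}

lemma key (TS : TensorSystem R I) (a x y z e s b ν ν' φ : I)
    (huniq : ∀ k, TS.N ν z k ≠ 0 → k = φ) :
    (∑ᶠ t, TS.F a x y s t ν * TS.Fbar t y z e ν' s * TS.F t y z e b ν' * TS.Fbar a x y b ν t)
      = TS.F x y z φ ν ν' * TS.Fbar x y z φ ν' ν
          * ((if b = s then (1:R) else 0) * (TS.N a ν b : R) * (TS.N b z e : R)) := by
  classical
  set St := (TS.N_finite a x).toFinset with hSt
  set Sk := (TS.N_finite x ν').toFinset with hSkdef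
  have hmemt : ∀ x0, TS.N a x x0 ≠ 0 → x0 ∈ St := fun x0 hx =>
    (TS.N_finite a x).mem_toFinset.mpr (Function.mem_support.mpr hx)
  have hmemk : ∀ x0, TS.N x ν' x0 ≠ 0 → x0 ∈ Sk := fun x0 hx =>
    (TS.N_finite x ν').mem_toFinset.mpr (Function.mem_support.mpr hx)
  have hEA : (∑ᶠ k, (TS.Fbar x y z k ν' ν * TS.Fbar a ν z e k s)
        * (TS.F a ν z e b k * TS.F x y z k ν ν'))
      = TS.F x y z φ ν ν' * TS.Fbar x y z φ ν' ν
          * ((if b = s then (1:R) else 0) * (TS.N a ν b : R) * (TS.N b z e : R)) := by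
    rw [finsum_eq_single _ φ (fun k0 hk0 => by
      show (TS.Fbar x y z k0 ν' ν * TS.Fbar a ν z e k0 s)
          * (TS.F a ν z e b k0 * TS.F x y z k0 ν ν') = 0
      have hz : TS.F x y z k0 ν ν' = 0 := by
        by_contra hne
        exact hk0 (huniq k0 (by rw [(TS.F_ne hne).2.2.2]; omega))
      rw [hz]; ring)]
    have hsingle : TS.F a ν z e b φ * TS.Fbar a ν z e φ s
        = (if b = s then (1:R) else 0) * (TS.N a ν b : R) * (TS.N b z e : R) := by
      have h1 : (∑ᶠ k0, TS.F a ν z e b k0 * TS.Fbar a ν z e k0 s)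
          = TS.F a ν z e b φ * TS.Fbar a ν z e φ s :=
        finsum_eq_single _ φ (fun k0 hk0 => by
          show TS.F a ν z e b k0 * TS.Fbar a ν z e k0 s = 0
          have hz : TS.F a ν z e b k0 = 0 := by
            by_contra hne
            exact hk0 (huniq k0 (by rw [(TS.F_ne hne).2.1]; omega))
          rw [hz]; ring)
      rw [← h1, TS.F_Fbar a ν z e b s]
    calc (TS.Fbar x y z φ ν' ν * TS.Fbar a ν z e φ s)
          * (TS.F a ν z e b φ * TS.F x y z φ ν ν')
        = (TS.F x y z φ ν ν' * TS.Fbar x y z φ ν' ν)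
            * (TS.F a ν z e b φ * TS.Fbar a ν z e φ s) := by ring
      _ = _ := by rw [hsingle]
  rw [← hEA]
  rw [fsum_to _ St (fun x0 hx => by
    have hx' : TS.F a x y s x0 ν * TS.Fbar x0 y z e ν' s * TS.F x0 y z e b ν'
        * TS.Fbar a x y b ν x0 ≠ 0 := hx
    have hF : TS.F a x y s x0 ν ≠ 0 := fun h0 => hx' (by rw [h0]; ring)
    exact hmemt x0 (by rw [(TS.F_ne hF).1]; omega))]
  rw [fsum_to _ Sk (fun x0 hx => by
    have hx' : (TS.Fbar x y z x0 ν' ν * TS.Fbar a ν z e x0 s)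
        * (TS.F a ν z e b x0 * TS.F x y z x0 ν ν') ≠ 0 := hx
    have hF : TS.Fbar x y z x0 ν' ν ≠ 0 := fun h0 => hx' (by rw [h0]; ring)
    exact hmemk x0 (by rw [(TS.Fbar_ne hF).2.2.1]; omega))]
  have brackets : ∀ k0 ∈ Sk,
      (TS.Fbar x y z k0 ν' ν * TS.Fbar a ν z e k0 s)
        * (TS.F a ν z e b k0 * TS.F x y z k0 ν ν')
      = (∑ t ∈ St, TS.Fbar a x ν' e k0 t * TS.Fbar t y z e ν' s * TS.F a x y s t ν)
          * (∑ t' ∈ St, TS.F t' y z e b ν' * TS.F a x ν' e t' k0 * TS.Fbar a x y b ν t') := by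
    intro k0 _
    have hbr1 : TS.Fbar x y z k0 ν' ν * TS.Fbar a ν z e k0 s
        = ∑ t ∈ St, TS.Fbar a x ν' e k0 t * TS.Fbar t y z e ν' s * TS.F a x y s t ν := by
      rw [← fsum_to (fun t => TS.Fbar a x ν' e k0 t * TS.Fbar t y z e ν' s
          * TS.F a x y s t ν) St (fun x0 hx => by
        have hx' : TS.Fbar a x ν' e k0 x0 * TS.Fbar x0 y z e ν' s * TS.F a x y s x0 ν ≠ 0 := hx
        have hF : TS.F a x y s x0 ν ≠ 0 := fun h0 => hx' (by rw [h0]; ring)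
        exact hmemt x0 (by rw [(TS.F_ne hF).1]; omega))]
      exact (TS.pent2bar a x y z e s ν k0 ν').symm
    have hbr2 : TS.F a ν z e b k0 * TS.F x y z k0 ν ν'
        = ∑ t' ∈ St, TS.F t' y z e b ν' * TS.F a x ν' e t' k0 * TS.Fbar a x y b ν t' := by
      rw [← fsum_to (fun t' => TS.F t' y z e b ν' * TS.F a x ν' e t' k0
          * TS.Fbar a x y b ν t') St (fun x0 hx => by
        have hx' : TS.F x0 y z e b ν' * TS.F a x ν' e x0 k0 * TS.Fbar a x y b ν x0 ≠ 0 := hx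
        have hF : TS.Fbar a x y b ν x0 ≠ 0 := fun h0 => hx' (by rw [h0]; ring)
        exact hmemt x0 (by rw [(TS.Fbar_ne hF).1]; omega))]
      exact TS.pent2 a x y z e b ν k0 ν'
    rw [hbr1, hbr2]
  rw [Finset.sum_congr rfl brackets]
  have expand : ∀ k0 ∈ Sk,
      (∑ t ∈ St, TS.Fbar a x ν' e k0 t * TS.Fbar t y z e ν' s * TS.F a x y s t ν)
        * (∑ t' ∈ St, TS.F t' y z e b ν' * TS.F a x ν' e t' k0 * TS.Fbar a x y b ν t')
      = ∑ t ∈ St, ∑ t' ∈ St,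
          (TS.Fbar a x ν' e k0 t * TS.Fbar t y z e ν' s * TS.F a x y s t ν)
            * (TS.F t' y z e b ν' * TS.F a x ν' e t' k0 * TS.Fbar a x y b ν t') := by
    intro k0 _
    rw [Finset.sum_mul_sum]
  rw [Finset.sum_congr rfl expand, sum_rot3 Sk St St]
  have inner : ∀ t ∈ St, ∀ t' ∈ St,
      (∑ k0 ∈ Sk,
        (TS.Fbar a x ν' e k0 t * TS.Fbar t y z e ν' s * TS.F a x y s t ν)
          * (TS.F t' y z e b ν' * TS.F a x ν' e t' k0 * TS.Fbar a x y b ν t'))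
      = ((TS.Fbar t y z e ν' s * TS.F a x y s t ν)
          * (TS.F t' y z e b ν' * TS.Fbar a x y b ν t'))
          * ((if t' = t then (1:R) else 0) * (TS.N a x t' : R) * (TS.N t' ν' e : R)) := by
    intro t _ t' _
    have harr : ∀ k0 ∈ Sk,
        (TS.Fbar a x ν' e k0 t * TS.Fbar t y z e ν' s * TS.F a x y s t ν)
          * (TS.F t' y z e b ν' * TS.F a x ν' e t' k0 * TS.Fbar a x y b ν t')
        = ((TS.Fbar t y z e ν' s * TS.F a x y s t ν)
            * (TS.F t' y z e b ν' * TS.Fbar a x y b ν t'))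
            * (TS.F a x ν' e t' k0 * TS.Fbar a x ν' e k0 t) := fun k0 _ => by ring
    rw [Finset.sum_congr rfl harr, ← Finset.mul_sum]
    have hk : (∑ k0 ∈ Sk, TS.F a x ν' e t' k0 * TS.Fbar a x ν' e k0 t)
        = (if t' = t then (1:R) else 0) * (TS.N a x t' : R) * (TS.N t' ν' e : R) := by
      rw [← fsum_to (fun k0 => TS.F a x ν' e t' k0 * TS.Fbar a x ν' e k0 t) Sk (fun x0 hx => by
        have hx' : TS.F a x ν' e t' x0 * TS.Fbar a x ν' e x0 t ≠ 0 := hx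
        have hF : TS.F a x ν' e t' x0 ≠ 0 := fun h0 => hx' (by rw [h0]; ring)
        exact hmemk x0 (by rw [(TS.F_ne hF).2.1]; omega))]
      exact TS.F_Fbar a x ν' e t' t
    rw [hk]
  rw [Finset.sum_congr rfl (fun t ht => Finset.sum_congr rfl (fun t' ht' => inner t ht t' ht'))]
  have collapse : ∀ t ∈ St,
      (∑ t' ∈ St,
        ((TS.Fbar t y z e ν' s * TS.F a x y s t ν)
          * (TS.F t' y z e b ν' * TS.Fbar a x y b ν t'))
          * ((if t' = t then (1:R) else 0) * (TS.N a x t' : R) * (TS.N t' ν' e : R)))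
      = TS.F a x y s t ν * TS.Fbar t y z e ν' s * TS.F t y z e b ν' * TS.Fbar a x y b ν t := by
    intro t htS
    rw [Finset.sum_eq_single t]
    · rw [if_pos rfl]
      have A1 : (TS.N a x t : R) * TS.F a x y s t ν = TS.F a x y s t ν :=
        absorb (fun hne => (TS.F_ne hne).1)
      have A2 : (TS.N t ν' e : R) * TS.Fbar t y z e ν' s = TS.Fbar t y z e ν' s :=
        absorb (fun hne => (TS.Fbar_ne hne).2.2.1)
      calc ((TS.Fbar t y z e ν' s * TS.F a x y s t ν)
            * (TS.F t y z e b ν' * TS.Fbar a x y b ν t))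
            * ((1:R) * (TS.N a x t : R) * (TS.N t ν' e : R))
          = (((TS.N a x t : R) * TS.F a x y s t ν)
              * ((TS.N t ν' e : R) * TS.Fbar t y z e ν' s))
              * (TS.F t y z e b ν' * TS.Fbar a x y b ν t) := by ring
        _ = _ := by rw [A1, A2]; ring
    · intro t'' _ hne
      rw [if_neg hne]; ring
    · intro hcon
      exact absurd htS hcon
  rw [Finset.sum_congr rfl collapse]

end TensorSystem


namespace TensorSystem

variable {R : Type*} [CommRing R] {I : Type*}

open Fin.NatCast

lemma prod_delta_ne {L : ℕ} (σ ρ : Fin (L + 1) → I) (ks : Fin (L + 1))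
    (h : (∏ j ∈ Finset.univ.erase ks, if σ j = ρ j then (1 : R) else 0) ≠ 0) :
    ∀ j, j ≠ ks → σ j = ρ j := by
  intro j hj
  by_contra hne
  exact h (Finset.prod_eq_zero (Finset.mem_erase.mpr ⟨hj, Finset.mem_univ j⟩) (if_neg hne))

lemma prod_delta_one {L : ℕ} (σ ρ : Fin (L + 1) → I) (ks : Fin (L + 1))
    (h : ∀ j, j ≠ ks → σ j = ρ j) :
    (∏ j ∈ Finset.univ.erase ks, if σ j = ρ j then (1 : R) else 0) = 1 :=
  Finset.prod_eq_one fun j hj => if_pos (h j (Finset.mem_erase.mp hj).1)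

lemma paths_collapse (TS : TensorSystem R I) (L : ℕ) (I0 : Set I) (lam : ℕ → I)
    (ref : Fin (L + 1) → I) (ks : Fin (L + 1)) (g : (Fin (L + 1) → I) → R)
    (h0 : ∀ σ, TS.IsPath L I0 lam σ → g σ ≠ 0 → ∀ j, j ≠ ks → σ j = ref j) :
    (∑ᶠ σ ∈ {x : Fin (L + 1) → I | TS.IsPath L I0 lam x}, g σ)
      = ∑ᶠ t : I, if TS.IsPath L I0 lam (Function.update ref ks t)
          then g (Function.update ref ks t) else 0 := by
  classical
  have hrange : ∀ σ : Fin (L + 1) → I, (∀ j, j ≠ ks → σ j = ref j) →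
      σ ∈ Set.range (Function.update ref ks) := by
    intro σ hσ
    refine ⟨σ ks, ?_⟩
    funext j
    by_cases hj : j = ks
    · subst hj; rw [Function.update_self]
    · rw [Function.update_of_ne hj]
      exact (hσ j hj).symm
  have hind : Set.indicator {x : Fin (L + 1) → I | TS.IsPath L I0 lam x} g
      = Set.indicator (Set.range (Function.update ref ks))
          (fun σ => if TS.IsPath L I0 lam σ then g σ else 0) := by
    funext σ
    by_cases hp : TS.IsPath L I0 lam σ
    · by_cases hgz : g σ = 0
      · simp [Set.indicator_apply, hp, hgz]
      · have hmem := hrange σ (h0 σ hp hgz)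
        simp [Set.indicator_apply, hp, hmem]
    · simp [Set.indicator_apply, hp]
  rw [finsum_mem_def, hind, ← finsum_mem_def,
    finsum_mem_range (Function.update_injective ref ks)]

lemma isPath_update (TS : TensorSystem R I) {L : ℕ} {I0 : Set I} {lam : ℕ → I}
    {μ : Fin (L + 1) → I} (hμ : TS.IsPath L I0 lam μ) {k : ℕ} (hk1 : 1 ≤ k) (hkL : k + 1 ≤ L)
    {t : I}
    (h1 : TS.N (μ ((k - 1 : ℕ) : Fin (L + 1))) (lam k) t = 1)
    (h2 : TS.N t (lam (k + 1)) (μ ((k + 1 : ℕ) : Fin (L + 1))) = 1) :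
    TS.IsPath L I0 lam (Function.update μ ((k : ℕ) : Fin (L + 1)) t) := by
  classical
  have hval : ∀ w : ℕ, w ≤ L → (((w : ℕ) : Fin (L + 1)) : ℕ) = w := fun w hw =>
    Fin.val_cast_of_lt (by omega)
  have hinj : ∀ w w' : ℕ, w ≤ L → w' ≤ L →
      ((w : ℕ) : Fin (L + 1)) = ((w' : ℕ) : Fin (L + 1)) → w = w' := by
    intro w w' hw hw' hww
    have := congrArg Fin.val hww
    rw [hval w hw, hval w' hw'] at this
    exact this
  constructor
  · have h0k : (0 : Fin (L + 1)) ≠ ((k : ℕ) : Fin (L + 1)) := by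
      intro hc
      have := congrArg Fin.val hc
      rw [hval k (by omega)] at this
      simp at this
      omega
    rw [Function.update_of_ne h0k]
    exact hμ.1
  · intro j hj1 hjL
    by_cases hjk : j = k
    · subst hjk
      have hne : ((j - 1 : ℕ) : Fin (L + 1)) ≠ ((j : ℕ) : Fin (L + 1)) := by
        intro hc
        have := hinj (j - 1) j (by omega) (by omega) hc
        omega
      rw [Function.update_of_ne hne, Function.update_self]
      exact h1
    · by_cases hjk1 : j = k + 1
      · subst hjk1
        have he : (k + 1 - 1 : ℕ) = k := by omega
        rw [he]
        have hne : ((k + 1 : ℕ) : Fin (L + 1)) ≠ ((k : ℕ) : Fin (L + 1)) := by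
          intro hc
          have := hinj (k + 1) k (by omega) (by omega) hc
          omega
        rw [Function.update_self, Function.update_of_ne hne]
        exact h2
      · have hne1 : ((j - 1 : ℕ) : Fin (L + 1)) ≠ ((k : ℕ) : Fin (L + 1)) := by
          intro hc
          have := hinj (j - 1) k (by omega) (by omega) hc
          omega
        have hne2 : ((j : ℕ) : Fin (L + 1)) ≠ ((k : ℕ) : Fin (L + 1)) := by
          intro hc
          have := hinj j k (by omega) (by omega) hc
          omega
        rw [Function.update_of_ne hne1, Function.update_of_ne hne2]
        exact hμ.2 j hj1 hjL

end TensorSystem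


namespace TensorSystem

variable {R : Type*} [CommRing R] {I : Type*}

open Fin.NatCast

lemma pMat_agree (TS : TensorSystem R I) {L : ℕ} {lam : ℕ → I} {k : ℕ} {ν : I}
    {ρ σ : Fin (L + 1) → I} (h : TS.pMat L lam k ν ρ σ ≠ 0) :
    ∀ j, j ≠ ((k : ℕ) : Fin (L + 1)) → σ j = ρ j := by
  refine prod_delta_ne (R := R) σ ρ _ (fun hp => h ?_)
  simp only [TensorSystem.pMat]
  rw [hp]
  ring

lemma pMat_zero (TS : TensorSystem R I) (L : ℕ) (lam : ℕ → I) (k : ℕ) (ν : I)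
    (ρ σ : Fin (L + 1) → I) (j0 : Fin (L + 1)) (hj : j0 ≠ ((k : ℕ) : Fin (L + 1)))
    (hne : σ j0 ≠ ρ j0) : TS.pMat L lam k ν ρ σ = 0 := by
  simp only [TensorSystem.pMat]
  rw [Finset.prod_eq_zero (Finset.mem_erase.mpr ⟨hj, Finset.mem_univ j0⟩)
    (show (if σ j0 = ρ j0 then (1 : R) else 0) = 0 from if_neg hne)]
  ring

end TensorSystem

open Fin.NatCast

/-- Matrix elements of the identity operator. -/
def deltaMat {R : Type*} [CommRing R] {I : Type*} (L : ℕ)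
    (μ' μ : Fin (L + 1) → I) : R :=
  ∏ j : Fin (L + 1), if μ j = μ' j then (1 : R) else 0

/-- Scalar multiple of a matrix of operator matrix elements. -/
def smulMat {R : Type*} [CommRing R] {α : Sort*} (c : R) (A : α → α → R) : α → α → R :=
  fun x y => c * A x y

/-- if `ν` acts one-dimensionally on the left of `λ_{i+2}` then
`p_i^{(ν)} p_{i+1}^{(ν')} p_i^{(ν)}` is the stated multiple of `p_i^{(ν)}`. -/
theorem TL_like_from_one_dim_left
    {R : Type*} [CommRing R] {I : Type*}
    (TS : TensorSystem R I) (L : ℕ) (I0 : Set I) (hI0 : I0.Finite)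
    (lam : ℕ → I) (ν : I) (i : ℕ) (hi : 1 ≤ i) (hiL : i + 2 ≤ L)
    (hone : TS.ActsOneDimLeft ν (lam (i + 2)))
    (φ : I) (hφ : TS.N ν (lam (i + 2)) φ = 1) (ν' : I) :
    TS.MatEqOn L I0 lam
      (TS.mulMat L I0 lam
      (TS.pMat L lam (i) ν)
      (TS.mulMat L I0 lam
      (TS.pMat L lam (i + 1) ν')
      (TS.pMat L lam (i) ν)))
      (smulMat (TS.F (lam i) (lam (i + 1)) (lam (i + 2)) φ ν ν'
          * TS.Fbar (lam i) (lam (i + 1)) (lam (i + 2)) φ ν' ν)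
        (TS.pMat L lam (i) ν)) := by
  classical
  have hone' : (∑ᶠ μ'' : I, TS.N ν (lam (i + 2)) μ'') = 1 := hone
  have huniq := TS.uniq_of_one_dim hone' hφ
  intro μ' μ hμ' hμ
  simp only [TensorSystem.mulMat, smulMat]
  have hval : ∀ w : ℕ, w ≤ L → (((w : ℕ) : Fin (L + 1)) : ℕ) = w := fun w hw =>
    Fin.val_cast_of_lt (by omega)
  have hinj : ∀ w w' : ℕ, w ≤ L → w' ≤ L →
      ((w : ℕ) : Fin (L + 1)) = ((w' : ℕ) : Fin (L + 1)) → w = w' := by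
    intro w w' hw hw' hww
    have := congrArg Fin.val hww
    rw [hval w hw, hval w' hw'] at this
    exact this
  have d01 : ((i - 1 : ℕ) : Fin (L + 1)) ≠ ((i : ℕ) : Fin (L + 1)) :=
    fun hc => by have := hinj _ _ (by omega) (by omega) hc; omega
  have d02 : ((i - 1 : ℕ) : Fin (L + 1)) ≠ ((i + 1 : ℕ) : Fin (L + 1)) :=
    fun hc => by have := hinj _ _ (by omega) (by omega) hc; omega
  have d12 : ((i : ℕ) : Fin (L + 1)) ≠ ((i + 1 : ℕ) : Fin (L + 1)) :=
    fun hc => by have := hinj _ _ (by omega) (by omega) hc; omega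
  have d21 : ((i + 1 : ℕ) : Fin (L + 1)) ≠ ((i : ℕ) : Fin (L + 1)) :=
    fun hc => by have := hinj _ _ (by omega) (by omega) hc; omega
  have d31 : ((i + 2 : ℕ) : Fin (L + 1)) ≠ ((i : ℕ) : Fin (L + 1)) :=
    fun hc => by have := hinj _ _ (by omega) (by omega) hc; omega
  have d32 : ((i + 2 : ℕ) : Fin (L + 1)) ≠ ((i + 1 : ℕ) : Fin (L + 1)) :=
    fun hc => by have := hinj _ _ (by omega) (by omega) hc; omega
  by_cases hC : ∀ j : Fin (L + 1), j ≠ ((i : ℕ) : Fin (L + 1)) →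
      j ≠ ((i + 1 : ℕ) : Fin (L + 1)) → μ j = μ' j
  case neg =>
    push_neg at hC
    obtain ⟨j0, hj1, hj2, hjne⟩ := hC
    rw [TS.pMat_zero L lam i ν μ' μ j0 hj1 hjne, mul_zero]
    apply finsum_mem_of_eqOn_zero
    intro σ hσ
    show TS.pMat L lam i ν μ' σ *
        (∑ᶠ τ ∈ {x : Fin (L + 1) → I | TS.IsPath L I0 lam x},
          TS.pMat L lam (i + 1) ν' σ τ * TS.pMat L lam i ν τ μ) = 0
    by_cases hz : TS.pMat L lam i ν μ' σ = 0
    · rw [hz, zero_mul]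
    · have hag := TS.pMat_agree hz
      have hzin : (∑ᶠ τ ∈ {x : Fin (L + 1) → I | TS.IsPath L I0 lam x},
          TS.pMat L lam (i + 1) ν' σ τ * TS.pMat L lam i ν τ μ) = 0 := by
        apply finsum_mem_of_eqOn_zero
        intro τ hτ
        show TS.pMat L lam (i + 1) ν' σ τ * TS.pMat L lam i ν τ μ = 0
        by_cases h1 : TS.pMat L lam (i + 1) ν' σ τ = 0
        · rw [h1, zero_mul]
        · have hag2 := TS.pMat_agree h1
          have hτj0 : τ j0 = μ' j0 := by rw [hag2 j0 hj2]; exact hag j0 hj1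
          rw [TS.pMat_zero L lam i ν τ μ j0 hj1
            (fun hc => hjne (by rw [hc, hτj0])), mul_zero]
      rw [hzin, mul_zero]
  case pos =>
    have e1 : i + 1 - 1 = i := by omega
    have e2 : i + 1 + 1 = i + 2 := by omega
    have ha0 : μ' ((i - 1 : ℕ) : Fin (L + 1)) = μ ((i - 1 : ℕ) : Fin (L + 1)) :=
      (hC _ d01 d02).symm
    have hNbze : TS.N (μ ((i + 1 : ℕ) : Fin (L + 1))) (lam (i + 2))
        (μ ((i + 2 : ℕ) : Fin (L + 1))) = 1 := by
      have hcond := hμ.2 (i + 2) (by omega) hiL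
      have e3 : i + 2 - 1 = i + 1 := by omega
      rw [e3] at hcond
      exact hcond
    -- evaluations of pMat at updated paths
    have hpm1 : ∀ t : I, TS.pMat L lam i ν μ' (Function.update μ' ((i : ℕ) : Fin (L + 1)) t)
        = TS.Fbar (μ ((i - 1 : ℕ) : Fin (L + 1))) (lam i) (lam (i + 1))
            (μ' ((i + 1 : ℕ) : Fin (L + 1))) ν (μ' ((i : ℕ) : Fin (L + 1)))
          * TS.F (μ ((i - 1 : ℕ) : Fin (L + 1))) (lam i) (lam (i + 1))
            (μ' ((i + 1 : ℕ) : Fin (L + 1))) t ν := by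
      intro t
      simp only [TensorSystem.pMat]
      rw [TensorSystem.prod_delta_one _ _ _ (fun j hj => Function.update_of_ne hj t μ')]
      rw [Function.update_of_ne d01, Function.update_of_ne d21, Function.update_self, ha0]
      ring
    have hpm2 : ∀ t t'' : I, TS.pMat L lam (i + 1) ν'
        (Function.update μ' ((i : ℕ) : Fin (L + 1)) t)
        (Function.update μ ((i : ℕ) : Fin (L + 1)) t'')
        = (if t'' = t then (1 : R) else 0)
            * (TS.Fbar t'' (lam (i + 1)) (lam (i + 2)) (μ ((i + 2 : ℕ) : Fin (L + 1))) ν'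
                (μ' ((i + 1 : ℕ) : Fin (L + 1)))
              * TS.F t'' (lam (i + 1)) (lam (i + 2)) (μ ((i + 2 : ℕ) : Fin (L + 1)))
                (μ ((i + 1 : ℕ) : Fin (L + 1))) ν') := by
      intro t t''
      simp only [TensorSystem.pMat]
      rw [e1, e2]
      have hprod : (∏ j ∈ Finset.univ.erase ((i + 1 : ℕ) : Fin (L + 1)),
          if Function.update μ ((i : ℕ) : Fin (L + 1)) t'' j
            = Function.update μ' ((i : ℕ) : Fin (L + 1)) t j then (1 : R) else 0)
          = (if t'' = t then (1 : R) else 0) := by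
        rw [Finset.prod_eq_single_of_mem ((i : ℕ) : Fin (L + 1))
          (Finset.mem_erase.mpr ⟨d12, Finset.mem_univ _⟩)
          (fun j hj hji => by
            rw [Function.update_of_ne hji, Function.update_of_ne hji]
            exact if_pos (hC j hji (Finset.mem_erase.mp hj).1))]
        rw [Function.update_self, Function.update_self]
      rw [hprod, Function.update_self, Function.update_of_ne d31,
        Function.update_of_ne d21 t μ', Function.update_of_ne d21 t'' μ]
      ring
    have hpm3 : ∀ t'' : I, TS.pMat L lam i ν
        (Function.update μ ((i : ℕ) : Fin (L + 1)) t'') μ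
        = TS.Fbar (μ ((i - 1 : ℕ) : Fin (L + 1))) (lam i) (lam (i + 1))
            (μ ((i + 1 : ℕ) : Fin (L + 1))) ν t''
          * TS.F (μ ((i - 1 : ℕ) : Fin (L + 1))) (lam i) (lam (i + 1))
            (μ ((i + 1 : ℕ) : Fin (L + 1))) (μ ((i : ℕ) : Fin (L + 1))) ν := by
      intro t''
      simp only [TensorSystem.pMat]
      rw [TensorSystem.prod_delta_one _ _ _
        (fun j hj => (Function.update_of_ne hj t'' μ).symm)]
      rw [Function.update_self]
      ring
    have hout : ∀ σ, TS.IsPath L I0 lam σ →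
        (TS.pMat L lam i ν μ' σ *
          ∑ᶠ τ ∈ {x : Fin (L + 1) → I | TS.IsPath L I0 lam x},
            TS.pMat L lam (i + 1) ν' σ τ * TS.pMat L lam i ν τ μ) ≠ 0 →
        ∀ j, j ≠ ((i : ℕ) : Fin (L + 1)) → σ j = μ' j := by
      intro σ hσ hne
      exact TS.pMat_agree (fun h0 => hne (by rw [h0, zero_mul]))
    rw [TS.paths_collapse L I0 lam μ' ((i : ℕ) : Fin (L + 1))
      (fun σ => TS.pMat L lam i ν μ' σ *
        ∑ᶠ τ ∈ {x : Fin (L + 1) → I | TS.IsPath L I0 lam x},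
          TS.pMat L lam (i + 1) ν' σ τ * TS.pMat L lam i ν τ μ) hout]
    have hQ : ∀ t : I, (∑ᶠ τ ∈ {x : Fin (L + 1) → I | TS.IsPath L I0 lam x},
        TS.pMat L lam (i + 1) ν' (Function.update μ' ((i : ℕ) : Fin (L + 1)) t) τ
          * TS.pMat L lam i ν τ μ)
        = if TS.IsPath L I0 lam (Function.update μ ((i : ℕ) : Fin (L + 1)) t) then
            (TS.Fbar t (lam (i + 1)) (lam (i + 2)) (μ ((i + 2 : ℕ) : Fin (L + 1))) ν'
                (μ' ((i + 1 : ℕ) : Fin (L + 1)))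
              * TS.F t (lam (i + 1)) (lam (i + 2)) (μ ((i + 2 : ℕ) : Fin (L + 1)))
                (μ ((i + 1 : ℕ) : Fin (L + 1))) ν')
            * (TS.Fbar (μ ((i - 1 : ℕ) : Fin (L + 1))) (lam i) (lam (i + 1))
                (μ ((i + 1 : ℕ) : Fin (L + 1))) ν t
              * TS.F (μ ((i - 1 : ℕ) : Fin (L + 1))) (lam i) (lam (i + 1))
                (μ ((i + 1 : ℕ) : Fin (L + 1))) (μ ((i : ℕ) : Fin (L + 1))) ν)
          else 0 := by
      intro t
      have hin : ∀ τ, TS.IsPath L I0 lam τ →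
          (TS.pMat L lam (i + 1) ν' (Function.update μ' ((i : ℕ) : Fin (L + 1)) t) τ
            * TS.pMat L lam i ν τ μ) ≠ 0 →
          ∀ j, j ≠ ((i : ℕ) : Fin (L + 1)) → τ j = μ j := by
        intro τ hτ hne j hj
        have h2 : TS.pMat L lam i ν τ μ ≠ 0 := fun h0 => hne (by rw [h0, mul_zero])
        exact (TS.pMat_agree h2 j hj).symm
      rw [TS.paths_collapse L I0 lam μ ((i : ℕ) : Fin (L + 1))
        (fun τ => TS.pMat L lam (i + 1) ν' (Function.update μ' ((i : ℕ) : Fin (L + 1)) t) τ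
          * TS.pMat L lam i ν τ μ) hin]
      rw [finsum_congr (fun t'' => by rw [hpm2 t t'', hpm3 t''])]
      rw [finsum_eq_single _ t (fun t'' hne => by
        by_cases hp : TS.IsPath L I0 lam (Function.update μ ((i : ℕ) : Fin (L + 1)) t'')
        · rw [if_pos hp, if_neg hne]; ring
        · rw [if_neg hp])]
      by_cases hp : TS.IsPath L I0 lam (Function.update μ ((i : ℕ) : Fin (L + 1)) t)
      · rw [if_pos hp, if_pos hp, if_pos rfl]; ring
      · rw [if_neg hp, if_neg hp]
    have hper : ∀ t : I,
        (if TS.IsPath L I0 lam (Function.update μ' ((i : ℕ) : Fin (L + 1)) t) then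
          TS.pMat L lam i ν μ' (Function.update μ' ((i : ℕ) : Fin (L + 1)) t) *
            ∑ᶠ τ ∈ {x : Fin (L + 1) → I | TS.IsPath L I0 lam x},
              TS.pMat L lam (i + 1) ν' (Function.update μ' ((i : ℕ) : Fin (L + 1)) t) τ
                * TS.pMat L lam i ν τ μ
          else 0)
        = (TS.Fbar (μ ((i - 1 : ℕ) : Fin (L + 1))) (lam i) (lam (i + 1))
              (μ' ((i + 1 : ℕ) : Fin (L + 1))) ν (μ' ((i : ℕ) : Fin (L + 1)))
            * TS.F (μ ((i - 1 : ℕ) : Fin (L + 1))) (lam i) (lam (i + 1))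
              (μ ((i + 1 : ℕ) : Fin (L + 1))) (μ ((i : ℕ) : Fin (L + 1))) ν)
          * (TS.F (μ ((i - 1 : ℕ) : Fin (L + 1))) (lam i) (lam (i + 1))
              (μ' ((i + 1 : ℕ) : Fin (L + 1))) t ν
            * TS.Fbar t (lam (i + 1)) (lam (i + 2)) (μ ((i + 2 : ℕ) : Fin (L + 1))) ν'
              (μ' ((i + 1 : ℕ) : Fin (L + 1)))
            * TS.F t (lam (i + 1)) (lam (i + 2)) (μ ((i + 2 : ℕ) : Fin (L + 1)))
              (μ ((i + 1 : ℕ) : Fin (L + 1))) ν'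
            * TS.Fbar (μ ((i - 1 : ℕ) : Fin (L + 1))) (lam i) (lam (i + 1))
              (μ ((i + 1 : ℕ) : Fin (L + 1))) ν t) := by
      intro t
      rw [hQ t, hpm1 t]
      by_cases hF1 : TS.F (μ ((i - 1 : ℕ) : Fin (L + 1))) (lam i) (lam (i + 1))
          (μ' ((i + 1 : ℕ) : Fin (L + 1))) t ν = 0
      · simp only [hF1, zero_mul, mul_zero, ite_self]
      by_cases hF2 : TS.Fbar (μ ((i - 1 : ℕ) : Fin (L + 1))) (lam i) (lam (i + 1))
          (μ ((i + 1 : ℕ) : Fin (L + 1))) ν t = 0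
      · simp only [hF2, zero_mul, mul_zero, ite_self]
      have hp1 : TS.IsPath L I0 lam (Function.update μ' ((i : ℕ) : Fin (L + 1)) t) := by
        refine TS.isPath_update hμ' hi (by omega) ?_ ?_
        · rw [ha0]; exact (TS.F_ne hF1).1
        · exact (TS.F_ne hF1).2.2.2
      have hp2 : TS.IsPath L I0 lam (Function.update μ ((i : ℕ) : Fin (L + 1)) t) :=
        TS.isPath_update hμ hi (by omega) (TS.F_ne hF1).1 (TS.Fbar_ne hF2).2.2.2
      rw [if_pos hp1, if_pos hp2]
      ring
    rw [finsum_congr hper]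
    have hfin : (Function.support fun t =>
        TS.F (μ ((i - 1 : ℕ) : Fin (L + 1))) (lam i) (lam (i + 1))
            (μ' ((i + 1 : ℕ) : Fin (L + 1))) t ν
          * TS.Fbar t (lam (i + 1)) (lam (i + 2)) (μ ((i + 2 : ℕ) : Fin (L + 1))) ν'
            (μ' ((i + 1 : ℕ) : Fin (L + 1)))
          * TS.F t (lam (i + 1)) (lam (i + 2)) (μ ((i + 2 : ℕ) : Fin (L + 1)))
            (μ ((i + 1 : ℕ) : Fin (L + 1))) ν'
          * TS.Fbar (μ ((i - 1 : ℕ) : Fin (L + 1))) (lam i) (lam (i + 1))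
            (μ ((i + 1 : ℕ) : Fin (L + 1))) ν t).Finite := by
      apply Set.Finite.subset (TS.N_finite (μ ((i - 1 : ℕ) : Fin (L + 1))) (lam i))
      intro t ht
      have ht' : TS.F (μ ((i - 1 : ℕ) : Fin (L + 1))) (lam i) (lam (i + 1))
            (μ' ((i + 1 : ℕ) : Fin (L + 1))) t ν
          * TS.Fbar t (lam (i + 1)) (lam (i + 2)) (μ ((i + 2 : ℕ) : Fin (L + 1))) ν'
            (μ' ((i + 1 : ℕ) : Fin (L + 1)))
          * TS.F t (lam (i + 1)) (lam (i + 2)) (μ ((i + 2 : ℕ) : Fin (L + 1)))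
            (μ ((i + 1 : ℕ) : Fin (L + 1))) ν'
          * TS.Fbar (μ ((i - 1 : ℕ) : Fin (L + 1))) (lam i) (lam (i + 1))
            (μ ((i + 1 : ℕ) : Fin (L + 1))) ν t ≠ 0 := ht
      have hF : TS.F (μ ((i - 1 : ℕ) : Fin (L + 1))) (lam i) (lam (i + 1))
          (μ' ((i + 1 : ℕ) : Fin (L + 1))) t ν ≠ 0 := fun h0 => ht' (by rw [h0]; ring)
      exact Function.mem_support.mpr (by rw [(TS.F_ne hF).1]; omega)
    rw [← mul_finsum' (fun t =>
        TS.F (μ ((i - 1 : ℕ) : Fin (L + 1))) (lam i) (lam (i + 1))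
            (μ' ((i + 1 : ℕ) : Fin (L + 1))) t ν
          * TS.Fbar t (lam (i + 1)) (lam (i + 2)) (μ ((i + 2 : ℕ) : Fin (L + 1))) ν'
            (μ' ((i + 1 : ℕ) : Fin (L + 1)))
          * TS.F t (lam (i + 1)) (lam (i + 2)) (μ ((i + 2 : ℕ) : Fin (L + 1)))
            (μ ((i + 1 : ℕ) : Fin (L + 1))) ν'
          * TS.Fbar (μ ((i - 1 : ℕ) : Fin (L + 1))) (lam i) (lam (i + 1))
            (μ ((i + 1 : ℕ) : Fin (L + 1))) ν t)
      (TS.Fbar (μ ((i - 1 : ℕ) : Fin (L + 1))) (lam i) (lam (i + 1))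
          (μ' ((i + 1 : ℕ) : Fin (L + 1))) ν (μ' ((i : ℕ) : Fin (L + 1)))
        * TS.F (μ ((i - 1 : ℕ) : Fin (L + 1))) (lam i) (lam (i + 1))
          (μ ((i + 1 : ℕ) : Fin (L + 1))) (μ ((i : ℕ) : Fin (L + 1))) ν) hfin]
    rw [TS.key (μ ((i - 1 : ℕ) : Fin (L + 1))) (lam i) (lam (i + 1)) (lam (i + 2))
      (μ ((i + 2 : ℕ) : Fin (L + 1))) (μ' ((i + 1 : ℕ) : Fin (L + 1)))
      (μ ((i + 1 : ℕ) : Fin (L + 1))) ν ν' φ huniq]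
    simp only [TensorSystem.pMat]
    rw [Finset.prod_eq_single_of_mem ((i + 1 : ℕ) : Fin (L + 1))
      (Finset.mem_erase.mpr ⟨d21, Finset.mem_univ _⟩)
      (fun j hj hji2 => if_pos (hC j (Finset.mem_erase.mp hj).1 hji2))]
    by_cases hbs : μ ((i + 1 : ℕ) : Fin (L + 1)) = μ' ((i + 1 : ℕ) : Fin (L + 1))
    · rw [if_pos hbs, ← hbs, hNbze]
      have A1 : (TS.N (μ ((i - 1 : ℕ) : Fin (L + 1))) ν (μ ((i + 1 : ℕ) : Fin (L + 1))) : R)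
          * TS.F (μ ((i - 1 : ℕ) : Fin (L + 1))) (lam i) (lam (i + 1))
            (μ ((i + 1 : ℕ) : Fin (L + 1))) (μ ((i : ℕ) : Fin (L + 1))) ν
          = TS.F (μ ((i - 1 : ℕ) : Fin (L + 1))) (lam i) (lam (i + 1))
            (μ ((i + 1 : ℕ) : Fin (L + 1))) (μ ((i : ℕ) : Fin (L + 1))) ν :=
        TensorSystem.absorb (fun hne => (TS.F_ne hne).2.2.1)
      calc _ = (TS.F (lam i) (lam (i + 1)) (lam (i + 2)) φ ν ν'
            * TS.Fbar (lam i) (lam (i + 1)) (lam (i + 2)) φ ν' ν)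
            * (TS.Fbar (μ ((i - 1 : ℕ) : Fin (L + 1))) (lam i) (lam (i + 1))
                (μ ((i + 1 : ℕ) : Fin (L + 1))) ν (μ' ((i : ℕ) : Fin (L + 1)))
              * ((TS.N (μ ((i - 1 : ℕ) : Fin (L + 1))) ν (μ ((i + 1 : ℕ) : Fin (L + 1))) : R)
                * TS.F (μ ((i - 1 : ℕ) : Fin (L + 1))) (lam i) (lam (i + 1))
                  (μ ((i + 1 : ℕ) : Fin (L + 1))) (μ ((i : ℕ) : Fin (L + 1))) ν)) := by
            push_cast
            ring
        _ = _ := by rw [A1]; push_cast; ring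
    · rw [if_neg hbs]
      ring
end
end

section
/- In a braided multiplicity-free semi-simple tensor system over a commutative ring R, fix λ ∈ I and the homogeneous tuple λ̃ = (λ,…,λ) of length L. The braiding operators R_i = Σ_{μ∈I} R^{λλ}_μ p_i^{(μ)} on H_{λ̃} are invertible with inverse R_i^{-1} = Σ_{μ∈I} R̄^{λλ}_μ p_i^{(μ)}, and they satisfy the braid relations: R_i R_{i+1} R_i = R_{i+1} R_i R_{i+1} for 1 ≤ i ≤ L−2, and R_i R_{i'} = R_{i'} R_i whenever 1 ≤ i ≤ i'−2 ≤ L−3. -/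
open scoped Classical

noncomputable section

/-- A braided multiplicity-free semi-simple tensor system: additionally `N` is
symmetric and there are braiding constants `Rm a b c = R^{ab}_c`,
`Rbarm a b c = R̄^{ab}_c` satisfying the hexagon relations. -/
structure BraidedTensorSystem (R : Type*) [CommRing R] (I : Type*) extends TensorSystem R I where
  N_symm : ∀ a b c, N a b c = N b a c
  Rm : I → I → I → R
  Rbarm : I → I → I → R
  Rm_vanish : ∀ a b c, N a b c = 0 → Rm a b c = 0
  Rbarm_vanish : ∀ a b c, N a b c = 0 → Rbarm a b c = 0
  hexagonR : ∀ a b c d e g,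
      Rm a c e * F a c b d e g * Rm b c g
        = ∑ᶠ f, F c a b d e f * Rm f c d * F a b c d f g
  hexagonRbar : ∀ a b c d e g,
      Rbarm a c e * F a c b d e g * Rbarm b c g
        = ∑ᶠ f, F c a b d e f * Rbarm f c d * F a b c d f g
  Rm_Rbarm : ∀ a b c, Rm a b c * Rbarm b a c = (N a b c : R)

namespace BraidedTensorSystem

variable {R : Type*} [CommRing R] {I : Type*}

/-- Matrix elements of the braiding operator `R_i = Σ_m R^{λλ}_m p_i^{(m)}`
on a homogeneous chain `λ̃ = (lam0, …, lam0)`. -/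
def Rmat (BTS : BraidedTensorSystem R I) (L : ℕ) (lam0 : I) (i : ℕ)
    (μ' μ : Fin (L + 1) → I) : R :=
  ∑ᶠ m : I, BTS.Rm lam0 lam0 m * BTS.toTensorSystem.pMat L (fun _ => lam0) i m μ' μ

/-- Matrix elements of the inverse braiding operator
`R_i⁻¹ = Σ_m R̄^{λλ}_m p_i^{(m)}`. -/
def RbarMat (BTS : BraidedTensorSystem R I) (L : ℕ) (lam0 : I) (i : ℕ)
    (μ' μ : Fin (L + 1) → I) : R :=
  ∑ᶠ m : I, BTS.Rbarm lam0 lam0 m * BTS.toTensorSystem.pMat L (fun _ => lam0) i m μ' μ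

end BraidedTensorSystem

namespace YBAux

open Function

variable {R : Type*} [CommRing R] {I : Type*}

/-- Kronecker delta with values in `R`. -/
noncomputable def dd (x y : I) : R := if x = y then 1 else 0

lemma dd_self (x : I) : (dd x x : R) = 1 := if_pos rfl

lemma dd_comm (x y : I) : (dd x y : R) = dd y x := by
  unfold dd; by_cases h : x = y <;> simp [h, Ne.symm, eq_comm]

lemma Nabsorb {n : ℕ} (hn : n ≤ 1) {x : R} (h0 : n = 0 → x = 0) : (n : R) * x = x := by
  have : n = 0 ∨ n = 1 := by omega
  rcases this with h | h
  · simp [h, h0 h]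
  · simp [h]

section TS

variable {T : TensorSystem R I}

lemma N01 (T : TensorSystem R I) (a b c : I) : T.N a b c = 0 ∨ T.N a b c = 1 := by
  have := T.N_le_one a b c; omega

lemma Ncast_sq (T : TensorSystem R I) (a b c : I) :
    ((T.N a b c : R)) * (T.N a b c : R) = (T.N a b c : R) := by
  rcases N01 T a b c with h | h <;> simp [h]

lemma Fz_ab {a b c d e f : I} (h : T.N a b e = 0) : T.F a b c d e f = 0 :=
  T.F_vanish a b c d e f (by simp [h])

lemma Fz_bc {a b c d e f : I} (h : T.N b c f = 0) : T.F a b c d e f = 0 :=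
  T.F_vanish a b c d e f (by simp [h])

lemma Fz_af {a b c d e f : I} (h : T.N a f d = 0) : T.F a b c d e f = 0 :=
  T.F_vanish a b c d e f (by simp [h])

lemma Fz_ec {a b c d e f : I} (h : T.N e c d = 0) : T.F a b c d e f = 0 :=
  T.F_vanish a b c d e f (by simp [h])

lemma Fbz_ab {a b c d e f : I} (h : T.N a b e = 0) : T.Fbar a b c d f e = 0 :=
  T.Fbar_vanish a b c d e f (by simp [h])

lemma Fbz_bc {a b c d e f : I} (h : T.N b c f = 0) : T.Fbar a b c d f e = 0 :=
  T.Fbar_vanish a b c d e f (by simp [h])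

lemma Fbz_af {a b c d e f : I} (h : T.N a f d = 0) : T.Fbar a b c d f e = 0 :=
  T.Fbar_vanish a b c d e f (by simp [h])

lemma Fbz_ec {a b c d e f : I} (h : T.N e c d = 0) : T.Fbar a b c d f e = 0 :=
  T.Fbar_vanish a b c d e f (by simp [h])

/-- The (finite) support of the fusion numbers `N a b ·` as a `Finset`. -/
noncomputable def NS (T : TensorSystem R I) (a b : I) : Finset I := (T.N_finite a b).toFinset

lemma mem_NS {T : TensorSystem R I} {a b c : I} : c ∈ NS T a b ↔ T.N a b c ≠ 0 :=
  (T.N_finite a b).mem_toFinset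

lemma F_Fbar_fin (T : TensorSystem R I) (a b c d e e' : I) {s : Finset I}
    (hs : ∀ f, T.N b c f ≠ 0 → f ∈ s) :
    ∑ f ∈ s, T.F a b c d e f * T.Fbar a b c d f e'
      = dd e e' * (T.N a b e : R) * (T.N e c d : R) := by
  have hsupp : Function.support (fun f => T.F a b c d e f * T.Fbar a b c d f e') ⊆ (s : Set I) := by
    intro f hf
    by_contra hfs
    have hN : T.N b c f = 0 := by
      by_contra hN; exact hfs (hs f hN)
    exact hf (by simp [Fz_bc hN])
  calc ∑ f ∈ s, T.F a b c d e f * T.Fbar a b c d f e'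
      = ∑ᶠ f, T.F a b c d e f * T.Fbar a b c d f e' :=
        (finsum_eq_sum_of_support_subset _ hsupp).symm
    _ = _ := by rw [T.F_Fbar a b c d e e']; rfl

lemma Fbar_F_fin (T : TensorSystem R I) (a b c d f f' : I) {s : Finset I}
    (hs : ∀ e, T.N a b e ≠ 0 → e ∈ s) :
    ∑ e ∈ s, T.Fbar a b c d f' e * T.F a b c d e f
      = dd f f' * (T.N b c f : R) * (T.N a f d : R) := by
  have hsupp : Function.support (fun e => T.Fbar a b c d f' e * T.F a b c d e f) ⊆ (s : Set I) := by
    intro e he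
    by_contra hes
    have hN : T.N a b e = 0 := by
      by_contra hN; exact hes (hs e hN)
    exact he (by simp [Fz_ab hN])
  calc ∑ e ∈ s, T.Fbar a b c d f' e * T.F a b c d e f
      = ∑ᶠ e, T.Fbar a b c d f' e * T.F a b c d e f :=
        (finsum_eq_sum_of_support_subset _ hsupp).symm
    _ = _ := by rw [T.Fbar_F a b c d f f']; rfl

lemma pentagon_fin (T : TensorSystem R I) (a b c d e f g k l : I) {s : Finset I}
    (hs : ∀ h, T.N b c h ≠ 0 → h ∈ s) :
    ∑ h ∈ s, T.F a b c g f h * T.F a h d e g k * T.F b c d k h l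
      = T.F f c d e g l * T.F a b l e f k := by
  have hsupp : Function.support (fun h => T.F a b c g f h * T.F a h d e g k * T.F b c d k h l)
      ⊆ (s : Set I) := by
    intro h hh
    by_contra hhs
    have hN : T.N b c h = 0 := by
      by_contra hN; exact hhs (hs h hN)
    exact hh (by simp [Fz_bc (c := c) hN])
  calc ∑ h ∈ s, T.F a b c g f h * T.F a h d e g k * T.F b c d k h l
      = ∑ᶠ h, T.F a b c g f h * T.F a h d e g k * T.F b c d k h l :=
        (finsum_eq_sum_of_support_subset _ hsupp).symm
    _ = _ := T.pentagon a b c d e f g k l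

lemma exists_mid (T : TensorSystem R I) {a l x y : I}
    (hx : T.N a l x ≠ 0) (hxy : T.N x l y ≠ 0) :
    ∃ f, T.N l l f ≠ 0 ∧ T.N a f y ≠ 0 := by
  have h := T.N_assoc a l l y
  by_contra hno
  push_neg at hno
  have hR : (∑ᶠ e, T.N a e y * T.N l l e) = 0 := by
    apply finsum_eq_zero_of_forall_eq_zero
    intro e
    by_cases h1 : T.N l l e = 0
    · simp [h1]
    · simp [hno e h1]
  rw [hR] at h
  have hsupp : Function.support (fun e => T.N a l e * T.N e l y) ⊆ ((NS T a l : Finset I) : Set I) := by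
    intro e he
    rw [Finset.mem_coe, mem_NS]
    intro h0
    exact he (by simp [h0])
  rw [finsum_eq_sum_of_support_subset _ hsupp] at h
  have := Finset.sum_eq_zero_iff.mp h x (mem_NS.mpr hx)
  exact (Nat.mul_ne_zero hx hxy) this

end TS

end YBAux
namespace YBAux

open Function

variable {R : Type*} [CommRing R] {I : Type*}

section Braided

variable (B : BraidedTensorSystem R I) (l : I)

lemma hexagon_fin (a b c d e g : I) {s : Finset I}
    (hs : ∀ f, B.N a b f ≠ 0 → f ∈ s) :
    ∑ f ∈ s, B.F c a b d e f * B.Rm f c d * B.F a b c d f g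
      = B.Rm a c e * B.F a c b d e g * B.Rm b c g := by
  have hsupp : Function.support (fun f => B.F c a b d e f * B.Rm f c d * B.F a b c d f g)
      ⊆ (s : Set I) := by
    intro f hf
    by_contra hfs
    have hN : B.N a b f = 0 := by
      by_contra hN; exact hfs (hs f hN)
    exact hf (by simp [Fz_ab (e := f) hN])
  calc ∑ f ∈ s, B.F c a b d e f * B.Rm f c d * B.F a b c d f g
      = ∑ᶠ f, B.F c a b d e f * B.Rm f c d * B.F a b c d f g :=
        (finsum_eq_sum_of_support_subset _ hsupp).symm
    _ = _ := (B.hexagonR a b c d e g).symm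

/-- Local one-site operator with coefficient function `rr`:
`AW rr a y x' x = Σ_m rr m ⋅ (F̄^{aλλ}_y)^m_{x'} (F^{aλλ}_y)^x_m`. -/
noncomputable def AW (rr : I → R) (a y x' x : I) : R :=
  ∑ᶠ m, rr m * B.Fbar a l l y m x' * B.F a l l y x m

noncomputable def SL : Finset I := NS B.toTensorSystem l l

noncomputable def SX (a : I) : Finset I := NS B.toTensorSystem a l

noncomputable def SY (a : I) : Finset I := (SL B l).biUnion (fun f => NS B.toTensorSystem a f)

noncomputable def TT : Finset I := (SL B l).biUnion (fun f => NS B.toTensorSystem f l)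

variable {B l}

lemma mem_SL {m : I} : m ∈ SL B l ↔ B.N l l m ≠ 0 := mem_NS

lemma mem_SX {a x : I} : x ∈ SX B l a ↔ B.N a l x ≠ 0 := mem_NS

lemma mem_SY {a y : I} : y ∈ SY B l a ↔ ∃ f, B.N l l f ≠ 0 ∧ B.N a f y ≠ 0 := by
  simp [SY, Finset.mem_biUnion, mem_SL, mem_NS (T := B.toTensorSystem)]

lemma mem_TT {t : I} : t ∈ TT B l ↔ ∃ f, B.N l l f ≠ 0 ∧ B.N f l t ≠ 0 := by
  simp [TT, Finset.mem_biUnion, mem_SL, mem_NS (T := B.toTensorSystem)]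

lemma AW_eq_sum {rr : I → R} (hrr : ∀ m, B.N l l m = 0 → rr m = 0) (a y x' x : I) :
    AW B l rr a y x' x = ∑ m ∈ SL B l, rr m * B.Fbar a l l y m x' * B.F a l l y x m := by
  apply finsum_eq_sum_of_support_subset
  intro m hm
  rw [Finset.mem_coe, mem_SL]
  intro h0
  exact hm (by simp [hrr m h0])

lemma AW_zero_row {rr : I → R} {a y x' x : I} (h : B.N a l x' = 0) :
    AW B l rr a y x' x = 0 := by
  apply finsum_eq_zero_of_forall_eq_zero
  intro m; simp [Fbz_ab (e := x') h]

lemma AW_zero_rowy {rr : I → R} {a y x' x : I} (h : B.N x' l y = 0) :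
    AW B l rr a y x' x = 0 := by
  apply finsum_eq_zero_of_forall_eq_zero
  intro m; simp [Fbz_ec (e := x') h]

lemma AW_zero_col {rr : I → R} {a y x' x : I} (h : B.N a l x = 0) :
    AW B l rr a y x' x = 0 := by
  apply finsum_eq_zero_of_forall_eq_zero
  intro m; simp [Fz_ab (e := x) h]

lemma AW_zero_coly {rr : I → R} {a y x' x : I} (h : B.N x l y = 0) :
    AW B l rr a y x' x = 0 := by
  apply finsum_eq_zero_of_forall_eq_zero
  intro m; simp [Fz_ec (e := x) h]

/-- Inverse relation: the `rr`- and `rb`-operators compose to a delta. -/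
lemma L1 {rr rb : I → R} (hrr : ∀ m, B.N l l m = 0 → rr m = 0)
    (hrb : ∀ m, B.N l l m = 0 → rb m = 0)
    (hprod : ∀ m, rr m * rb m = (B.N l l m : R)) (a y x' x : I) :
    ∑ᶠ z, AW B l rr a y x' z * AW B l rb a y z x
      = dd x x' * (B.N a l x : R) * (B.N x l y : R) := by
  have hsupp : Function.support (fun z => AW B l rr a y x' z * AW B l rb a y z x)
      ⊆ ((SX B l a : Finset I) : Set I) := by
    intro z hz
    rw [Finset.mem_coe, mem_SX]
    intro h0
    exact hz (by simp [AW_zero_col (rr := rr) h0])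
  rw [finsum_eq_sum_of_support_subset _ hsupp]
  calc
    ∑ z ∈ SX B l a, AW B l rr a y x' z * AW B l rb a y z x
      = ∑ z ∈ SX B l a, ∑ m ∈ SL B l, ∑ m' ∈ SL B l,
          (rr m * B.Fbar a l l y m x' * B.F a l l y z m) *
          (rb m' * B.Fbar a l l y m' z * B.F a l l y x m') := by
        refine Finset.sum_congr rfl (fun z _ => ?_)
        rw [AW_eq_sum hrr, AW_eq_sum hrb, Finset.sum_mul_sum]
    _ = ∑ m ∈ SL B l, ∑ m' ∈ SL B l,
          (rr m * B.Fbar a l l y m x' * rb m' * B.F a l l y x m') *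
          (∑ z ∈ SX B l a, B.Fbar a l l y m' z * B.F a l l y z m) := by
        rw [Finset.sum_comm]
        refine Finset.sum_congr rfl (fun m _ => ?_)
        rw [Finset.sum_comm]
        refine Finset.sum_congr rfl (fun m' _ => ?_)
        rw [Finset.mul_sum]
        refine Finset.sum_congr rfl (fun z _ => ?_)
        ring
    _ = ∑ m ∈ SL B l, ∑ m' ∈ SL B l,
          (rr m * B.Fbar a l l y m x' * rb m' * B.F a l l y x m') *
          (dd m m' * (B.N l l m : R) * (B.N a m y : R)) := by
        refine Finset.sum_congr rfl (fun m _ => Finset.sum_congr rfl (fun m' _ => ?_))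
        rw [Fbar_F_fin B.toTensorSystem a l l y m m' (fun e he => mem_SX.mpr he)]
    _ = ∑ m ∈ SL B l, rr m * rb m * (B.N l l m : R) * (B.N a m y : R) *
          (B.Fbar a l l y m x' * B.F a l l y x m) := by
        refine Finset.sum_congr rfl (fun m hm => ?_)
        rw [Finset.sum_eq_single m]
        · unfold dd; rw [if_pos rfl]; ring
        · intro m' _ hne
          unfold dd; rw [if_neg (Ne.symm hne)]; ring
        · intro hm'; exact absurd hm hm'
    _ = ∑ m ∈ SL B l, B.F a l l y x m * B.Fbar a l l y m x' := by
        refine Finset.sum_congr rfl (fun m hm => ?_)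
        rw [hprod m]
        rcases N01 B.toTensorSystem l l m with h0 | h1
        · exact absurd h0 (mem_SL.mp hm)
        · rcases N01 B.toTensorSystem a m y with h0 | h1'
          · simp [h0, Fz_af (f := m) h0]
          · simp [h1, h1']; ring
    _ = dd x x' * (B.N a l x : R) * (B.N x l y : R) := by
        rw [F_Fbar_fin B.toTensorSystem a l l y x x' (fun f hf => mem_SL.mpr hf)]

end Braided

end YBAux
namespace YBAux

open Function

variable {R : Type*} [CommRing R] {I : Type*}

section YBE

variable (B : BraidedTensorSystem R I) (l : I)

/-- ket-side fusion-tree transformation matrix entries (`W`). -/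
noncomputable def Wp (a d v t x y : I) : R := B.F a l l y x v * B.F a v l d y t

/-- bra-side fusion-tree transformation matrix entries (`W̄`). -/
noncomputable def Wbp (a d f t x y : I) : R := B.Fbar a f l d t y * B.Fbar a l l y f x

noncomputable def rho (a d v t : I) : R :=
  (B.N l l v : R) * (B.N v l t : R) * (B.N a t d : R)

/-- the local braiding matrix conjugated into the `(λλ)λ` tree basis. -/
noncomputable def Kmat (t f v : I) : R :=
  ∑ g ∈ SL B l, B.Fbar l l l t g f * B.Rm l l g * B.F l l l t v g

/-- the diagonal local braiding matrix in the `(λλ)λ` tree basis. -/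
noncomputable def Dmat (t f v : I) : R := dd f v * B.Rm l l f

noncomputable def Conj (a d : I) (M : I → I → I → R) (x₁ y₁ x₂ y₂ : I) : R :=
  ∑ w ∈ (TT B l) ×ˢ ((SL B l) ×ˢ (SL B l)),
    Wbp B l a d w.2.1 w.1 x₁ y₁ * M w.1 w.2.1 w.2.2 * Wp B l a d w.2.2 w.1 x₂ y₂

noncomputable def Mcomp (a d : I) (M M' : I → I → I → R) (t f v : I) : R :=
  ∑ u ∈ SL B l, M t f u * rho B l a d u t * M' t u v

variable {B l}

/-- pentagon instance specialised to `a ⊗ λ ⊗ λ ⊗ λ → d`. -/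
lemma P5 (a d x y t g : I) {s : Finset I} (hs : ∀ h, B.N l l h ≠ 0 → h ∈ s) :
    ∑ v ∈ s, B.F a l l y x v * B.F a v l d y t * B.F l l l t v g
      = B.F x l l d y g * B.F a l g d x t :=
  pentagon_fin B.toTensorSystem a l l l d x y t g hs

/-- contraction of a ket-side `W` against a bra-side `W̄` over the path indices. -/
lemma WWbar (a d : I) {v : I} (hv : v ∈ SL B l) (u t t' : I) :
    ∑ p ∈ (SX B l a) ×ˢ (SY B l a),
        Wp B l a d v t p.1 p.2 * Wbp B l a d u t' p.1 p.2
      = dd u v * dd t' t * rho B l a d v t := by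
  rw [Finset.sum_product, Finset.sum_comm]
  have step1 : ∀ y, ∑ x ∈ SX B l a, Wp B l a d v t x y * Wbp B l a d u t' x y
      = (B.F a v l d y t * B.Fbar a u l d t' y) *
        (dd v u * (B.N l l v : R) * (B.N a v y : R)) := by
    intro y
    have : ∀ x, Wp B l a d v t x y * Wbp B l a d u t' x y
        = (B.F a v l d y t * B.Fbar a u l d t' y) * (B.Fbar a l l y u x * B.F a l l y x v) := by
      intro x; unfold Wp Wbp; ring
    rw [Finset.sum_congr rfl (fun x _ => this x), ← Finset.mul_sum,
      Fbar_F_fin B.toTensorSystem a l l y v u (fun e he => mem_SX.mpr he)]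
  rw [Finset.sum_congr rfl (fun y _ => step1 y)]
  rcases eq_or_ne v u with rfl | hne
  · have habs : ∀ y, (B.F a v l d y t * B.Fbar a v l d t' y) *
        (dd v v * (B.N l l v : R) * (B.N a v y : R))
        = (B.N l l v : R) * (B.Fbar a v l d t' y * B.F a v l d y t) := by
      intro y
      rw [dd_self]
      rcases N01 B.toTensorSystem a v y with h0 | h1
      · simp [h0, Fz_ab (e := y) h0]
      · rw [h1]; push_cast; ring
    rw [Finset.sum_congr rfl (fun y _ => habs y), ← Finset.mul_sum,
      Fbar_F_fin B.toTensorSystem a v l d t t'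
        (fun e he => mem_SY.mpr ⟨v, mem_SL.mp hv, he⟩)]
    rw [dd_self]
    unfold rho
    rw [dd_comm]
    ring
  · have hz : ∀ y, (B.F a v l d y t * B.Fbar a u l d t' y) *
        (dd v u * (B.N l l v : R) * (B.N a v y : R)) = 0 := by
      intro y; unfold dd; rw [if_neg hne]; ring
    rw [Finset.sum_congr rfl (fun y _ => hz y), Finset.sum_const, smul_zero]
    unfold dd
    rw [if_neg (Ne.symm hne)]
    ring

/-- contraction of two ket-side `V` transformations against bra-side ones. -/
lemma VVbar (a d x₁ y₁ x' y' : I) :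
    ∑ g' ∈ SL B l, ∑ t' ∈ NS B.toTensorSystem l g',
        (B.F x₁ l l d y₁ g' * B.F a l g' d x₁ t') *
        (B.Fbar a l g' d t' x' * B.Fbar x' l l d g' y')
      = dd x₁ x' * dd y₁ y' *
          ((B.N a l x₁ : R) * (B.N x₁ l y₁ : R) * (B.N y₁ l d : R)) := by
  have step1 : ∀ g', ∑ t' ∈ NS B.toTensorSystem l g',
      (B.F x₁ l l d y₁ g' * B.F a l g' d x₁ t') *
      (B.Fbar a l g' d t' x' * B.Fbar x' l l d g' y')
      = (B.F x₁ l l d y₁ g' * B.Fbar x' l l d g' y') *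
        (dd x₁ x' * (B.N a l x₁ : R) * (B.N x₁ g' d : R)) := by
    intro g'
    have : ∀ t', (B.F x₁ l l d y₁ g' * B.F a l g' d x₁ t') *
        (B.Fbar a l g' d t' x' * B.Fbar x' l l d g' y')
        = (B.F x₁ l l d y₁ g' * B.Fbar x' l l d g' y') *
          (B.F a l g' d x₁ t' * B.Fbar a l g' d t' x') := by
      intro t'; ring
    rw [Finset.sum_congr rfl (fun t' _ => this t'), ← Finset.mul_sum,
      F_Fbar_fin B.toTensorSystem a l g' d x₁ x' (fun f hf => mem_NS.mpr hf)]
  rw [Finset.sum_congr rfl (fun g' _ => step1 g')]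
  rcases eq_or_ne x₁ x' with rfl | hne
  · have habs : ∀ g', (B.F x₁ l l d y₁ g' * B.Fbar x₁ l l d g' y') *
        (dd x₁ x₁ * (B.N a l x₁ : R) * (B.N x₁ g' d : R))
        = (B.N a l x₁ : R) * (B.F x₁ l l d y₁ g' * B.Fbar x₁ l l d g' y') := by
      intro g'
      rw [dd_self]
      rcases N01 B.toTensorSystem x₁ g' d with h0 | h1
      · simp [h0, Fz_af (f := g') h0]
      · rw [h1]; push_cast; ring
    rw [Finset.sum_congr rfl (fun g' _ => habs g'), ← Finset.mul_sum,
      F_Fbar_fin B.toTensorSystem x₁ l l d y₁ y' (fun f hf => mem_SL.mpr hf)]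
    rw [dd_self]
    ring
  · have hz : ∀ g', (B.F x₁ l l d y₁ g' * B.Fbar x' l l d g' y') *
        (dd x₁ x' * (B.N a l x₁ : R) * (B.N x₁ g' d : R)) = 0 := by
      intro g'; unfold dd; rw [if_neg hne]; ring
    rw [Finset.sum_congr rfl (fun g' _ => hz g'), Finset.sum_const, smul_zero]
    unfold dd
    rw [if_neg hne]
    ring

end YBE

end YBAux
namespace YBAux

open Function

variable {R : Type*} [CommRing R] {I : Type*}

section YBE2

variable {B : BraidedTensorSystem R I} {l : I}

/-- candidate for the bra-side `V̄` transformation, written in terms of `W̄` and `F̄^{λλλ}`. -/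
noncomputable def Sfun (B : BraidedTensorSystem R I) (l a d g t x y : I) : R :=
  ∑ f ∈ SL B l, B.Fbar l l l t g f * Wbp B l a d f t x y

lemma SV (a d g t g' t' : I) :
    ∑ p ∈ (SX B l a) ×ˢ (SY B l a),
        Sfun B l a d g t p.1 p.2 * (B.F p.1 l l d p.2 g' * B.F a l g' d p.1 t')
      = dd g' g * dd t' t *
          ((B.N l l g' : R) * (B.N l g' t : R) * (B.N a t d : R)) := by
  have step1 : ∀ p : I × I, Sfun B l a d g t p.1 p.2 * (B.F p.1 l l d p.2 g' * B.F a l g' d p.1 t')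
      = ∑ f ∈ SL B l, ∑ f' ∈ SL B l,
          (B.Fbar l l l t g f * B.F l l l t' f' g') *
          (Wp B l a d f' t' p.1 p.2 * Wbp B l a d f t p.1 p.2) := by
    intro p
    unfold Sfun
    rw [← P5 a d p.1 p.2 t' g' (fun h hh => mem_SL.mpr hh), Finset.sum_mul_sum]
    refine Finset.sum_congr rfl (fun f _ => Finset.sum_congr rfl (fun f' _ => ?_))
    unfold Wp Wbp; ring
  rw [Finset.sum_congr rfl (fun p _ => step1 p), Finset.sum_comm]
  have step2 : ∀ f ∈ SL B l, (∑ p ∈ (SX B l a) ×ˢ (SY B l a), ∑ f' ∈ SL B l,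
      (B.Fbar l l l t g f * B.F l l l t' f' g') *
      (Wp B l a d f' t' p.1 p.2 * Wbp B l a d f t p.1 p.2))
      = B.Fbar l l l t g f * B.F l l l t' f g' * (dd t t' * rho B l a d f t') := by
    intro f hf
    rw [Finset.sum_comm]
    have inner : ∀ f' ∈ SL B l, (∑ p ∈ (SX B l a) ×ˢ (SY B l a),
        (B.Fbar l l l t g f * B.F l l l t' f' g') *
        (Wp B l a d f' t' p.1 p.2 * Wbp B l a d f t p.1 p.2))
        = (B.Fbar l l l t g f * B.F l l l t' f' g') * (dd f f' * dd t t' * rho B l a d f' t') := by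
      intro f' hf'
      rw [← Finset.mul_sum, WWbar a d hf' f t' t]
    rw [Finset.sum_congr rfl inner, Finset.sum_eq_single f]
    · rw [dd_self]; ring
    · intro f' _ hne
      unfold dd; rw [if_neg (Ne.symm hne)]; ring
    · intro hf'; exact absurd hf hf'
  rw [Finset.sum_congr rfl step2]
  rcases eq_or_ne t t' with rfl | hne
  · have habs : ∀ f, B.Fbar l l l t g f * B.F l l l t f g' * (dd t t * rho B l a d f t)
        = (B.N a t d : R) * (B.Fbar l l l t g f * B.F l l l t f g') := by
      intro f
      rw [dd_self]
      unfold rho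
      rcases N01 B.toTensorSystem l l f with h0 | h1
      · simp [h0, Fz_ab (e := f) h0]
      · rcases N01 B.toTensorSystem f l t with h0' | h1'
        · simp [h0', Fz_ec (e := f) h0']
        · rw [h1, h1']; push_cast; ring
    rw [Finset.sum_congr rfl (fun f _ => habs f), ← Finset.mul_sum,
      Fbar_F_fin B.toTensorSystem l l l t g' g (fun e he => mem_SL.mpr he)]
    rw [dd_self]
    ring
  · have hz : ∀ f, B.Fbar l l l t g f * B.F l l l t' f g' * (dd t t' * rho B l a d f t') = 0 := by
      intro f; unfold dd; rw [if_neg hne]; ring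
    rw [Finset.sum_congr rfl (fun f _ => hz f), Finset.sum_const, smul_zero]
    unfold dd
    rw [if_neg (Ne.symm hne)]
    ring

lemma SeqVbar (a d x' y' : I) (hx' : B.N a l x' ≠ 0) (hx'y' : B.N x' l y' ≠ 0)
    (hy'd : B.N y' l d ≠ 0) (g t : I) :
    Sfun B l a d g t x' y' = B.Fbar a l g d t x' * B.Fbar x' l l d g y' := by
  by_cases hg : B.N l l g = 0
  · rw [Fbz_bc (f := g) hg]
    unfold Sfun
    rw [Finset.sum_eq_zero (fun f _ => by rw [Fbz_bc (f := g) hg]; ring)]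
    ring
  by_cases hgt : B.N l g t = 0
  · rw [Fbz_bc (f := t) hgt]
    unfold Sfun
    rw [Finset.sum_eq_zero (fun f _ => by rw [Fbz_af (f := g) hgt]; ring)]
    ring
  -- main case
  have hgSL : g ∈ SL B l := mem_SL.mpr hg
  have htNS : t ∈ NS B.toTensorSystem l g := mem_NS.mpr hgt
  have key : ∑ p ∈ (SX B l a) ×ˢ (SY B l a), Sfun B l a d g t p.1 p.2 *
      (∑ g' ∈ SL B l, ∑ t' ∈ NS B.toTensorSystem l g',
        (B.F p.1 l l d p.2 g' * B.F a l g' d p.1 t') *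
        (B.Fbar a l g' d t' x' * B.Fbar x' l l d g' y'))
      = Sfun B l a d g t x' y' := by
    have inner : ∀ p : I × I, Sfun B l a d g t p.1 p.2 *
        (∑ g' ∈ SL B l, ∑ t' ∈ NS B.toTensorSystem l g',
          (B.F p.1 l l d p.2 g' * B.F a l g' d p.1 t') *
          (B.Fbar a l g' d t' x' * B.Fbar x' l l d g' y'))
        = Sfun B l a d g t p.1 p.2 * (dd p.1 x' * dd p.2 y' *
            ((B.N a l p.1 : R) * (B.N p.1 l p.2 : R) * (B.N p.2 l d : R))) := by
      intro p; rw [VVbar]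
    have hmem : (x', y') ∈ (SX B l a) ×ˢ (SY B l a) :=
      Finset.mem_product.mpr ⟨mem_SX.mpr hx',
        mem_SY.mpr (exists_mid B.toTensorSystem hx' hx'y')⟩
    have hzero : ∀ p ∈ (SX B l a) ×ˢ (SY B l a), p ≠ (x', y') →
        Sfun B l a d g t p.1 p.2 * (dd p.1 x' * dd p.2 y' *
          ((B.N a l p.1 : R) * (B.N p.1 l p.2 : R) * (B.N p.2 l d : R))) = 0 := by
      intro p _ hne
      have : p.1 ≠ x' ∨ p.2 ≠ y' := by
        by_contra hc; push_neg at hc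
        exact hne (Prod.ext hc.1 hc.2)
      rcases this with h | h
      · unfold dd; rw [if_neg h]; ring
      · unfold dd
        rcases eq_or_ne p.1 x' with h1 | h1
        · rw [if_neg h]; ring
        · rw [if_neg h1]; ring
    rw [Finset.sum_congr rfl (fun p _ => inner p),
      Finset.sum_eq_single_of_mem (x', y') hmem hzero]
    have e1 : B.N a l x' = 1 := (N01 B.toTensorSystem a l x').resolve_left hx'
    have e2 : B.N x' l y' = 1 := (N01 B.toTensorSystem x' l y').resolve_left hx'y'
    have e3 : B.N y' l d = 1 := (N01 B.toTensorSystem y' l d).resolve_left hy'd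
    simp only [dd_self, e1, e2, e3]
    push_cast; ring
  -- now compute the same double sum the other way
  have key2 : ∑ p ∈ (SX B l a) ×ˢ (SY B l a), Sfun B l a d g t p.1 p.2 *
      (∑ g' ∈ SL B l, ∑ t' ∈ NS B.toTensorSystem l g',
        (B.F p.1 l l d p.2 g' * B.F a l g' d p.1 t') *
        (B.Fbar a l g' d t' x' * B.Fbar x' l l d g' y'))
      = B.Fbar a l g d t x' * B.Fbar x' l l d g y' := by
    have swap : ∑ p ∈ (SX B l a) ×ˢ (SY B l a), Sfun B l a d g t p.1 p.2 *
        (∑ g' ∈ SL B l, ∑ t' ∈ NS B.toTensorSystem l g',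
          (B.F p.1 l l d p.2 g' * B.F a l g' d p.1 t') *
          (B.Fbar a l g' d t' x' * B.Fbar x' l l d g' y'))
        = ∑ g' ∈ SL B l, ∑ t' ∈ NS B.toTensorSystem l g',
            (∑ p ∈ (SX B l a) ×ˢ (SY B l a),
              Sfun B l a d g t p.1 p.2 * (B.F p.1 l l d p.2 g' * B.F a l g' d p.1 t')) *
            (B.Fbar a l g' d t' x' * B.Fbar x' l l d g' y') := by
      have st1 : ∀ p : I × I, Sfun B l a d g t p.1 p.2 *
          (∑ g' ∈ SL B l, ∑ t' ∈ NS B.toTensorSystem l g',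
            (B.F p.1 l l d p.2 g' * B.F a l g' d p.1 t') *
            (B.Fbar a l g' d t' x' * B.Fbar x' l l d g' y'))
          = ∑ g' ∈ SL B l, ∑ t' ∈ NS B.toTensorSystem l g',
              (Sfun B l a d g t p.1 p.2 * (B.F p.1 l l d p.2 g' * B.F a l g' d p.1 t')) *
              (B.Fbar a l g' d t' x' * B.Fbar x' l l d g' y') := by
        intro p
        rw [Finset.mul_sum]
        refine Finset.sum_congr rfl (fun g' _ => ?_)
        rw [Finset.mul_sum]
        refine Finset.sum_congr rfl (fun t' _ => ?_)
        ring
      rw [Finset.sum_congr rfl (fun p _ => st1 p), Finset.sum_comm]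
      refine Finset.sum_congr rfl (fun g' _ => ?_)
      rw [Finset.sum_comm]
      refine Finset.sum_congr rfl (fun t' _ => ?_)
      rw [Finset.sum_mul]
    rw [swap]
    have inner2 : ∀ g' ∈ SL B l, (∑ t' ∈ NS B.toTensorSystem l g',
        (∑ p ∈ (SX B l a) ×ˢ (SY B l a),
          Sfun B l a d g t p.1 p.2 * (B.F p.1 l l d p.2 g' * B.F a l g' d p.1 t')) *
        (B.Fbar a l g' d t' x' * B.Fbar x' l l d g' y'))
        = ∑ t' ∈ NS B.toTensorSystem l g',
            (dd g' g * dd t' t * ((B.N l l g' : R) * (B.N l g' t : R) * (B.N a t d : R))) *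
            (B.Fbar a l g' d t' x' * B.Fbar x' l l d g' y') := by
      intro g' _
      exact Finset.sum_congr rfl (fun t' _ => by rw [SV])
    have hz1 : ∀ g' ∈ SL B l, g' ≠ g → (∑ t' ∈ NS B.toTensorSystem l g',
        (dd g' g * dd t' t * ((B.N l l g' : R) * (B.N l g' t : R) * (B.N a t d : R))) *
        (B.Fbar a l g' d t' x' * B.Fbar x' l l d g' y')) = 0 := by
      intro g' _ hne
      refine Finset.sum_eq_zero (fun t' _ => ?_)
      unfold dd; rw [if_neg hne]; ring
    have hz2 : ∀ t' ∈ NS B.toTensorSystem l g, t' ≠ t →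
        (dd g g * dd t' t * ((B.N l l g : R) * (B.N l g t : R) * (B.N a t d : R))) *
        (B.Fbar a l g d t' x' * B.Fbar x' l l d g y') = 0 := by
      intro t' _ hne
      unfold dd
      rcases eq_or_ne g g with h1 | h1
      · rw [if_neg hne]; ring
      · exact absurd rfl h1
    rw [Finset.sum_congr rfl inner2, Finset.sum_eq_single_of_mem g hgSL hz1,
      Finset.sum_eq_single_of_mem t htNS hz2]
    rw [dd_self, dd_self]
    have e1 : B.N l l g = 1 := (N01 B.toTensorSystem l l g).resolve_left hg
    have e2 : B.N l g t = 1 := (N01 B.toTensorSystem l g t).resolve_left hgt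
    rcases N01 B.toTensorSystem a t d with h0 | h1
    · rw [Fbz_af (f := t) h0, h0]; push_cast; ring
    · rw [e1, e2, h1]; push_cast; ring
  rw [← key, key2]

end YBE2

end YBAux
namespace YBAux

open Function

variable {R : Type*} [CommRing R] {I : Type*}

section YBE3

variable {B : BraidedTensorSystem R I} {l : I}

/-- The local braiding operator `R_loc` with coefficients `R^{λλ}`. -/
noncomputable def Aq (B : BraidedTensorSystem R I) (l a y x' x : I) : R :=
  AW B l (B.Rm l l) a y x' x

lemma Aq_eq_sum (a y x' x : I) :
    Aq B l a y x' x = ∑ m ∈ SL B l, B.Rm l l m * B.Fbar a l l y m x' * B.F a l l y x m :=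
  AW_eq_sum (fun m h => B.Rm_vanish l l m h) a y x' x

lemma Conj_expand (a d : I) (M : I → I → I → R) (x₁ y₁ x₂ y₂ : I) :
    Conj B l a d M x₁ y₁ x₂ y₂
      = ∑ t ∈ TT B l, ∑ f ∈ SL B l, ∑ v ∈ SL B l,
          Wbp B l a d f t x₁ y₁ * M t f v * Wp B l a d v t x₂ y₂ := by
  unfold Conj
  rw [Finset.sum_product]
  refine Finset.sum_congr rfl (fun t _ => ?_)
  rw [Finset.sum_product]

lemma ConjD_eq (a d x₁ y₁ x₂ y₂ : I) :
    Conj B l a d (Dmat B l) x₁ y₁ x₂ y₂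
      = dd y₁ y₂ * (B.N y₂ l d : R) * Aq B l a y₂ x₁ x₂ := by
  rw [Conj_expand]
  have st1 : ∀ t ∈ TT B l, ∀ f ∈ SL B l,
      (∑ v ∈ SL B l, Wbp B l a d f t x₁ y₁ * Dmat B l t f v * Wp B l a d v t x₂ y₂)
      = Wbp B l a d f t x₁ y₁ * B.Rm l l f * Wp B l a d f t x₂ y₂ := by
    intro t _ f hf
    have hz : ∀ v ∈ SL B l, v ≠ f →
        Wbp B l a d f t x₁ y₁ * Dmat B l t f v * Wp B l a d v t x₂ y₂ = 0 := by
      intro v _ hne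
      unfold Dmat dd
      rw [if_neg (Ne.symm hne)]
      ring
    rw [Finset.sum_eq_single_of_mem f hf hz]
    unfold Dmat
    rw [dd_self]
    ring
  rw [Finset.sum_congr rfl (fun t ht => Finset.sum_congr rfl (fun f hf => st1 t ht f hf)),
    Finset.sum_comm]
  have st2 : ∀ f ∈ SL B l,
      (∑ t ∈ TT B l, Wbp B l a d f t x₁ y₁ * B.Rm l l f * Wp B l a d f t x₂ y₂)
      = (B.Fbar a l l y₁ f x₁ * B.Rm l l f * B.F a l l y₂ x₂ f) *
          (dd y₂ y₁ * (B.N a f y₂ : R) * (B.N y₂ l d : R)) := by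
    intro f hf
    have reb : ∀ t, Wbp B l a d f t x₁ y₁ * B.Rm l l f * Wp B l a d f t x₂ y₂
        = (B.Fbar a l l y₁ f x₁ * B.Rm l l f * B.F a l l y₂ x₂ f) *
          (B.F a f l d y₂ t * B.Fbar a f l d t y₁) := by
      intro t; unfold Wbp Wp; ring
    rw [Finset.sum_congr rfl (fun t _ => reb t), ← Finset.mul_sum,
      F_Fbar_fin B.toTensorSystem a f l d y₂ y₁
        (fun t' ht' => mem_TT.mpr ⟨f, mem_SL.mp hf, ht'⟩)]
  rw [Finset.sum_congr rfl st2]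
  rcases eq_or_ne y₁ y₂ with rfl | hne
  · have habs : ∀ f, (B.Fbar a l l y₁ f x₁ * B.Rm l l f * B.F a l l y₁ x₂ f) *
        (dd y₁ y₁ * (B.N a f y₁ : R) * (B.N y₁ l d : R))
        = (B.N y₁ l d : R) * (B.Rm l l f * B.Fbar a l l y₁ f x₁ * B.F a l l y₁ x₂ f) := by
      intro f
      rw [dd_self]
      rcases N01 B.toTensorSystem a f y₁ with h0 | h1
      · simp [h0, Fz_af (f := f) h0]
      · rw [h1]; push_cast; ring
    rw [Finset.sum_congr rfl (fun f _ => habs f), ← Finset.mul_sum, ← Aq_eq_sum]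
    rw [dd_self]
    ring
  · have hz : ∀ f, (B.Fbar a l l y₁ f x₁ * B.Rm l l f * B.F a l l y₂ x₂ f) *
        (dd y₂ y₁ * (B.N a f y₂ : R) * (B.N y₂ l d : R)) = 0 := by
      intro f; unfold dd; rw [if_neg (Ne.symm hne)]; ring
    rw [Finset.sum_congr rfl (fun f _ => hz f), Finset.sum_const, smul_zero]
    unfold dd
    rw [if_neg hne]
    ring

lemma ConjK_eq (a d x₁ y₁ x₂ y₂ : I) (hx₁ : B.N a l x₁ ≠ 0) :
    Conj B l a d (Kmat B l) x₁ y₁ x₂ y₂ = dd x₁ x₂ * Aq B l x₁ d y₁ y₂ := by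
  by_cases h1 : B.N x₁ l y₁ = 0
  · rw [Conj_expand]
    rw [Finset.sum_eq_zero (fun t _ => Finset.sum_eq_zero (fun f _ =>
      Finset.sum_eq_zero (fun v _ => by
        unfold Wbp
        rw [Fbz_ec (e := x₁) h1]
        ring)))]
    unfold Aq
    rw [AW_zero_row h1]
    ring
  by_cases h2 : B.N y₁ l d = 0
  · rw [Conj_expand]
    rw [Finset.sum_eq_zero (fun t _ => Finset.sum_eq_zero (fun f _ =>
      Finset.sum_eq_zero (fun v _ => by
        unfold Wbp
        rw [Fbz_ec (e := y₁) h2]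
        ring)))]
    unfold Aq
    rw [AW_zero_rowy h2]
    ring
  rw [Conj_expand]
  have st1 : ∀ t ∈ TT B l, ∀ f ∈ SL B l,
      (∑ v ∈ SL B l, Wbp B l a d f t x₁ y₁ * Kmat B l t f v * Wp B l a d v t x₂ y₂)
      = ∑ g ∈ SL B l, (B.Fbar l l l t g f * Wbp B l a d f t x₁ y₁) *
          (B.Rm l l g * (B.F x₂ l l d y₂ g * B.F a l g d x₂ t)) := by
    intro t _ f _
    have expand : ∀ v, Wbp B l a d f t x₁ y₁ * Kmat B l t f v * Wp B l a d v t x₂ y₂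
        = ∑ g ∈ SL B l, (B.Fbar l l l t g f * Wbp B l a d f t x₁ y₁) *
            (B.Rm l l g * (B.F a l l y₂ x₂ v * B.F a v l d y₂ t * B.F l l l t v g)) := by
      intro v
      unfold Kmat
      rw [Finset.mul_sum, Finset.sum_mul]
      refine Finset.sum_congr rfl (fun g _ => ?_)
      unfold Wp; ring
    rw [Finset.sum_congr rfl (fun v _ => expand v), Finset.sum_comm]
    refine Finset.sum_congr rfl (fun g _ => ?_)
    have reb : ∀ v, (B.Fbar l l l t g f * Wbp B l a d f t x₁ y₁) *
        (B.Rm l l g * (B.F a l l y₂ x₂ v * B.F a v l d y₂ t * B.F l l l t v g))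
        = (B.Fbar l l l t g f * Wbp B l a d f t x₁ y₁ * B.Rm l l g) *
          (B.F a l l y₂ x₂ v * B.F a v l d y₂ t * B.F l l l t v g) := fun v => by ring
    calc ∑ v ∈ SL B l, B.Fbar l l l t g f * Wbp B l a d f t x₁ y₁ *
          (B.Rm l l g * (B.F a l l y₂ x₂ v * B.F a v l d y₂ t * B.F l l l t v g))
        = (B.Fbar l l l t g f * Wbp B l a d f t x₁ y₁ * B.Rm l l g) *
            ∑ v ∈ SL B l, B.F a l l y₂ x₂ v * B.F a v l d y₂ t * B.F l l l t v g := by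
          rw [Finset.sum_congr rfl (fun v _ => reb v), ← Finset.mul_sum]
      _ = _ := by
          rw [P5 a d x₂ y₂ t g (fun h hh => mem_SL.mpr hh)]
          ring
  rw [Finset.sum_congr rfl (fun t ht => Finset.sum_congr rfl (fun f hf => st1 t ht f hf))]
  have st2 : ∀ t ∈ TT B l,
      (∑ f ∈ SL B l, ∑ g ∈ SL B l, (B.Fbar l l l t g f * Wbp B l a d f t x₁ y₁) *
        (B.Rm l l g * (B.F x₂ l l d y₂ g * B.F a l g d x₂ t)))
      = ∑ g ∈ SL B l, (B.Fbar a l g d t x₁ * B.Fbar x₁ l l d g y₁) *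
          (B.Rm l l g * (B.F x₂ l l d y₂ g * B.F a l g d x₂ t)) := by
    intro t _
    rw [Finset.sum_comm]
    refine Finset.sum_congr rfl (fun g _ => ?_)
    rw [← Finset.sum_mul, ← SeqVbar a d x₁ y₁ hx₁ h1 h2 g t]
    rfl
  rw [Finset.sum_congr rfl st2, Finset.sum_comm]
  have st3 : ∀ g ∈ SL B l,
      (∑ t ∈ TT B l, (B.Fbar a l g d t x₁ * B.Fbar x₁ l l d g y₁) *
        (B.Rm l l g * (B.F x₂ l l d y₂ g * B.F a l g d x₂ t)))
      = (B.Rm l l g * B.Fbar x₁ l l d g y₁ * B.F x₂ l l d y₂ g) *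
          (dd x₂ x₁ * (B.N a l x₂ : R) * (B.N x₂ g d : R)) := by
    intro g hg
    have ext : (∑ t ∈ TT B l, (B.Fbar a l g d t x₁ * B.Fbar x₁ l l d g y₁) *
        (B.Rm l l g * (B.F x₂ l l d y₂ g * B.F a l g d x₂ t)))
        = ∑ t ∈ TT B l ∪ NS B.toTensorSystem l g,
            (B.Fbar a l g d t x₁ * B.Fbar x₁ l l d g y₁) *
            (B.Rm l l g * (B.F x₂ l l d y₂ g * B.F a l g d x₂ t)) := by
      apply Finset.sum_subset Finset.subset_union_left
      intro t _ htn
      have hS : Sfun B l a d g t x₁ y₁ = 0 := by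
        unfold Sfun
        refine Finset.sum_eq_zero (fun f hf => ?_)
        have hft : B.N f l t = 0 := by
          by_contra hc
          exact htn (mem_TT.mpr ⟨f, mem_SL.mp hf, hc⟩)
        unfold Wbp
        rw [Fbz_bc (f := t) hft]
        ring
      rw [← SeqVbar a d x₁ y₁ hx₁ h1 h2 g t, hS]
      ring
    rw [ext]
    have reb : ∀ t, (B.Fbar a l g d t x₁ * B.Fbar x₁ l l d g y₁) *
        (B.Rm l l g * (B.F x₂ l l d y₂ g * B.F a l g d x₂ t))
        = (B.Rm l l g * B.Fbar x₁ l l d g y₁ * B.F x₂ l l d y₂ g) *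
          (B.F a l g d x₂ t * B.Fbar a l g d t x₁) := by
      intro t; ring
    rw [Finset.sum_congr rfl (fun t _ => reb t), ← Finset.mul_sum,
      F_Fbar_fin B.toTensorSystem a l g d x₂ x₁
        (fun t' ht' => Finset.mem_union_right _ (mem_NS.mpr ht'))]
  rw [Finset.sum_congr rfl st3]
  rcases eq_or_ne x₁ x₂ with rfl | hne
  · have habs : ∀ g, (B.Rm l l g * B.Fbar x₁ l l d g y₁ * B.F x₁ l l d y₂ g) *
        (dd x₁ x₁ * (B.N a l x₁ : R) * (B.N x₁ g d : R))
        = (B.N a l x₁ : R) * (B.Rm l l g * B.Fbar x₁ l l d g y₁ * B.F x₁ l l d y₂ g) := by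
      intro g
      rw [dd_self]
      rcases N01 B.toTensorSystem x₁ g d with h0 | h1'
      · simp [h0, Fz_af (f := g) h0]
      · rw [h1']; push_cast; ring
    rw [Finset.sum_congr rfl (fun g _ => habs g), ← Finset.mul_sum, ← Aq_eq_sum]
    have e1 : B.N a l x₁ = 1 := (N01 B.toTensorSystem a l x₁).resolve_left hx₁
    rw [e1, dd_self]
    push_cast; ring
  · have hz : ∀ g, (B.Rm l l g * B.Fbar x₁ l l d g y₁ * B.F x₂ l l d y₂ g) *
        (dd x₂ x₁ * (B.N a l x₂ : R) * (B.N x₂ g d : R)) = 0 := by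
      intro g; unfold dd; rw [if_neg (Ne.symm hne)]; ring
    rw [Finset.sum_congr rfl (fun g _ => hz g), Finset.sum_const, smul_zero]
    unfold dd
    rw [if_neg hne]
    ring

end YBE3

end YBAux
namespace YBAux

open Function

variable {R : Type*} [CommRing R] {I : Type*}

section YBE4

variable {B : BraidedTensorSystem R I} {l : I}

lemma conj_comp (a d : I) (M M' : I → I → I → R) (x₁ y₁ x₂ y₂ : I) :
    ∑ p ∈ (SX B l a) ×ˢ (SY B l a),
        Conj B l a d M x₁ y₁ p.1 p.2 * Conj B l a d M' p.1 p.2 x₂ y₂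
      = Conj B l a d (Mcomp B l a d M M') x₁ y₁ x₂ y₂ := by
  classical
  set S3 := (TT B l) ×ˢ ((SL B l) ×ˢ (SL B l)) with hS3
  have stepA : ∀ p : I × I, Conj B l a d M x₁ y₁ p.1 p.2 * Conj B l a d M' p.1 p.2 x₂ y₂
      = ∑ w ∈ S3, ∑ w' ∈ S3,
          (Wbp B l a d w.2.1 w.1 x₁ y₁ * M w.1 w.2.1 w.2.2 *
            (M' w'.1 w'.2.1 w'.2.2 * Wp B l a d w'.2.2 w'.1 x₂ y₂)) *
          (Wp B l a d w.2.2 w.1 p.1 p.2 * Wbp B l a d w'.2.1 w'.1 p.1 p.2) := by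
    intro p
    unfold Conj
    rw [Finset.sum_mul_sum]
    exact Finset.sum_congr rfl (fun w _ => Finset.sum_congr rfl (fun w' _ => by ring))
  rw [Finset.sum_congr rfl (fun p _ => stepA p), Finset.sum_comm]
  have stepB : ∀ w ∈ S3,
      (∑ p ∈ (SX B l a) ×ˢ (SY B l a), ∑ w' ∈ S3,
        (Wbp B l a d w.2.1 w.1 x₁ y₁ * M w.1 w.2.1 w.2.2 *
          (M' w'.1 w'.2.1 w'.2.2 * Wp B l a d w'.2.2 w'.1 x₂ y₂)) *
        (Wp B l a d w.2.2 w.1 p.1 p.2 * Wbp B l a d w'.2.1 w'.1 p.1 p.2))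
      = ∑ w' ∈ S3,
          (Wbp B l a d w.2.1 w.1 x₁ y₁ * M w.1 w.2.1 w.2.2 *
            (M' w'.1 w'.2.1 w'.2.2 * Wp B l a d w'.2.2 w'.1 x₂ y₂)) *
          (dd w'.2.1 w.2.2 * dd w'.1 w.1 * rho B l a d w.2.2 w.1) := by
    intro w hw
    have hv : w.2.2 ∈ SL B l := by
      rw [hS3, Finset.mem_product] at hw
      exact (Finset.mem_product.mp hw.2).2
    rw [Finset.sum_comm]
    refine Finset.sum_congr rfl (fun w' _ => ?_)
    rw [← Finset.mul_sum, WWbar a d hv w'.2.1 w.1 w'.1]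
  rw [Finset.sum_congr rfl stepB]
  have stepC : ∀ w ∈ S3,
      (∑ w' ∈ S3,
        (Wbp B l a d w.2.1 w.1 x₁ y₁ * M w.1 w.2.1 w.2.2 *
          (M' w'.1 w'.2.1 w'.2.2 * Wp B l a d w'.2.2 w'.1 x₂ y₂)) *
        (dd w'.2.1 w.2.2 * dd w'.1 w.1 * rho B l a d w.2.2 w.1))
      = ∑ v' ∈ SL B l,
          Wbp B l a d w.2.1 w.1 x₁ y₁ * M w.1 w.2.1 w.2.2 * rho B l a d w.2.2 w.1 *
            M' w.1 w.2.2 v' * Wp B l a d v' w.1 x₂ y₂ := by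
    intro w hw
    rw [hS3, Finset.mem_product] at hw
    obtain ⟨ht, hq⟩ := hw
    rw [Finset.mem_product] at hq
    rw [hS3, Finset.sum_product]
    rw [Finset.sum_eq_single_of_mem w.1 ht ?hz1]
    case hz1 =>
      intro t' _ hne
      refine Finset.sum_eq_zero (fun q _ => ?_)
      unfold dd
      rw [if_neg hne]
      ring
    rw [Finset.sum_product, Finset.sum_eq_single_of_mem w.2.2 hq.2 ?hz2]
    case hz2 =>
      intro u _ hne
      refine Finset.sum_eq_zero (fun v' _ => ?_)
      unfold dd
      rcases eq_or_ne w.1 w.1 with h1 | h1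
      · rw [if_neg hne]; ring
      · exact absurd rfl h1
    refine Finset.sum_congr rfl (fun v' _ => ?_)
    rw [dd_self, dd_self]
    ring
  rw [Finset.sum_congr rfl stepC]
  -- now the right-hand side
  rw [Conj_expand]
  have rhs : ∀ t ∈ TT B l, ∀ f ∈ SL B l,
      (∑ v ∈ SL B l, Wbp B l a d f t x₁ y₁ * Mcomp B l a d M M' t f v * Wp B l a d v t x₂ y₂)
      = ∑ u ∈ SL B l, ∑ v ∈ SL B l,
          Wbp B l a d f t x₁ y₁ * M t f u * rho B l a d u t * M' t u v *
            Wp B l a d v t x₂ y₂ := by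
    intro t _ f _
    rw [Finset.sum_comm]
    refine Finset.sum_congr rfl (fun v _ => ?_)
    unfold Mcomp
    rw [Finset.mul_sum, Finset.sum_mul]
    exact Finset.sum_congr rfl (fun u _ => by ring)
  rw [Finset.sum_congr rfl (fun t ht => Finset.sum_congr rfl (fun f hf => rhs t ht f hf))]
  rw [hS3, Finset.sum_product]
  refine Finset.sum_congr rfl (fun t _ => ?_)
  rw [Finset.sum_product]

end YBE4

end YBAux
namespace YBAux

open Function

variable {R : Type*} [CommRing R] {I : Type*}

section YBE5

variable {B : BraidedTensorSystem R I} {l : I}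

/-- hexagon step: braiding past a fused pair, in matrix form. -/
lemma Khex (t f v : I) (hf : B.N l l f ≠ 0) :
    Kmat B l t f v * B.Rm l l v
      = B.F l l l t v f * B.Rm f l t * ((B.N l l f : R) * (B.N f l t : R)) := by
  unfold Kmat
  have step1 : (∑ g ∈ SL B l, B.Fbar l l l t g f * B.Rm l l g * B.F l l l t v g) * B.Rm l l v
      = ∑ g ∈ SL B l, B.Fbar l l l t g f * (B.Rm l l v * B.F l l l t v g * B.Rm l l g) := by
    rw [Finset.sum_mul]
    exact Finset.sum_congr rfl (fun g _ => by ring)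
  rw [step1]
  have step2 : ∀ g, B.Fbar l l l t g f * (B.Rm l l v * B.F l l l t v g * B.Rm l l g)
      = B.Fbar l l l t g f *
          ∑ h ∈ SL B l, B.F l l l t v h * B.Rm h l t * B.F l l l t h g := by
    intro g
    rw [hexagon_fin B l l l t v g (fun h hh => mem_SL.mpr hh)]
  have step3 : (∑ g ∈ SL B l, B.Fbar l l l t g f *
      (∑ h ∈ SL B l, B.F l l l t v h * B.Rm h l t * B.F l l l t h g))
      = ∑ h ∈ SL B l, (B.F l l l t v h * B.Rm h l t) *
          (∑ g ∈ SL B l, B.F l l l t h g * B.Fbar l l l t g f) := by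
    rw [Finset.sum_congr rfl (fun g _ => by
      rw [Finset.mul_sum]), Finset.sum_comm]
    refine Finset.sum_congr rfl (fun h _ => ?_)
    rw [Finset.mul_sum]
    exact Finset.sum_congr rfl (fun g _ => by ring)
  rw [Finset.sum_congr rfl (fun g _ => step2 g), step3]
  have step4 : ∀ h, (B.F l l l t v h * B.Rm h l t) *
      (∑ g ∈ SL B l, B.F l l l t h g * B.Fbar l l l t g f)
      = (B.F l l l t v h * B.Rm h l t) * (dd h f * (B.N l l h : R) * (B.N h l t : R)) := by
    intro h
    rw [F_Fbar_fin B.toTensorSystem l l l t h f (fun g hg => mem_SL.mpr hg)]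
  rw [Finset.sum_congr rfl (fun h _ => step4 h),
    Finset.sum_eq_single_of_mem f (mem_SL.mpr hf) (fun h _ hne => by
      unfold dd; rw [if_neg hne]; ring)]
  rw [dd_self]
  ring

lemma Kz_left {t f v : I} (hf : B.N l l f = 0) : Kmat B l t f v = 0 := by
  unfold Kmat
  exact Finset.sum_eq_zero (fun g _ => by rw [Fbz_ab (e := f) hf]; ring)

lemma Kz_right {t f v : I} (hv : B.N l l v = 0) : Kmat B l t f v = 0 := by
  unfold Kmat
  exact Finset.sum_eq_zero (fun g _ => by rw [Fz_ab (e := v) hv]; ring)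

lemma Mcomp_def (a d : I) (M M' : I → I → I → R) (t f v : I) :
    Mcomp B l a d M M' t f v = ∑ u ∈ SL B l, M t f u * rho B l a d u t * M' t u v := rfl

lemma Kmat_def (t f v : I) :
    Kmat B l t f v = ∑ g ∈ SL B l, B.Fbar l l l t g f * B.Rm l l g * B.F l l l t v g := rfl

/-- the core braid identity in the fused basis: `D (K D) = K (D K)` blockwise. -/
lemma core (a d t f v : I) :
    Mcomp B l a d (Dmat B l) (Mcomp B l a d (Kmat B l) (Dmat B l)) t f v
      = Mcomp B l a d (Kmat B l) (Mcomp B l a d (Dmat B l) (Kmat B l)) t f v := by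
  by_cases hf : B.N l l f = 0
  · rw [Mcomp_def, Mcomp_def]
    rw [Finset.sum_eq_zero (fun u _ => by
      show Dmat B l t f u * _ * _ = 0
      unfold Dmat
      rw [B.Rm_vanish l l f hf]
      ring)]
    rw [Finset.sum_eq_zero (fun u _ => by
      show Kmat B l t f u * _ * _ = 0
      rw [Kz_left hf]
      ring)]
  by_cases hv : B.N l l v = 0
  · rw [Mcomp_def, Mcomp_def]
    rw [Finset.sum_eq_zero (fun u _ => by
      show Dmat B l t f u * _ * Mcomp B l a d (Kmat B l) (Dmat B l) t u v = 0
      rw [Mcomp_def, Finset.sum_eq_zero (fun w hw => by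
        show Kmat B l t u w * _ * Dmat B l t w v = 0
        have hne : w ≠ v := fun h => (mem_SL.mp hw) (h ▸ hv)
        unfold Dmat dd
        rw [if_neg hne]
        ring)]
      ring)]
    rw [Finset.sum_eq_zero (fun u _ => by
      show Kmat B l t f u * _ * Mcomp B l a d (Dmat B l) (Kmat B l) t u v = 0
      rw [Mcomp_def, Finset.sum_eq_zero (fun w _ => by
        show Dmat B l t u w * _ * Kmat B l t w v = 0
        rw [Kz_right hv]
        ring)]
      ring)]
  -- main case
  have hfS : f ∈ SL B l := mem_SL.mpr hf
  have hvS : v ∈ SL B l := mem_SL.mpr hv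
  have e1 : (B.N l l v : R) * B.F l l l t v f = B.F l l l t v f :=
    Nabsorb (B.N_le_one l l v) (fun h0 => Fz_ab (e := v) h0)
  have e2 : (B.N v l t : R) * B.F l l l t v f = B.F l l l t v f :=
    Nabsorb (B.N_le_one v l t) (fun h0 => Fz_ec (e := v) h0)
  have e3 : (B.N l f t : R) * B.F l l l t v f = B.F l l l t v f :=
    Nabsorb (B.N_le_one l f t) (fun h0 => Fz_af (f := f) h0)
  have lhsE : Mcomp B l a d (Dmat B l) (Mcomp B l a d (Kmat B l) (Dmat B l)) t f v
      = B.Rm l l f * rho B l a d f t *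
          (Kmat B l t f v * rho B l a d v t * B.Rm l l v) := by
    rw [Mcomp_def, Finset.sum_eq_single_of_mem f hfS (fun u _ hne => by
      show Dmat B l t f u * _ * _ = 0
      unfold Dmat dd
      rw [if_neg (Ne.symm hne)]
      ring)]
    rw [Mcomp_def (M := Kmat B l), Finset.sum_eq_single_of_mem v hvS (fun w _ hne => by
      show Kmat B l t f w * _ * Dmat B l t w v = 0
      unfold Dmat dd
      rw [if_neg hne]
      ring)]
    show Dmat B l t f f * _ * (Kmat B l t f v * _ * Dmat B l t v v) = _
    unfold Dmat
    rw [dd_self, dd_self]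
    ring
  have lhsC : Mcomp B l a d (Dmat B l) (Mcomp B l a d (Kmat B l) (Dmat B l)) t f v
      = B.Rm l l f * B.Rm f l t * B.F l l l t v f *
          ((B.N l l f : R) * (B.N f l t : R) * (B.N a t d : R)) := by
    rw [lhsE]
    calc B.Rm l l f * rho B l a d f t * (Kmat B l t f v * rho B l a d v t * B.Rm l l v)
        = (Kmat B l t f v * B.Rm l l v) * (B.Rm l l f * rho B l a d f t * rho B l a d v t) := by
          ring
      _ = (B.F l l l t v f * B.Rm f l t * ((B.N l l f : R) * (B.N f l t : R))) *
            (B.Rm l l f * rho B l a d f t * rho B l a d v t) := by rw [Khex t f v hf]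
      _ = (B.Rm l l f * B.Rm f l t) *
            (((B.N l l f : R) * (B.N l l f : R)) * ((B.N f l t : R) * (B.N f l t : R)) *
              ((B.N a t d : R) * (B.N a t d : R))) *
            ((B.N l l v : R) * ((B.N v l t : R) * B.F l l l t v f)) := by
          unfold rho; ring
      _ = _ := by
          rw [Ncast_sq, Ncast_sq, Ncast_sq, e2, e1]
          ring
  have habs : ∀ u, rho B l a d u t * rho B l a d u t * B.F l l l t u f
      = (B.N a t d : R) * B.F l l l t u f := by
    intro u
    have f1 : (B.N l l u : R) * B.F l l l t u f = B.F l l l t u f :=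
      Nabsorb (B.N_le_one l l u) (fun h0 => Fz_ab (e := u) h0)
    have f2 : (B.N u l t : R) * B.F l l l t u f = B.F l l l t u f :=
      Nabsorb (B.N_le_one u l t) (fun h0 => Fz_ec (e := u) h0)
    calc rho B l a d u t * rho B l a d u t * B.F l l l t u f
        = ((B.N l l u : R) * (B.N l l u : R)) * ((B.N u l t : R) * (B.N u l t : R)) *
            ((B.N a t d : R) * (B.N a t d : R)) * B.F l l l t u f := by unfold rho; ring
      _ = (B.N a t d : R) * ((B.N l l u : R) * ((B.N u l t : R) * B.F l l l t u f)) := by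
          rw [Ncast_sq, Ncast_sq, Ncast_sq]; ring
      _ = _ := by rw [f2, f1]
  have rhsC : Mcomp B l a d (Kmat B l) (Mcomp B l a d (Dmat B l) (Kmat B l)) t f v
      = B.Rm l l f * B.Rm f l t * B.F l l l t v f *
          ((B.N l l f : R) * (B.N f l t : R) * (B.N a t d : R)) := by
    rw [Mcomp_def]
    have stepA : ∀ u ∈ SL B l,
        Kmat B l t f u * rho B l a d u t * Mcomp B l a d (Dmat B l) (Kmat B l) t u v
        = ∑ g ∈ SL B l,
            (B.Rm l l g * B.F l l l t v g * (B.Rm f l t * ((B.N l l f : R) * (B.N f l t : R)))) *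
            ((rho B l a d u t * rho B l a d u t * B.F l l l t u f) * B.Fbar l l l t g u) := by
      intro u hu
      rw [Mcomp_def, Finset.sum_eq_single_of_mem u hu (fun w _ hne => by
        show Dmat B l t u w * _ * _ = 0
        unfold Dmat dd
        rw [if_neg (Ne.symm hne)]
        ring)]
      show Kmat B l t f u * _ * (Dmat B l t u u * _ * Kmat B l t u v) = _
      unfold Dmat
      rw [dd_self]
      calc Kmat B l t f u * rho B l a d u t *
            ((1 : R) * B.Rm l l u * rho B l a d u t * Kmat B l t u v)
          = (Kmat B l t f u * B.Rm l l u) *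
              (rho B l a d u t * rho B l a d u t) * Kmat B l t u v := by ring
        _ = (B.F l l l t u f * B.Rm f l t * ((B.N l l f : R) * (B.N f l t : R))) *
              (rho B l a d u t * rho B l a d u t) * Kmat B l t u v := by rw [Khex t f u hf]
        _ = _ := by
            rw [Kmat_def, Finset.mul_sum]
            exact Finset.sum_congr rfl (fun g _ => by ring)
    rw [Finset.sum_congr rfl stepA, Finset.sum_comm]
    have stepB : ∀ g ∈ SL B l,
        (∑ u ∈ SL B l,
          (B.Rm l l g * B.F l l l t v g * (B.Rm f l t * ((B.N l l f : R) * (B.N f l t : R)))) *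
          ((rho B l a d u t * rho B l a d u t * B.F l l l t u f) * B.Fbar l l l t g u))
        = (B.Rm l l g * B.F l l l t v g * (B.Rm f l t * ((B.N l l f : R) * (B.N f l t : R)))) *
            ((B.N a t d : R) * (dd f g * (B.N l l f : R) * (B.N l f t : R))) := by
      intro g _
      rw [Finset.sum_congr rfl (fun u _ => by rw [habs u]), ← Finset.mul_sum]
      congr 1
      rw [show (∑ u ∈ SL B l, (B.N a t d : R) * B.F l l l t u f * B.Fbar l l l t g u)
          = (B.N a t d : R) * ∑ u ∈ SL B l, B.Fbar l l l t g u * B.F l l l t u f from by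
        rw [Finset.mul_sum]
        exact Finset.sum_congr rfl (fun u _ => by ring)]
      rw [Fbar_F_fin B.toTensorSystem l l l t f g (fun e he => mem_SL.mpr he)]
    rw [Finset.sum_congr rfl stepB,
      Finset.sum_eq_single_of_mem f hfS (fun g _ hne => by
        unfold dd
        rw [if_neg (Ne.symm hne)]
        ring)]
    rw [dd_self]
    calc (B.Rm l l f * B.F l l l t v f * (B.Rm f l t * ((B.N l l f : R) * (B.N f l t : R)))) *
          ((B.N a t d : R) * (1 * (B.N l l f : R) * (B.N l f t : R)))
        = (B.Rm l l f * B.Rm f l t) *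
            (((B.N l l f : R) * (B.N l l f : R)) * (B.N f l t : R) * (B.N a t d : R)) *
            ((B.N l f t : R) * B.F l l l t v f) := by ring
      _ = _ := by rw [Ncast_sq, e3]; ring
  rw [lhsC, rhsC]

end YBE5

end YBAux
namespace YBAux

open Function

variable {R : Type*} [CommRing R] {I : Type*}

section YBE6

variable {B : BraidedTensorSystem R I} {l : I}

lemma tripleAssoc (a d : I) (M₁ M₂ M₃ : I → I → I → R) (x₁ y₁ x₂ y₂ : I) :
    ∑ p ∈ (SX B l a) ×ˢ (SY B l a), ∑ q ∈ (SX B l a) ×ˢ (SY B l a),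
        Conj B l a d M₁ x₁ y₁ p.1 p.2 * Conj B l a d M₂ p.1 p.2 q.1 q.2 *
          Conj B l a d M₃ q.1 q.2 x₂ y₂
      = Conj B l a d (Mcomp B l a d M₁ (Mcomp B l a d M₂ M₃)) x₁ y₁ x₂ y₂ := by
  have step : ∀ p : I × I, (∑ q ∈ (SX B l a) ×ˢ (SY B l a),
      Conj B l a d M₁ x₁ y₁ p.1 p.2 * Conj B l a d M₂ p.1 p.2 q.1 q.2 *
        Conj B l a d M₃ q.1 q.2 x₂ y₂)
      = Conj B l a d M₁ x₁ y₁ p.1 p.2 *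
          Conj B l a d (Mcomp B l a d M₂ M₃) p.1 p.2 x₂ y₂ := by
    intro p
    rw [← conj_comp a d M₂ M₃ p.1 p.2 x₂ y₂, Finset.mul_sum]
    exact Finset.sum_congr rfl (fun q _ => by ring)
  rw [Finset.sum_congr rfl (fun p _ => step p), conj_comp]

lemma tripleDKD (a d x y x' y' : I)
    (hx : B.N a l x ≠ 0) (hx' : B.N a l x' ≠ 0) (hxy : B.N x l y ≠ 0)
    (hx'y' : B.N x' l y' ≠ 0) (hyd : B.N y l d ≠ 0) (hy'd : B.N y' l d ≠ 0) :
    ∑ p ∈ (SX B l a) ×ˢ (SY B l a), ∑ q ∈ (SX B l a) ×ˢ (SY B l a),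
        Conj B l a d (Dmat B l) x' y' p.1 p.2 * Conj B l a d (Kmat B l) p.1 p.2 q.1 q.2 *
          Conj B l a d (Dmat B l) q.1 q.2 x y
      = ∑ z ∈ SX B l a, Aq B l a y' x' z * Aq B l z d y' y * Aq B l a y z x := by
  have hySY : y ∈ SY B l a := mem_SY.mpr (exists_mid B.toTensorSystem hx hxy)
  have hy'SY : y' ∈ SY B l a := mem_SY.mpr (exists_mid B.toTensorSystem hx' hx'y')
  have ey : B.N y l d = 1 := (N01 B.toTensorSystem y l d).resolve_left hyd
  have ey' : B.N y' l d = 1 := (N01 B.toTensorSystem y' l d).resolve_left hy'd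
  rw [Finset.sum_product]
  have inner : ∀ z ∈ SX B l a, ∀ y₁ ∈ SY B l a,
      (∑ q ∈ (SX B l a) ×ˢ (SY B l a),
        Conj B l a d (Dmat B l) x' y' z y₁ * Conj B l a d (Kmat B l) z y₁ q.1 q.2 *
          Conj B l a d (Dmat B l) q.1 q.2 x y)
      = (dd y' y₁ * (B.N y₁ l d : R) * Aq B l a y₁ x' z) *
          (dd z z * Aq B l z d y₁ y) * (dd y y * (B.N y l d : R) * Aq B l a y z x) := by
    intro z hz y₁ _
    have hzx : B.N a l z ≠ 0 := mem_SX.mp hz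
    have rw1 : ∀ q : I × I, Conj B l a d (Dmat B l) x' y' z y₁ *
        Conj B l a d (Kmat B l) z y₁ q.1 q.2 * Conj B l a d (Dmat B l) q.1 q.2 x y
        = (dd y' y₁ * (B.N y₁ l d : R) * Aq B l a y₁ x' z) *
          (dd z q.1 * Aq B l z d y₁ q.2) * (dd q.2 y * (B.N y l d : R) * Aq B l a y q.1 x) := by
      intro q
      rw [ConjD_eq, ConjD_eq, ConjK_eq a d z y₁ q.1 q.2 hzx]
    rw [Finset.sum_congr rfl (fun q _ => rw1 q),
      Finset.sum_eq_single_of_mem (z, y) (Finset.mem_product.mpr ⟨hz, hySY⟩) ?hz0]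
    case hz0 =>
      intro q _ hne
      have : q.1 ≠ z ∨ q.2 ≠ y := by
        by_contra hc; push_neg at hc
        exact hne (Prod.ext hc.1 hc.2)
      rcases this with h | h
      · unfold dd
        rw [if_neg (Ne.symm h)]
        ring
      · unfold dd
        rcases eq_or_ne z q.1 with h1 | h1
        · rw [if_neg h]; ring
        · rw [if_neg h1]; ring
  rw [Finset.sum_congr rfl (fun z hz => Finset.sum_congr rfl (fun y₁ hy₁ => inner z hz y₁ hy₁))]
  have collapse : ∀ z ∈ SX B l a,
      (∑ y₁ ∈ SY B l a, (dd y' y₁ * (B.N y₁ l d : R) * Aq B l a y₁ x' z) *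
        (dd z z * Aq B l z d y₁ y) * (dd y y * (B.N y l d : R) * Aq B l a y z x))
      = Aq B l a y' x' z * Aq B l z d y' y * Aq B l a y z x := by
    intro z _
    rw [Finset.sum_eq_single_of_mem y' hy'SY (fun y₁ _ hne => by
      unfold dd
      rw [if_neg (Ne.symm hne)]
      ring)]
    rw [dd_self, dd_self, dd_self, ey, ey']
    push_cast
    ring
  exact Finset.sum_congr rfl collapse

lemma tripleKDK (a d x y x' y' : I)
    (hx : B.N a l x ≠ 0) (hx' : B.N a l x' ≠ 0) (hxy : B.N x l y ≠ 0)
    (hx'y' : B.N x' l y' ≠ 0) (hyd : B.N y l d ≠ 0) (hy'd : B.N y' l d ≠ 0) :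
    ∑ p ∈ (SX B l a) ×ˢ (SY B l a), ∑ q ∈ (SX B l a) ×ˢ (SY B l a),
        Conj B l a d (Kmat B l) x' y' p.1 p.2 * Conj B l a d (Dmat B l) p.1 p.2 q.1 q.2 *
          Conj B l a d (Kmat B l) q.1 q.2 x y
      = ∑ w ∈ SY B l a, Aq B l x' d y' w * Aq B l a w x' x * Aq B l x d w y := by
  have hxSX : x ∈ SX B l a := mem_SX.mpr hx
  have hx'SX : x' ∈ SX B l a := mem_SX.mpr hx'
  rw [Finset.sum_product]
  have inner : ∀ z ∈ SX B l a, ∀ w ∈ SY B l a,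
      (∑ q ∈ (SX B l a) ×ˢ (SY B l a),
        Conj B l a d (Kmat B l) x' y' z w * Conj B l a d (Dmat B l) z w q.1 q.2 *
          Conj B l a d (Kmat B l) q.1 q.2 x y)
      = (dd x' z * Aq B l x' d y' w) * (dd w w * (B.N w l d : R) * Aq B l a w z x) *
          (dd x x * Aq B l x d w y) := by
    intro z _ w hw
    have rw1 : ∀ q ∈ (SX B l a) ×ˢ (SY B l a), Conj B l a d (Kmat B l) x' y' z w *
        Conj B l a d (Dmat B l) z w q.1 q.2 * Conj B l a d (Kmat B l) q.1 q.2 x y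
        = (dd x' z * Aq B l x' d y' w) * (dd w q.2 * (B.N q.2 l d : R) * Aq B l a q.2 z q.1) *
          (dd q.1 x * Aq B l q.1 d q.2 y) := by
      intro q hq
      have hq1 : B.N a l q.1 ≠ 0 := mem_SX.mp (Finset.mem_product.mp hq).1
      rw [ConjD_eq, ConjK_eq a d x' y' z w hx', ConjK_eq a d q.1 q.2 x y hq1]
    rw [Finset.sum_congr rfl rw1,
      Finset.sum_eq_single_of_mem (x, w) (Finset.mem_product.mpr ⟨hxSX, hw⟩) ?hz0]
    case hz0 =>
      intro q _ hne
      have : q.1 ≠ x ∨ q.2 ≠ w := by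
        by_contra hc; push_neg at hc
        exact hne (Prod.ext hc.1 hc.2)
      rcases this with h | h
      · unfold dd
        rcases eq_or_ne w q.2 with h1 | h1
        · rw [if_neg h]; ring
        · rw [if_neg h1]; ring
      · unfold dd
        rw [if_neg (show ¬ (w = q.2) from fun hh => h hh.symm)]
        ring
  rw [Finset.sum_congr rfl (fun z hz => Finset.sum_congr rfl (fun w hw => inner z hz w hw))]
  have collapse : ∀ w ∈ SY B l a,
      (∑ z ∈ SX B l a, (dd x' z * Aq B l x' d y' w) *
        (dd w w * (B.N w l d : R) * Aq B l a w z x) * (dd x x * Aq B l x d w y))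
      = Aq B l x' d y' w * Aq B l a w x' x * Aq B l x d w y := by
    intro w _
    rw [Finset.sum_eq_single_of_mem x' hx'SX (fun z _ hne => by
      unfold dd
      rw [if_neg (show ¬ (x' = z) from fun hh => hne hh.symm)]
      ring)]
    rw [dd_self, dd_self, dd_self]
    have habs : (B.N w l d : R) * Aq B l x d w y = Aq B l x d w y :=
      Nabsorb (B.N_le_one w l d) (fun h0 => AW_zero_rowy h0)
    calc (1 : R) * Aq B l x' d y' w * (1 * (B.N w l d : R) * Aq B l a w x' x) *
          (1 * Aq B l x d w y)
        = Aq B l x' d y' w * Aq B l a w x' x * ((B.N w l d : R) * Aq B l x d w y) := by ring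
      _ = _ := by rw [habs]
  rw [Finset.sum_comm]
  exact Finset.sum_congr rfl collapse

/-- The local Yang–Baxter equation. -/
lemma YBE_local (a d x y x' y' : I)
    (hx : B.N a l x ≠ 0) (hx' : B.N a l x' ≠ 0) (hxy : B.N x l y ≠ 0)
    (hx'y' : B.N x' l y' ≠ 0) (hyd : B.N y l d ≠ 0) (hy'd : B.N y' l d ≠ 0) :
    ∑ᶠ z, Aq B l a y' x' z * Aq B l z d y' y * Aq B l a y z x
      = ∑ᶠ w, Aq B l x' d y' w * Aq B l a w x' x * Aq B l x d w y := by
  have hsuppL : Function.support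
      (fun z => Aq B l a y' x' z * Aq B l z d y' y * Aq B l a y z x)
      ⊆ ((SX B l a : Finset I) : Set I) := by
    intro z hz
    rw [Finset.mem_coe, mem_SX]
    intro h0
    apply hz
    show Aq B l a y' x' z * Aq B l z d y' y * Aq B l a y z x = 0
    unfold Aq
    rw [AW_zero_col (rr := B.Rm l l) h0]
    ring
  have hsuppR : Function.support
      (fun w => Aq B l x' d y' w * Aq B l a w x' x * Aq B l x d w y)
      ⊆ ((SY B l a : Finset I) : Set I) := by
    intro w hw
    rw [Finset.mem_coe, mem_SY]
    by_contra hno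
    apply hw
    have h0 : B.N x' l w = 0 := by
      by_contra hc
      exact hno (exists_mid B.toTensorSystem hx' hc)
    show Aq B l x' d y' w * Aq B l a w x' x * Aq B l x d w y = 0
    unfold Aq
    rw [AW_zero_col (rr := B.Rm l l) h0]
    ring
  rw [finsum_eq_sum_of_support_subset _ hsuppL, finsum_eq_sum_of_support_subset _ hsuppR]
  rw [← tripleDKD a d x y x' y' hx hx' hxy hx'y' hyd hy'd,
    ← tripleKDK a d x y x' y' hx hx' hxy hx'y' hyd hy'd,
    tripleAssoc, tripleAssoc]
  unfold Conj
  refine Finset.sum_congr rfl (fun w _ => ?_)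
  rw [core a d w.1 w.2.1 w.2.2]

end YBE6

end YBAux
namespace YBAux

open Function

variable {R : Type*} [CommRing R] {I : Type*}

section Chain

variable {B : BraidedTensorSystem R I} {l : I} {L : ℕ} {I0 : Set I}

open Fin.NatCast in
/-- `j`-th site index inside `Fin (L+1)`. -/
abbrev fc (L j : ℕ) : Fin (L + 1) := (j : Fin (L + 1))

lemma fc_val {j : ℕ} (h : j ≤ L) : (fc L j).val = j :=
  Fin.val_cast_of_lt (by omega)

lemma fc_ne {j k : ℕ} (hj : j ≤ L) (hk : k ≤ L) (h : j ≠ k) : fc L j ≠ fc L k :=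
  fun he => h (by rw [← fc_val hj, ← fc_val hk, he])

lemma fc_ne_zero {j : ℕ} (hj : 1 ≤ j) (hjL : j ≤ L) : fc L j ≠ 0 := by
  intro he
  have : (fc L j).val = 0 := by rw [he]; rfl
  rw [fc_val hjL] at this
  omega

/-- the braiding-type operator entries split into a delta factor and a local factor. -/
lemma Rmat_split (rr : I → R) (hrr : ∀ m, B.N l l m = 0 → rr m = 0)
    (i : ℕ) (μ' μ : Fin (L + 1) → I) :
    (∑ᶠ m, rr m * B.toTensorSystem.pMat L (fun _ => l) i m μ' μ)
      = (∏ j ∈ Finset.univ.erase (fc L i), if μ j = μ' j then (1 : R) else 0) *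
          AW B l rr (μ (fc L (i - 1))) (μ (fc L (i + 1))) (μ' (fc L i)) (μ (fc L i)) := by
  have h1 : ∀ m, rr m * B.toTensorSystem.pMat L (fun _ => l) i m μ' μ
      = (∏ j ∈ Finset.univ.erase (fc L i), if μ j = μ' j then (1 : R) else 0) *
          (rr m * B.Fbar (μ (fc L (i - 1))) l l (μ (fc L (i + 1))) m (μ' (fc L i)) *
            B.F (μ (fc L (i - 1))) l l (μ (fc L (i + 1))) (μ (fc L i)) m) := by
    intro m
    show rr m * ((∏ j ∈ Finset.univ.erase (fc L i), if μ j = μ' j then (1 : R) else 0)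
        * B.Fbar (μ (fc L (i - 1))) l l (μ (fc L (i + 1))) m (μ' (fc L i))
        * B.F (μ (fc L (i - 1))) l l (μ (fc L (i + 1))) (μ (fc L i)) m) = _
    ring
  have hfin : (Function.support fun m => rr m *
      B.Fbar (μ (fc L (i - 1))) l l (μ (fc L (i + 1))) m (μ' (fc L i)) *
      B.F (μ (fc L (i - 1))) l l (μ (fc L (i + 1))) (μ (fc L i)) m).Finite := by
    apply Set.Finite.subset (B.N_finite l l)
    intro m hm
    simp only [Function.mem_support] at hm ⊢
    intro h0
    exact hm (by rw [hrr m h0]; ring)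
  rw [finsum_congr h1, ← mul_finsum' _ _ hfin]
  rfl

lemma upd_inj (μ' : Fin (L + 1) → I) (s : Fin (L + 1)) :
    Function.Injective (fun z => Function.update μ' s z) := by
  intro z z' h
  have := congrFun h s
  simpa only [Function.update_self] using this

lemma prod_delta_update (μ' : Fin (L + 1) → I) (s : Fin (L + 1)) (z : I) :
    (∏ j ∈ Finset.univ.erase s,
      if Function.update μ' s z j = μ' j then (1 : R) else 0) = 1 := by
  apply Finset.prod_eq_one
  intro j hj
  rw [Function.update_of_ne (Finset.ne_of_mem_erase hj), if_pos rfl]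

/-- an updated path is a path iff the two adjacent fusion constraints hold. -/
lemma upd_path (i : ℕ) (hi : 1 ≤ i) (hiL : i + 1 ≤ L)
    (μ' : Fin (L + 1) → I) (hμ' : B.toTensorSystem.IsPath L I0 (fun _ => l) μ') (z : I)
    (hz1 : B.N (μ' (fc L (i - 1))) l z = 1) (hz2 : B.N z l (μ' (fc L (i + 1))) = 1) :
    B.toTensorSystem.IsPath L I0 (fun _ => l) (Function.update μ' (fc L i) z) := by
  constructor
  · have h0 : (0 : Fin (L + 1)) ≠ fc L i := fun he => fc_ne_zero hi (by omega) he.symm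
    rw [Function.update_of_ne h0]
    exact hμ'.1
  · intro j hj1 hjL
    by_cases hji : j = i
    · subst hji
      rw [Function.update_of_ne (fc_ne (j := j - 1) (k := j) (by omega) (by omega) (by omega)),
        Function.update_self]
      exact hz1
    by_cases hji1 : j = i + 1
    · subst hji1
      rw [show ((i + 1 : ℕ) - 1) = i from by omega,
        Function.update_self,
        Function.update_of_ne (fc_ne (j := i + 1) (k := i) (by omega) (by omega) (by omega))]
      exact hz2
    · rw [Function.update_of_ne (fc_ne (j := j - 1) (k := i) (by omega) (by omega) (by omega)),
        Function.update_of_ne (fc_ne (j := j) (k := i) (by omega) (by omega) (by omega))]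
      exact hμ'.2 j hj1 hjL

/-- collapse of a path-summed product against a one-site operator on the left. -/
lemma mul_collapse (i : ℕ) (hi : 1 ≤ i) (hiL : i + 1 ≤ L)
    (rr : I → R) (hrr : ∀ m, B.N l l m = 0 → rr m = 0)
    (Bf : (Fin (L + 1) → I) → (Fin (L + 1) → I) → R)
    (μ' μ : Fin (L + 1) → I) (hμ' : B.toTensorSystem.IsPath L I0 (fun _ => l) μ') :
    B.toTensorSystem.mulMat L I0 (fun _ => l)
        (fun ν' ν => ∑ᶠ m, rr m * B.toTensorSystem.pMat L (fun _ => l) i m ν' ν) Bf μ' μ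
      = ∑ᶠ z, AW B l rr (μ' (fc L (i - 1))) (μ' (fc L (i + 1))) (μ' (fc L i)) z *
          Bf (Function.update μ' (fc L i) z) μ := by
  classical
  set u : I → (Fin (L + 1) → I) := fun z => Function.update μ' (fc L i) z with hu
  set P : Set (Fin (L + 1) → I) :=
    {x : Fin (L + 1) → I | B.toTensorSystem.IsPath L I0 (fun _ => l) x} with hP
  set G : (Fin (L + 1) → I) → R := fun μ'' =>
    (∑ᶠ m, rr m * B.toTensorSystem.pMat L (fun _ => l) i m μ' μ'') * Bf μ'' μ with hG
  have him1 : i - 1 ≤ L := by omega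
  have hip1 : i + 1 ≤ L := by omega
  have hiLe : i ≤ L := by omega
  -- evaluate the operator entry on an updated configuration
  have entry : ∀ z : I, (∑ᶠ m, rr m * B.toTensorSystem.pMat L (fun _ => l) i m μ' (u z))
      = AW B l rr (μ' (fc L (i - 1))) (μ' (fc L (i + 1))) (μ' (fc L i)) z := by
    intro z
    rw [Rmat_split rr hrr i μ' (u z)]
    rw [hu]
    simp only []
    rw [prod_delta_update μ' (fc L i) z]
    rw [Function.update_of_ne (fc_ne him1 hiLe (by omega)),
      Function.update_of_ne (fc_ne hip1 hiLe (by omega)), Function.update_self]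
    ring
  -- the indicator is supported on the range of `u`
  have hsupp : Function.support (P.indicator G) ⊆ Set.range u := by
    intro μ'' hm
    have hGne : G μ'' ≠ 0 := by
      intro h0
      apply hm
      by_cases hmem : μ'' ∈ P
      · rw [Set.indicator_of_mem hmem, h0]
      · rw [Set.indicator_of_notMem hmem]
    have hD : (∏ j ∈ Finset.univ.erase (fc L i),
        if μ'' j = μ' j then (1 : R) else 0) ≠ 0 := by
      intro h0
      apply hGne
      rw [hG]
      simp only []
      rw [Rmat_split rr hrr i μ' μ'', h0]
      ring
    refine ⟨μ'' (fc L i), ?_⟩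
    funext j
    by_cases hji : j = fc L i
    · rw [hu]; simp only []
      rw [hji, Function.update_self]
    · rw [hu]; simp only []
      rw [Function.update_of_ne hji]
      by_contra hne
      apply hD
      apply Finset.prod_eq_zero (Finset.mem_erase.mpr ⟨hji, Finset.mem_univ j⟩)
      rw [if_neg (fun hh => hne hh.symm)]
  have main : B.toTensorSystem.mulMat L I0 (fun _ => l)
      (fun ν' ν => ∑ᶠ m, rr m * B.toTensorSystem.pMat L (fun _ => l) i m ν' ν) Bf μ' μ
      = ∑ᶠ z, P.indicator G (u z) := by
    show (∑ᶠ μ'' ∈ P, G μ'') = _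
    calc (∑ᶠ μ'' ∈ P, G μ'') = ∑ᶠ μ'', P.indicator G μ'' := finsum_mem_def P G
      _ = ∑ᶠ μ'', (Set.range u).indicator (P.indicator G) μ'' := by
          rw [Set.indicator_eq_self.mpr hsupp]
      _ = ∑ᶠ μ'' ∈ Set.range u, P.indicator G μ'' := (finsum_mem_def _ _).symm
      _ = ∑ᶠ z, P.indicator G (u z) := finsum_mem_range (upd_inj μ' (fc L i))
  rw [main]
  apply finsum_congr
  intro z
  by_cases hmem : u z ∈ P
  · rw [Set.indicator_of_mem hmem, hG]
    simp only []
    rw [entry z]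
  · rw [Set.indicator_of_notMem hmem]
    -- the entry vanishes on non-paths
    have hz : B.N (μ' (fc L (i - 1))) l z = 0 ∨ B.N z l (μ' (fc L (i + 1))) = 0 := by
      by_contra hc
      push_neg at hc
      exact hmem (upd_path i hi hiL μ' hμ' z
        ((N01 B.toTensorSystem _ _ _).resolve_left hc.1)
        ((N01 B.toTensorSystem _ _ _).resolve_left hc.2))
    rcases hz with h0 | h0
    · rw [AW_zero_col h0]; ring
    · rw [AW_zero_coly h0]; ring

end Chain

end YBAux
namespace YBAux

open Function

variable {R : Type*} [CommRing R] {I : Type*}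

section Parts

variable {B : BraidedTensorSystem R I} {l : I} {L : ℕ} {I0 : Set I}

lemma R_entry (i : ℕ) (ν' ν : Fin (L + 1) → I) :
    B.Rmat L l i ν' ν
      = ∑ᶠ m, B.Rm l l m * B.toTensorSystem.pMat L (fun _ => l) i m ν' ν := rfl

lemma Rbar_entry (i : ℕ) (ν' ν : Fin (L + 1) → I) :
    B.RbarMat L l i ν' ν
      = ∑ᶠ m, B.Rbarm l l m * B.toTensorSystem.pMat L (fun _ => l) i m ν' ν := rfl

lemma mul_collapse_gen (i : ℕ) (hi : 1 ≤ i) (hiL : i + 1 ≤ L)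
    (rr : I → R) (hrr : ∀ m, B.N l l m = 0 → rr m = 0)
    (A : (Fin (L + 1) → I) → (Fin (L + 1) → I) → R)
    (hA : ∀ ν' ν, A ν' ν = ∑ᶠ m, rr m * B.toTensorSystem.pMat L (fun _ => l) i m ν' ν)
    (Bf : (Fin (L + 1) → I) → (Fin (L + 1) → I) → R)
    (μ' μ : Fin (L + 1) → I) (hμ' : B.toTensorSystem.IsPath L I0 (fun _ => l) μ') :
    B.toTensorSystem.mulMat L I0 (fun _ => l) A Bf μ' μ
      = ∑ᶠ z, AW B l rr (μ' (fc L (i - 1))) (μ' (fc L (i + 1))) (μ' (fc L i)) z *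
          Bf (Function.update μ' (fc L i) z) μ := by
  have : A = fun ν' ν => ∑ᶠ m, rr m * B.toTensorSystem.pMat L (fun _ => l) i m ν' ν := by
    funext ν' ν; exact hA ν' ν
  rw [this]
  exact mul_collapse i hi hiL rr hrr Bf μ' μ hμ'

/-- Part 1 of the theorem, generic in the two coefficient families. -/
lemma part1_gen (i : ℕ) (hi : 1 ≤ i) (hiL : i + 1 ≤ L)
    (rr rb : I → R) (hrr : ∀ m, B.N l l m = 0 → rr m = 0)
    (hrb : ∀ m, B.N l l m = 0 → rb m = 0)
    (hprod : ∀ m, rr m * rb m = (B.N l l m : R))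
    (A A' : (Fin (L + 1) → I) → (Fin (L + 1) → I) → R)
    (hA : ∀ ν' ν, A ν' ν = ∑ᶠ m, rr m * B.toTensorSystem.pMat L (fun _ => l) i m ν' ν)
    (hA' : ∀ ν' ν, A' ν' ν = ∑ᶠ m, rb m * B.toTensorSystem.pMat L (fun _ => l) i m ν' ν)
    (μ' μ : Fin (L + 1) → I) (hμ' : B.toTensorSystem.IsPath L I0 (fun _ => l) μ')
    (hμ : B.toTensorSystem.IsPath L I0 (fun _ => l) μ) :
    B.toTensorSystem.mulMat L I0 (fun _ => l) A A' μ' μ = deltaMat L μ' μ := by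
  have him1 : i - 1 ≤ L := by omega
  have hip1 : i + 1 ≤ L := by omega
  have hiLe : i ≤ L := by omega
  rw [mul_collapse_gen i hi hiL rr hrr A hA A' μ' μ hμ']
  have step : ∀ z, A' (Function.update μ' (fc L i) z) μ
      = (∏ j ∈ Finset.univ.erase (fc L i), if μ j = μ' j then (1 : R) else 0) *
          AW B l rb (μ (fc L (i - 1))) (μ (fc L (i + 1))) z (μ (fc L i)) := by
    intro z
    rw [hA', Rmat_split rb hrb i (Function.update μ' (fc L i) z) μ]
    congr 1
    · apply Finset.prod_congr rfl
      intro j hj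
      rw [Function.update_of_ne (Finset.ne_of_mem_erase hj)]
    · rw [Function.update_self]
  rw [finsum_congr (fun z => by rw [step z])]
  by_cases hoff : ∀ j : Fin (L + 1), j ≠ fc L i → μ j = μ' j
  · have hD : (∏ j ∈ Finset.univ.erase (fc L i), if μ j = μ' j then (1 : R) else 0) = 1 := by
      apply Finset.prod_eq_one
      intro j hj
      rw [if_pos (hoff j (Finset.ne_of_mem_erase hj))]
    have hb1 : μ (fc L (i - 1)) = μ' (fc L (i - 1)) :=
      hoff _ (fc_ne him1 hiLe (by omega))
    have hb2 : μ (fc L (i + 1)) = μ' (fc L (i + 1)) :=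
      hoff _ (fc_ne hip1 hiLe (by omega))
    have main : (∑ᶠ z, AW B l rr (μ' (fc L (i - 1))) (μ' (fc L (i + 1))) (μ' (fc L i)) z *
        ((∏ j ∈ Finset.univ.erase (fc L i), if μ j = μ' j then (1 : R) else 0) *
          AW B l rb (μ (fc L (i - 1))) (μ (fc L (i + 1))) z (μ (fc L i))))
        = ∑ᶠ z, AW B l rr (μ' (fc L (i - 1))) (μ' (fc L (i + 1))) (μ' (fc L i)) z *
            AW B l rb (μ' (fc L (i - 1))) (μ' (fc L (i + 1))) z (μ (fc L i)) := by
      apply finsum_congr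
      intro z
      rw [hD, hb1, hb2]
      ring
    rw [main, L1 hrr hrb hprod]
    have n1 : B.N (μ' (fc L (i - 1))) l (μ (fc L i)) = 1 := by
      rw [hb1.symm]
      exact hμ.2 i hi hiLe
    have n2 : B.N (μ (fc L i)) l (μ' (fc L (i + 1))) = 1 := by
      rw [hb2.symm]
      have := hμ.2 (i + 1) (by omega) hip1
      rw [show ((i + 1 : ℕ) - 1) = i from by omega] at this
      exact this
    rw [n1, n2]
    unfold deltaMat
    rw [← Finset.prod_erase_mul Finset.univ _ (Finset.mem_univ (fc L i)), hD]
    unfold dd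
    push_cast
    ring
  · push_neg at hoff
    obtain ⟨j₀, hj₀, hne⟩ := hoff
    have hD : (∏ j ∈ Finset.univ.erase (fc L i), if μ j = μ' j then (1 : R) else 0) = 0 := by
      apply Finset.prod_eq_zero (Finset.mem_erase.mpr ⟨hj₀, Finset.mem_univ j₀⟩)
      rw [if_neg hne]
    have main0 : ∀ z, AW B l rr (μ' (fc L (i - 1))) (μ' (fc L (i + 1))) (μ' (fc L i)) z *
        ((∏ j ∈ Finset.univ.erase (fc L i), if μ j = μ' j then (1 : R) else 0) *
          AW B l rb (μ (fc L (i - 1))) (μ (fc L (i + 1))) z (μ (fc L i))) = 0 := by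
      intro z; rw [hD]; ring
    rw [finsum_congr main0, finsum_zero]
    unfold deltaMat
    rw [Finset.prod_eq_zero (Finset.mem_univ j₀) (by rw [if_neg hne])]

end Parts

end YBAux
namespace YBAux

open Function

variable {R : Type*} [CommRing R] {I : Type*}

section Part3

variable {B : BraidedTensorSystem R I} {l : I} {L : ℕ} {I0 : Set I}

lemma hRm : ∀ m, B.N l l m = 0 → B.Rm l l m = 0 := fun m h => B.Rm_vanish l l m h

lemma side_commute (s s' : ℕ) (hs1 : 1 ≤ s) (hsL : s + 1 ≤ L)
    (hs'1 : 1 ≤ s') (hs'L : s' + 1 ≤ L) (hfar : s + 2 ≤ s' ∨ s' + 2 ≤ s)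
    (μ' μ : Fin (L + 1) → I) (hμ' : B.toTensorSystem.IsPath L I0 (fun _ => l) μ') :
    B.toTensorSystem.mulMat L I0 (fun _ => l) (B.Rmat L l s) (B.Rmat L l s') μ' μ
      = AW B l (B.Rm l l) (μ' (fc L (s - 1))) (μ' (fc L (s + 1))) (μ' (fc L s)) (μ (fc L s)) *
          ((∏ j ∈ (Finset.univ.erase (fc L s')).erase (fc L s),
              if μ j = μ' j then (1 : R) else 0) *
            AW B l (B.Rm l l) (μ (fc L (s' - 1))) (μ (fc L (s' + 1)))
              (μ' (fc L s')) (μ (fc L s'))) := by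
  have hss' : s ≠ s' := by omega
  rw [mul_collapse_gen s hs1 hsL (B.Rm l l) hRm (B.Rmat L l s) (R_entry s)
    (B.Rmat L l s') μ' μ hμ']
  have step : ∀ z, B.Rmat L l s' (Function.update μ' (fc L s) z) μ
      = (if μ (fc L s) = z then (1 : R) else 0) *
          ((∏ j ∈ (Finset.univ.erase (fc L s')).erase (fc L s),
              if μ j = μ' j then (1 : R) else 0) *
            AW B l (B.Rm l l) (μ (fc L (s' - 1))) (μ (fc L (s' + 1)))
              (μ' (fc L s')) (μ (fc L s'))) := by
    intro z
    rw [R_entry s', Rmat_split (B.Rm l l) hRm s' (Function.update μ' (fc L s) z) μ]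
    have hmem : fc L s ∈ Finset.univ.erase (fc L s') :=
      Finset.mem_erase.mpr ⟨fc_ne (by omega) (by omega) hss', Finset.mem_univ _⟩
    rw [← Finset.mul_prod_erase _ _ hmem]
    have h1 : (Function.update μ' (fc L s) z) (fc L s) = z := Function.update_self _ _ _
    have h2 : ∀ j ∈ (Finset.univ.erase (fc L s')).erase (fc L s),
        (if μ j = (Function.update μ' (fc L s) z) j then (1 : R) else 0)
          = if μ j = μ' j then (1 : R) else 0 := by
      intro j hj
      rw [Function.update_of_ne (Finset.ne_of_mem_erase hj)]
    have h3 : (Function.update μ' (fc L s) z) (fc L s')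
        = μ' (fc L s') := Function.update_of_ne (fc_ne (L := L) (j := s') (k := s) (by omega) (by omega) (Ne.symm hss')) z μ'
    rw [h1, Finset.prod_congr rfl h2, h3]
    ring
  rw [finsum_congr (fun z => by rw [step z])]
  rw [finsum_eq_single _ (μ (fc L s)) (fun z hz => by
    rw [if_neg (fun hh => hz hh.symm)]
    ring)]
  rw [if_pos rfl]
  ring

lemma part3_gen (i i' : ℕ) (hi : 1 ≤ i) (hii' : i + 2 ≤ i') (hi'L : i' + 1 ≤ L)
    (μ' μ : Fin (L + 1) → I) (hμ' : B.toTensorSystem.IsPath L I0 (fun _ => l) μ')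
    (hμ : B.toTensorSystem.IsPath L I0 (fun _ => l) μ) :
    B.toTensorSystem.mulMat L I0 (fun _ => l) (B.Rmat L l i) (B.Rmat L l i') μ' μ
      = B.toTensorSystem.mulMat L I0 (fun _ => l) (B.Rmat L l i') (B.Rmat L l i) μ' μ := by
  have hiL : i + 1 ≤ L := by omega
  have hi'1 : 1 ≤ i' := by omega
  rw [side_commute i i' hi hiL hi'1 hi'L (Or.inl hii') μ' μ hμ',
    side_commute i' i hi'1 hi'L hi hiL (Or.inr hii') μ' μ hμ']
  rw [show ((Finset.univ.erase (fc L i)).erase (fc L i'))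
      = ((Finset.univ.erase (fc L i')).erase (fc L i)) from Finset.erase_right_comm]
  by_cases hoff : ∀ j : Fin (L + 1), j ≠ fc L i → j ≠ fc L i' → μ j = μ' j
  · have hD : (∏ j ∈ (Finset.univ.erase (fc L i')).erase (fc L i),
        if μ j = μ' j then (1 : R) else 0) = 1 := by
      apply Finset.prod_eq_one
      intro j hj
      have hj1 := Finset.ne_of_mem_erase hj
      have hj2 := Finset.ne_of_mem_erase (Finset.mem_of_mem_erase hj)
      rw [if_pos (hoff j hj1 hj2)]
    have e1 : μ (fc L (i - 1)) = μ' (fc L (i - 1)) :=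
      hoff _ (fc_ne (by omega) (by omega) (by omega)) (fc_ne (by omega) (by omega) (by omega))
    have e2 : μ (fc L (i + 1)) = μ' (fc L (i + 1)) :=
      hoff _ (fc_ne (by omega) (by omega) (by omega)) (fc_ne (by omega) (by omega) (by omega))
    have e3 : μ (fc L (i' - 1)) = μ' (fc L (i' - 1)) :=
      hoff _ (fc_ne (by omega) (by omega) (by omega)) (fc_ne (by omega) (by omega) (by omega))
    have e4 : μ (fc L (i' + 1)) = μ' (fc L (i' + 1)) :=
      hoff _ (fc_ne (by omega) (by omega) (by omega)) (fc_ne (by omega) (by omega) (by omega))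
    rw [hD, e1, e2, e3, e4]
    ring
  · push_neg at hoff
    obtain ⟨j₀, hj₁, hj₂, hne⟩ := hoff
    have hD : (∏ j ∈ (Finset.univ.erase (fc L i')).erase (fc L i),
        if μ j = μ' j then (1 : R) else 0) = 0 := by
      apply Finset.prod_eq_zero (Finset.mem_erase.mpr
        ⟨hj₁, Finset.mem_erase.mpr ⟨hj₂, Finset.mem_univ j₀⟩⟩)
      rw [if_neg hne]
    rw [hD]
    ring

end Part3

end YBAux
namespace YBAux

open Function

variable {R : Type*} [CommRing R] {I : Type*}

section Part2

variable {B : BraidedTensorSystem R I} {l : I} {L : ℕ} {I0 : Set I}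

lemma sideDKD (i : ℕ) (hi : 1 ≤ i) (hiL : i + 2 ≤ L)
    (μ' μ : Fin (L + 1) → I) (hμ' : B.toTensorSystem.IsPath L I0 (fun _ => l) μ') :
    B.toTensorSystem.mulMat L I0 (fun _ => l) (B.Rmat L l i)
        (B.toTensorSystem.mulMat L I0 (fun _ => l) (B.Rmat L l (i + 1)) (B.Rmat L l i)) μ' μ
      = ∑ᶠ z, AW B l (B.Rm l l) (μ' (fc L (i - 1))) (μ' (fc L (i + 1))) (μ' (fc L i)) z *
          (AW B l (B.Rm l l) z (μ' (fc L (i + 2))) (μ' (fc L (i + 1))) (μ (fc L (i + 1))) *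
            ((∏ j ∈ (Finset.univ.erase (fc L i)).erase (fc L (i + 1)),
                if μ j = μ' j then (1 : R) else 0) *
              AW B l (B.Rm l l) (μ (fc L (i - 1))) (μ (fc L (i + 1))) z (μ (fc L i)))) := by
  rw [mul_collapse_gen i hi (by omega) (B.Rm l l) hRm (B.Rmat L l i) (R_entry i)
    (B.toTensorSystem.mulMat L I0 (fun _ => l) (B.Rmat L l (i + 1)) (B.Rmat L l i)) μ' μ hμ']
  apply finsum_congr
  intro z
  by_cases hp : B.toTensorSystem.IsPath L I0 (fun _ => l) (Function.update μ' (fc L i) z)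
  · congr 1
    rw [mul_collapse_gen (i + 1) (by omega) (by omega) (B.Rm l l) hRm (B.Rmat L l (i + 1))
      (R_entry (i + 1)) (B.Rmat L l i) (Function.update μ' (fc L i) z) μ hp]
    have b1 : Function.update μ' (fc L i) z (fc L (i + 1 - 1)) = z := by
      rw [Nat.add_sub_cancel, Function.update_self]
    have b2 : Function.update μ' (fc L i) z (fc L (i + 1 + 1)) = μ' (fc L (i + 2)) := by
      rw [show i + 1 + 1 = i + 2 from rfl,
        Function.update_of_ne (fc_ne (L := L) (j := i + 2) (k := i)
          (by omega) (by omega) (by omega))]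
    have b3 : Function.update μ' (fc L i) z (fc L (i + 1)) = μ' (fc L (i + 1)) := by
      rw [Function.update_of_ne (fc_ne (L := L) (j := i + 1) (k := i)
        (by omega) (by omega) (by omega))]
    rw [b1, b2, b3]
    have step : ∀ w, B.Rmat L l i
        (Function.update (Function.update μ' (fc L i) z) (fc L (i + 1)) w) μ
        = (if μ (fc L (i + 1)) = w then (1 : R) else 0) *
            ((∏ j ∈ (Finset.univ.erase (fc L i)).erase (fc L (i + 1)),
                if μ j = μ' j then (1 : R) else 0) *
              AW B l (B.Rm l l) (μ (fc L (i - 1))) (μ (fc L (i + 1))) z (μ (fc L i))) := by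
      intro w
      set v := Function.update (Function.update μ' (fc L i) z) (fc L (i + 1)) w with hv
      rw [R_entry i, Rmat_split (B.Rm l l) hRm i v μ]
      have hmem : fc L (i + 1) ∈ Finset.univ.erase (fc L i) :=
        Finset.mem_erase.mpr ⟨fc_ne (by omega) (by omega) (by omega), Finset.mem_univ _⟩
      rw [← Finset.mul_prod_erase _ _ hmem]
      have hv1 : v (fc L (i + 1)) = w := Function.update_self _ _ _
      have hv2 : v (fc L i) = z := by
        rw [hv, Function.update_of_ne (fc_ne (L := L) (j := i) (k := i + 1)
          (by omega) (by omega) (by omega)), Function.update_self]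
      have hv3 : v (fc L (i - 1)) = μ' (fc L (i - 1)) := by
        rw [hv, Function.update_of_ne (fc_ne (L := L) (j := i - 1) (k := i + 1)
          (by omega) (by omega) (by omega)),
          Function.update_of_ne (fc_ne (L := L) (j := i - 1) (k := i)
            (by omega) (by omega) (by omega))]
      have hprodc : ∀ j ∈ (Finset.univ.erase (fc L i)).erase (fc L (i + 1)),
          (if μ j = v j then (1 : R) else 0) = if μ j = μ' j then (1 : R) else 0 := by
        intro j hj
        have hj1 : j ≠ fc L (i + 1) := Finset.ne_of_mem_erase hj
        have hj2 : j ≠ fc L i := Finset.ne_of_mem_erase (Finset.mem_of_mem_erase hj)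
        rw [hv, Function.update_of_ne hj1, Function.update_of_ne hj2]
      rw [hv1, hv2, Finset.prod_congr rfl hprodc]
      ring
    rw [finsum_congr (fun w => by rw [step w])]
    rw [finsum_eq_single _ (μ (fc L (i + 1))) (fun w hw => by
      rw [if_neg (fun hh => hw hh.symm)]
      ring)]
    rw [if_pos rfl]
    ring
  · have hz : B.N (μ' (fc L (i - 1))) l z = 0 ∨ B.N z l (μ' (fc L (i + 1))) = 0 := by
      by_contra hc
      push_neg at hc
      exact hp (upd_path i hi (by omega) μ' hμ' z
        ((N01 B.toTensorSystem _ _ _).resolve_left hc.1)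
        ((N01 B.toTensorSystem _ _ _).resolve_left hc.2))
    rcases hz with h0 | h0
    · rw [AW_zero_col h0]; ring
    · rw [AW_zero_coly h0]; ring

lemma sideKDK (i : ℕ) (hi : 1 ≤ i) (hiL : i + 2 ≤ L)
    (μ' μ : Fin (L + 1) → I) (hμ' : B.toTensorSystem.IsPath L I0 (fun _ => l) μ') :
    B.toTensorSystem.mulMat L I0 (fun _ => l) (B.Rmat L l (i + 1))
        (B.toTensorSystem.mulMat L I0 (fun _ => l) (B.Rmat L l i) (B.Rmat L l (i + 1))) μ' μ
      = ∑ᶠ w, AW B l (B.Rm l l) (μ' (fc L i)) (μ' (fc L (i + 2))) (μ' (fc L (i + 1))) w *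
          (AW B l (B.Rm l l) (μ' (fc L (i - 1))) w (μ' (fc L i)) (μ (fc L i)) *
            ((∏ j ∈ (Finset.univ.erase (fc L (i + 1))).erase (fc L i),
                if μ j = μ' j then (1 : R) else 0) *
              AW B l (B.Rm l l) (μ (fc L i)) (μ (fc L (i + 2))) w (μ (fc L (i + 1))))) := by
  rw [mul_collapse_gen (i + 1) (by omega) (by omega) (B.Rm l l) hRm (B.Rmat L l (i + 1))
    (R_entry (i + 1))
    (B.toTensorSystem.mulMat L I0 (fun _ => l) (B.Rmat L l i) (B.Rmat L l (i + 1))) μ' μ hμ']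
  rw [show i + 1 - 1 = i from by omega, show i + 1 + 1 = i + 2 from rfl]
  apply finsum_congr
  intro w
  by_cases hp : B.toTensorSystem.IsPath L I0 (fun _ => l) (Function.update μ' (fc L (i + 1)) w)
  · congr 1
    rw [mul_collapse_gen i hi (by omega) (B.Rm l l) hRm (B.Rmat L l i)
      (R_entry i) (B.Rmat L l (i + 1)) (Function.update μ' (fc L (i + 1)) w) μ hp]
    have b1 : Function.update μ' (fc L (i + 1)) w (fc L (i - 1)) = μ' (fc L (i - 1)) := by
      rw [Function.update_of_ne (fc_ne (L := L) (j := i - 1) (k := i + 1)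
        (by omega) (by omega) (by omega))]
    have b2 : Function.update μ' (fc L (i + 1)) w (fc L (i + 1)) = w :=
      Function.update_self _ _ _
    have b3 : Function.update μ' (fc L (i + 1)) w (fc L i) = μ' (fc L i) := by
      rw [Function.update_of_ne (fc_ne (L := L) (j := i) (k := i + 1)
        (by omega) (by omega) (by omega))]
    rw [b1, b2, b3]
    have step : ∀ z, B.Rmat L l (i + 1)
        (Function.update (Function.update μ' (fc L (i + 1)) w) (fc L i) z) μ
        = (if μ (fc L i) = z then (1 : R) else 0) *
            ((∏ j ∈ (Finset.univ.erase (fc L (i + 1))).erase (fc L i),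
                if μ j = μ' j then (1 : R) else 0) *
              AW B l (B.Rm l l) (μ (fc L i)) (μ (fc L (i + 2))) w (μ (fc L (i + 1)))) := by
      intro z
      set v := Function.update (Function.update μ' (fc L (i + 1)) w) (fc L i) z with hv
      rw [R_entry (i + 1), Rmat_split (B.Rm l l) hRm (i + 1) v μ]
      rw [show i + 1 - 1 = i from by omega, show i + 1 + 1 = i + 2 from rfl]
      have hmem : fc L i ∈ Finset.univ.erase (fc L (i + 1)) :=
        Finset.mem_erase.mpr ⟨fc_ne (by omega) (by omega) (by omega), Finset.mem_univ _⟩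
      rw [← Finset.mul_prod_erase _ _ hmem]
      have hv1 : v (fc L i) = z := Function.update_self _ _ _
      have hv2 : v (fc L (i + 1)) = w := by
        rw [hv, Function.update_of_ne (fc_ne (L := L) (j := i + 1) (k := i)
          (by omega) (by omega) (by omega)), Function.update_self]
      have hv3 : v (fc L (i + 2)) = μ' (fc L (i + 2)) := by
        rw [hv, Function.update_of_ne (fc_ne (L := L) (j := i + 2) (k := i)
          (by omega) (by omega) (by omega)),
          Function.update_of_ne (fc_ne (L := L) (j := i + 2) (k := i + 1)
            (by omega) (by omega) (by omega))]
      have hprodc : ∀ j ∈ (Finset.univ.erase (fc L (i + 1))).erase (fc L i),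
          (if μ j = v j then (1 : R) else 0) = if μ j = μ' j then (1 : R) else 0 := by
        intro j hj
        have hj1 : j ≠ fc L i := Finset.ne_of_mem_erase hj
        have hj2 : j ≠ fc L (i + 1) := Finset.ne_of_mem_erase (Finset.mem_of_mem_erase hj)
        rw [hv, Function.update_of_ne hj1, Function.update_of_ne hj2]
      rw [hv1, hv2, Finset.prod_congr rfl hprodc]
      ring
    rw [finsum_congr (fun z => by rw [step z])]
    rw [finsum_eq_single _ (μ (fc L i)) (fun z hz => by
      rw [if_neg (fun hh => hz hh.symm)]
      ring)]
    rw [if_pos rfl]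
    ring
  · have hz : B.N (μ' (fc L i)) l w = 0 ∨ B.N w l (μ' (fc L (i + 2))) = 0 := by
      by_contra hc
      push_neg at hc
      have := upd_path (i + 1) (by omega) (by omega) μ' hμ' w
        ((N01 B.toTensorSystem _ _ _).resolve_left (by
          rw [show i + 1 - 1 = i from by omega]; exact hc.1))
        ((N01 B.toTensorSystem _ _ _).resolve_left (by
          rw [show i + 1 + 1 = i + 2 from rfl]; exact hc.2))
      exact hp this
    rcases hz with h0 | h0
    · rw [AW_zero_col h0]; ring
    · rw [AW_zero_coly h0]; ring

end Part2

end YBAux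
namespace YBAux

open Function

variable {R : Type*} [CommRing R] {I : Type*}

section Part2b

variable {B : BraidedTensorSystem R I} {l : I} {L : ℕ} {I0 : Set I}

lemma part2_gen (i : ℕ) (hi : 1 ≤ i) (hiL : i + 2 ≤ L)
    (μ' μ : Fin (L + 1) → I) (hμ' : B.toTensorSystem.IsPath L I0 (fun _ => l) μ')
    (hμ : B.toTensorSystem.IsPath L I0 (fun _ => l) μ) :
    B.toTensorSystem.mulMat L I0 (fun _ => l) (B.Rmat L l i)
        (B.toTensorSystem.mulMat L I0 (fun _ => l) (B.Rmat L l (i + 1)) (B.Rmat L l i)) μ' μ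
      = B.toTensorSystem.mulMat L I0 (fun _ => l) (B.Rmat L l (i + 1))
          (B.toTensorSystem.mulMat L I0 (fun _ => l) (B.Rmat L l i) (B.Rmat L l (i + 1))) μ' μ := by
  rw [sideDKD i hi hiL μ' μ hμ', sideKDK i hi hiL μ' μ hμ']
  rw [show ((Finset.univ.erase (fc L (i + 1))).erase (fc L i))
      = ((Finset.univ.erase (fc L i)).erase (fc L (i + 1))) from Finset.erase_right_comm]
  by_cases hoff : ∀ j : Fin (L + 1), j ≠ fc L i → j ≠ fc L (i + 1) → μ j = μ' j
  · have hD : (∏ j ∈ (Finset.univ.erase (fc L i)).erase (fc L (i + 1)),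
        if μ j = μ' j then (1 : R) else 0) = 1 := by
      apply Finset.prod_eq_one
      intro j hj
      exact if_pos (hoff j (Finset.ne_of_mem_erase (Finset.mem_of_mem_erase hj))
        (Finset.ne_of_mem_erase hj))
    have e1 : μ (fc L (i - 1)) = μ' (fc L (i - 1)) :=
      hoff _ (fc_ne (by omega) (by omega) (by omega)) (fc_ne (by omega) (by omega) (by omega))
    have e2 : μ (fc L (i + 2)) = μ' (fc L (i + 2)) :=
      hoff _ (fc_ne (by omega) (by omega) (by omega)) (fc_ne (by omega) (by omega) (by omega))
    rw [hD, e1, e2]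
    have p1 : B.N (μ' (fc L (i - 1))) l (μ (fc L i)) = 1 := by
      rw [← e1]; exact hμ.2 i hi (by omega)
    have p2 : B.N (μ' (fc L (i - 1))) l (μ' (fc L i)) = 1 := hμ'.2 i hi (by omega)
    have p3 : B.N (μ (fc L i)) l (μ (fc L (i + 1))) = 1 := by
      have := hμ.2 (i + 1) (by omega) (by omega)
      rw [show i + 1 - 1 = i from by omega] at this
      exact this
    have p4 : B.N (μ' (fc L i)) l (μ' (fc L (i + 1))) = 1 := by
      have := hμ'.2 (i + 1) (by omega) (by omega)
      rw [show i + 1 - 1 = i from by omega] at this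
      exact this
    have p5 : B.N (μ (fc L (i + 1))) l (μ' (fc L (i + 2))) = 1 := by
      rw [← e2]
      have := hμ.2 (i + 2) (by omega) (by omega)
      rw [show i + 2 - 1 = i + 1 from by omega] at this
      exact this
    have p6 : B.N (μ' (fc L (i + 1))) l (μ' (fc L (i + 2))) = 1 := by
      have := hμ'.2 (i + 2) (by omega) (by omega)
      rw [show i + 2 - 1 = i + 1 from by omega] at this
      exact this
    have hybe := YBE_local (B := B) (l := l) (μ' (fc L (i - 1))) (μ' (fc L (i + 2)))
      (μ (fc L i)) (μ (fc L (i + 1))) (μ' (fc L i)) (μ' (fc L (i + 1)))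
      (by rw [p1]; exact Nat.one_ne_zero) (by rw [p2]; exact Nat.one_ne_zero)
      (by rw [p3]; exact Nat.one_ne_zero) (by rw [p4]; exact Nat.one_ne_zero)
      (by rw [p5]; exact Nat.one_ne_zero) (by rw [p6]; exact Nat.one_ne_zero)
    have lhs' : (∑ᶠ z, AW B l (B.Rm l l) (μ' (fc L (i - 1))) (μ' (fc L (i + 1)))
          (μ' (fc L i)) z *
        (AW B l (B.Rm l l) z (μ' (fc L (i + 2))) (μ' (fc L (i + 1))) (μ (fc L (i + 1))) *
          ((1 : R) * AW B l (B.Rm l l) (μ' (fc L (i - 1))) (μ (fc L (i + 1))) z (μ (fc L i)))))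
        = ∑ᶠ z, Aq B l (μ' (fc L (i - 1))) (μ' (fc L (i + 1))) (μ' (fc L i)) z *
            Aq B l z (μ' (fc L (i + 2))) (μ' (fc L (i + 1))) (μ (fc L (i + 1))) *
            Aq B l (μ' (fc L (i - 1))) (μ (fc L (i + 1))) z (μ (fc L i)) := by
      apply finsum_congr
      intro z
      unfold Aq
      ring
    have rhs' : (∑ᶠ w, AW B l (B.Rm l l) (μ' (fc L i)) (μ' (fc L (i + 2)))
          (μ' (fc L (i + 1))) w *
        (AW B l (B.Rm l l) (μ' (fc L (i - 1))) w (μ' (fc L i)) (μ (fc L i)) *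
          ((1 : R) * AW B l (B.Rm l l) (μ (fc L i)) (μ' (fc L (i + 2))) w (μ (fc L (i + 1))))))
        = ∑ᶠ w, Aq B l (μ' (fc L i)) (μ' (fc L (i + 2))) (μ' (fc L (i + 1))) w *
            Aq B l (μ' (fc L (i - 1))) w (μ' (fc L i)) (μ (fc L i)) *
            Aq B l (μ (fc L i)) (μ' (fc L (i + 2))) w (μ (fc L (i + 1))) := by
      apply finsum_congr
      intro w
      unfold Aq
      ring
    rw [lhs', rhs']
    exact hybe
  · push_neg at hoff
    obtain ⟨j₀, hj₁, hj₂, hne⟩ := hoff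
    have hD : (∏ j ∈ (Finset.univ.erase (fc L i)).erase (fc L (i + 1)),
        if μ j = μ' j then (1 : R) else 0) = 0 := by
      apply Finset.prod_eq_zero (Finset.mem_erase.mpr
        ⟨hj₂, Finset.mem_erase.mpr ⟨hj₁, Finset.mem_univ j₀⟩⟩)
      rw [if_neg hne]
    rw [hD]
    have z1 : ∀ z : I, AW B l (B.Rm l l) (μ' (fc L (i - 1))) (μ' (fc L (i + 1)))
        (μ' (fc L i)) z *
        (AW B l (B.Rm l l) z (μ' (fc L (i + 2))) (μ' (fc L (i + 1))) (μ (fc L (i + 1))) *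
          ((0 : R) * AW B l (B.Rm l l) (μ (fc L (i - 1))) (μ (fc L (i + 1))) z (μ (fc L i))))
        = 0 := fun z => by ring
    have z2 : ∀ w : I, AW B l (B.Rm l l) (μ' (fc L i)) (μ' (fc L (i + 2)))
        (μ' (fc L (i + 1))) w *
        (AW B l (B.Rm l l) (μ' (fc L (i - 1))) w (μ' (fc L i)) (μ (fc L i)) *
          ((0 : R) * AW B l (B.Rm l l) (μ (fc L i)) (μ (fc L (i + 2))) w (μ (fc L (i + 1)))))
        = 0 := fun w => by ring
    rw [finsum_congr z1, finsum_congr z2]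

end Part2b

end YBAux

/-- the braiding operators are invertible and satisfy the braid
relations on the homogeneous chain. -/
theorem braiding_operators_invertible_and_braid
    {R : Type*} [CommRing R] {I : Type*}
    (BTS : BraidedTensorSystem R I) (lam0 : I)
    (L : ℕ) (I0 : Set I) (hI0 : I0.Finite) :
    (∀ i : ℕ, 1 ≤ i → i + 1 ≤ L →
      BTS.toTensorSystem.MatEqOn L I0 (fun _ => lam0)
      (BTS.toTensorSystem.mulMat L I0 (fun _ => lam0)
      (BTS.Rmat L lam0 (i))
      (BTS.RbarMat L lam0 (i)))
      (deltaMat L)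
      ∧ BTS.toTensorSystem.MatEqOn L I0 (fun _ => lam0)
      (BTS.toTensorSystem.mulMat L I0 (fun _ => lam0)
      (BTS.RbarMat L lam0 (i))
      (BTS.Rmat L lam0 (i)))
      (deltaMat L))
    ∧ (∀ i : ℕ, 1 ≤ i → i + 2 ≤ L →
      BTS.toTensorSystem.MatEqOn L I0 (fun _ => lam0)
      (BTS.toTensorSystem.mulMat L I0 (fun _ => lam0)
      (BTS.Rmat L lam0 (i))
      (BTS.toTensorSystem.mulMat L I0 (fun _ => lam0)
      (BTS.Rmat L lam0 (i + 1))
      (BTS.Rmat L lam0 (i))))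
      (BTS.toTensorSystem.mulMat L I0 (fun _ => lam0)
      (BTS.Rmat L lam0 (i + 1))
      (BTS.toTensorSystem.mulMat L I0 (fun _ => lam0)
      (BTS.Rmat L lam0 (i))
      (BTS.Rmat L lam0 (i + 1)))))
    ∧ (∀ i i' : ℕ, 1 ≤ i → i + 2 ≤ i' → i' + 1 ≤ L →
      BTS.toTensorSystem.MatEqOn L I0 (fun _ => lam0)
      (BTS.toTensorSystem.mulMat L I0 (fun _ => lam0)
      (BTS.Rmat L lam0 (i))
      (BTS.Rmat L lam0 (i')))
      (BTS.toTensorSystem.mulMat L I0 (fun _ => lam0)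
      (BTS.Rmat L lam0 (i'))
      (BTS.Rmat L lam0 (i)))) := by
  refine ⟨fun i hi hiL => ⟨?_, ?_⟩, fun i hi hiL => ?_, fun i i' hi hii' hi'L => ?_⟩
  · intro μ' μ hμ' hμ
    exact YBAux.part1_gen i hi hiL (BTS.Rm lam0 lam0) (BTS.Rbarm lam0 lam0)
      (fun m h => BTS.Rm_vanish lam0 lam0 m h) (fun m h => BTS.Rbarm_vanish lam0 lam0 m h)
      (fun m => BTS.Rm_Rbarm lam0 lam0 m)
      (BTS.Rmat L lam0 i) (BTS.RbarMat L lam0 i)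
      (YBAux.R_entry i) (YBAux.Rbar_entry i) μ' μ hμ' hμ
  · intro μ' μ hμ' hμ
    exact YBAux.part1_gen i hi hiL (BTS.Rbarm lam0 lam0) (BTS.Rm lam0 lam0)
      (fun m h => BTS.Rbarm_vanish lam0 lam0 m h) (fun m h => BTS.Rm_vanish lam0 lam0 m h)
      (fun m => by rw [mul_comm]; exact BTS.Rm_Rbarm lam0 lam0 m)
      (BTS.RbarMat L lam0 i) (BTS.Rmat L lam0 i)
      (YBAux.Rbar_entry i) (YBAux.R_entry i) μ' μ hμ' hμ
  · intro μ' μ hμ' hμ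
    exact YBAux.part2_gen i hi hiL μ' μ hμ' hμ
  · intro μ' μ hμ' hμ
    exact YBAux.part3_gen i i' hi hii' hi'L μ' μ hμ' hμ
end
end
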